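/- arXiv:1903.00517 — 11 statements merged into one kernel-verified Lean document; each statement's English description precedes it below -/
import Mathlib

section
/- Let γ ∈ (1,2). Then for all x ∈ [0,1], (γ-1)·x ≤ (1+x)^γ - 1 - x^γ ≤ 2γ·x. -/
theorem stmt0 (γ : ℝ) (h1 : 1 < γ) (h2 : γ < 2) :
    ∀ x ∈ Set.Icc (0:ℝ) 1,
      (γ - 1) * x ≤ (1 + x) ^ γ - 1 - x ^ γ ∧ (1 + x) ^ γ - 1 - x ^ γ ≤ 2 * γ * x := by
  rintro x ⟨hx0, hx1⟩
  rcases eq_or_lt_of_le hx0 with rfl | hx0'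
  · simp [Real.zero_rpow (by linarith : γ ≠ 0)]
  constructor
  · -- Bernoulli: 1 + γ x ≤ (1+x)^γ
    have hb : 1 + γ * x ≤ (1 + x) ^ γ :=
      one_add_mul_self_le_rpow_one_add (by linarith) (le_of_lt h1)
    have hxg : x ^ γ ≤ x := by
      calc x ^ γ ≤ x ^ (1:ℝ) :=
            Real.rpow_le_rpow_of_exponent_ge hx0' hx1 (le_of_lt h1)
        _ = x := Real.rpow_one x
    nlinarith
  · have h1x : (1:ℝ) ≤ 1 + x := by linarith
    have hup : (1 + x) ^ γ ≤ (1 + x) ^ (2:ℝ) :=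
      Real.rpow_le_rpow_of_exponent_le h1x (le_of_lt h2)
    have hlo : x ^ (2:ℝ) ≤ x ^ γ :=
      Real.rpow_le_rpow_of_exponent_ge hx0' hx1 (le_of_lt h2)
    have e1 : (1 + x) ^ (2:ℝ) = (1 + x) ^ (2:ℕ) := by
      rw [← Real.rpow_natCast]; norm_num
    have e2 : x ^ (2:ℝ) = x ^ (2:ℕ) := by
      rw [← Real.rpow_natCast]; norm_num
    rw [e1] at hup; rw [e2] at hlo
    nlinarith
end

section
/- Let γ ∈ (1,2). Then for all x ∈ [0,1], x ≤ 1 + x^γ - (1-x)^γ ≤ (γ+1)·x. -/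
lemma rpow_le_self_aux {a γ : ℝ} (ha : 0 ≤ a) (ha1 : a ≤ 1) (hγ : 1 ≤ γ) :
    a ^ γ ≤ a := by
  rcases eq_or_lt_of_le ha with h | h
  · rw [← h, Real.zero_rpow (by linarith)]
  · calc a ^ γ ≤ a ^ (1:ℝ) := Real.rpow_le_rpow_of_exponent_ge h ha1 hγ
    _ = a := Real.rpow_one a

theorem stmt2 (γ : ℝ) (h1 : 1 < γ) (h2 : γ < 2) :
    ∀ x ∈ Set.Icc (0:ℝ) 1,
      x ≤ 1 + x ^ γ - (1 - x) ^ γ ∧ 1 + x ^ γ - (1 - x) ^ γ ≤ (γ + 1) * x := by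
  rintro x ⟨hx0, hx1⟩
  have hxg : x ^ γ ≤ x := rpow_le_self_aux hx0 hx1 h1.le
  have hxg0 : 0 ≤ x ^ γ := Real.rpow_nonneg hx0 γ
  have h1x : (1 - x) ^ γ ≤ 1 - x := rpow_le_self_aux (by linarith) (by linarith) h1.le
  have hber : 1 + γ * (-x) ≤ (1 + (-x)) ^ γ :=
    one_add_mul_self_le_rpow_one_add (by linarith) h1.le
  constructor
  · nlinarith
  · have : 1 - γ * x ≤ (1 - x) ^ γ := by
      rw [show (1:ℝ) + (-x) = 1 - x by ring] at hber
      linarith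
    nlinarith
end

section
/- Let k : ℤ → [0,∞) be symmetric (k(-j)=k(j)), summable, with k(0)=0, and with support of cardinality 2N for some N ∈ ℕ. Then for every function u : ℤ → ℝ, Γ₂(u)(0) ≥ (1/(2N))·(ℒu(0))², where ℒu(0) = ∑_{j∈ℤ} k(j)(u(j)-u(0)), Γ₂(u)(0) = (1/4)·∑_{j,l∈ℤ} k(j)k(l)·(u(j+l)-u(j)-u(l)+u(0))². -/
open scoped ENNReal

/-- Non-local operator at 0: `ℒu(0) = ∑_{j∈ℤ} k(j) (u(j)-u(0))`. -/
noncomputable def Lop (k u : ℤ → ℝ) : ℝ := ∑' j : ℤ, k j * (u j - u 0)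

/-- Carré du champ at 0. -/
noncomputable def Gamma (k u : ℤ → ℝ) : ℝ := (1/2) * ∑' j : ℤ, k j * (u j - u 0)^2

/-- Iterated carré du champ at 0 (real-valued). -/
noncomputable def Gamma2 (k u : ℤ → ℝ) : ℝ :=
  (1/4) * ∑' p : ℤ × ℤ, k p.1 * k p.2 * (u (p.1 + p.2) - u p.1 - u p.2 + u 0)^2

/-- Iterated carré du champ at 0, valued in `ℝ≥0∞`. -/
noncomputable def Gamma2e (k u : ℤ → ℝ) : ℝ≥0∞ :=
  (1/4) * ∑' p : ℤ × ℤ, ENNReal.ofReal (k p.1 * k p.2 * (u (p.1 + p.2) - u p.1 - u p.2 + u 0)^2)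

theorem stmt7 (k : ℤ → ℝ) (hpos : ∀ j, 0 ≤ k j) (hsym : ∀ j, k (-j) = k j)
    (h0 : k 0 = 0) (hsum : Summable k)
    (hfin : (Function.support k).Finite) (N : ℕ) (hN : 0 < N)
    (hcard : hfin.toFinset.card = 2 * N) (u : ℤ → ℝ) :
    (1 / (2 * (N : ℝ))) * (Lop k u) ^ 2 ≤ Gamma2 k u := by
  classical
  set F := hfin.toFinset with hF
  have hmemF : ∀ j, j ∈ F ↔ k j ≠ 0 := by
    intro j; simp [hF, Function.mem_support]
  have hnegF : ∀ j, j ∈ F → -j ∈ F := by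
    intro j hj
    rw [hmemF] at hj ⊢
    rwa [hsym]
  set B : ℤ → ℝ := fun j => u j + u (-j) - 2 * u 0 with hB
  -- Lop as a finite sum
  have hLop : Lop k u = ∑ j ∈ F, k j * (u j - u 0) := by
    apply tsum_eq_sum
    intro j hj
    have : k j = 0 := by
      by_contra h; exact hj ((hmemF j).2 h)
    simp [this]
  -- symmetrization
  have hre : ∑ j ∈ F, k j * (u j - u 0) = ∑ j ∈ F, k j * (u (-j) - u 0) := by
    refine Finset.sum_equiv (Equiv.neg ℤ) (fun i => ?_) (fun i hi => ?_)
    · constructor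
      · exact fun h => hnegF i h
      · intro h
        have := hnegF _ h
        simpa using this
    · simp [hsym]
  have h2L : 2 * Lop k u = ∑ j ∈ F, k j * B j := by
    rw [hLop, two_mul]
    nth_rewrite 2 [hre]
    rw [← Finset.sum_add_distrib]
    apply Finset.sum_congr rfl
    intro j hj
    simp only [hB]
    ring
  -- Gamma2 as a finite sum
  have hG2 : Gamma2 k u
      = (1/4) * ∑ p ∈ F ×ˢ F, k p.1 * k p.2 * (u (p.1 + p.2) - u p.1 - u p.2 + u 0)^2 := by
    unfold Gamma2
    congr 1
    apply tsum_eq_sum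
    intro p hp
    rw [Finset.mem_product] at hp
    push_neg at hp
    by_cases h1 : p.1 ∈ F
    · have : k p.2 = 0 := by
        have := hp h1
        by_contra h; exact this ((hmemF p.2).2 h)
      simp [this]
    · have : k p.1 = 0 := by
        by_contra h; exact h1 ((hmemF p.1).2 h)
      simp [this]
  -- diagonal lower bound
  set D : Finset (ℤ × ℤ) := F.image (fun j => (j, -j)) with hD
  have hDsub : D ⊆ F ×ˢ F := by
    intro p hp
    rw [hD, Finset.mem_image] at hp
    obtain ⟨j, hj, rfl⟩ := hp
    rw [Finset.mem_product]
    exact ⟨hj, hnegF j hj⟩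
  have hdiag : ∑ p ∈ D, k p.1 * k p.2 * (u (p.1 + p.2) - u p.1 - u p.2 + u 0)^2
      = ∑ j ∈ F, (k j)^2 * (B j)^2 := by
    rw [hD, Finset.sum_image (by intro a _ b _ h; exact (Prod.mk.injEq _ _ _ _).mp h |>.1)]
    apply Finset.sum_congr rfl
    intro j hj
    have : (j : ℤ) + -j = 0 := by ring
    rw [this, hsym]
    simp only [hB]
    ring
  have hmono : ∑ j ∈ F, (k j)^2 * (B j)^2
      ≤ ∑ p ∈ F ×ˢ F, k p.1 * k p.2 * (u (p.1 + p.2) - u p.1 - u p.2 + u 0)^2 := by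
    rw [← hdiag]
    apply Finset.sum_le_sum_of_subset_of_nonneg hDsub
    intro p _ _
    have := hpos p.1; have := hpos p.2
    positivity
  -- Cauchy-Schwarz
  have hCS : (∑ j ∈ F, k j * B j)^2 ≤ (2 * (N:ℝ)) * ∑ j ∈ F, (k j)^2 * (B j)^2 := by
    have h2 := Finset.sum_mul_sq_le_sq_mul_sq F (fun _ => (1:ℝ)) (fun j => k j * B j)
    simp only [one_pow, one_mul, Finset.sum_const, nsmul_eq_mul] at h2
    have hc : (F.card : ℝ) = 2 * (N : ℝ) := by
      rw [hcard]; push_cast; ring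
    calc (∑ j ∈ F, k j * B j)^2 ≤ (F.card : ℝ) * ∑ j ∈ F, (k j * B j)^2 := by linarith [h2]
      _ = (2 * (N:ℝ)) * ∑ j ∈ F, (k j)^2 * (B j)^2 := by
          rw [hc]; congr 1; apply Finset.sum_congr rfl; intro j _; ring
  -- combine
  have hNpos : (0:ℝ) < 2 * (N:ℝ) := by positivity
  have hLsq : (Lop k u)^2 = (1/4) * (∑ j ∈ F, k j * B j)^2 := by
    have : (∑ j ∈ F, k j * B j) = 2 * Lop k u := h2L.symm
    rw [this]; ring
  rw [hG2, hLsq]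
  have key : (1 / (2 * (N:ℝ))) * ((1/4) * (∑ j ∈ F, k j * B j)^2)
      ≤ (1/4) * ∑ j ∈ F, (k j)^2 * (B j)^2 := by
    rw [div_mul_eq_mul_div, one_mul, div_le_iff₀ hNpos]
    nlinarith [hCS]
  calc (1 / (2 * (N:ℝ))) * ((1/4) * (∑ j ∈ F, k j * B j)^2)
      ≤ (1/4) * ∑ j ∈ F, (k j)^2 * (B j)^2 := key
    _ ≤ (1/4) * ∑ p ∈ F ×ˢ F, k p.1 * k p.2 * (u (p.1 + p.2) - u p.1 - u p.2 + u 0)^2 := by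
        have := hmono; linarith
end

section
/- Let k : ℤ → [0,∞) be symmetric, summable, k(0)=0, |k|₁ > 0. Suppose that for some κ ≥ 0 and finite d > 0 the inequality Γ₂(u)(0) ≥ κ·Γ(u)(0) + (1/d)·(ℒu(0))² holds for some class of admissible functions u with u(0)=0. Then for all such u, Γ₂(u)(0) ≥ (1/d̃)·(ℒu(0))² with d̃ = 2d|k|₁/(dκ + 2|k|₁). -/
open scoped ENNReal

lemma summable_kv (k v : ℤ → ℝ) (hpos : ∀ j, 0 ≤ k j) (hk : Summable k)
    (hv2 : Summable (fun j => k j * v j ^ 2)) : Summable (fun j => k j * v j) := by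
  have habs : Summable (fun j => |k j * v j|) := by
    refine Summable.of_nonneg_of_le (fun j => abs_nonneg _) (fun j => ?_)
      (((hk.add hv2).div_const 2))
    rw [abs_mul, abs_of_nonneg (hpos j)]
    nlinarith [sq_nonneg (|v j| - 1), sq_abs (v j), abs_nonneg (v j), hpos j]
  exact habs.of_abs

lemma cs_tsum (k v : ℤ → ℝ) (hpos : ∀ j, 0 ≤ k j) (hk : Summable k)
    (hv2 : Summable (fun j => k j * v j ^ 2)) :
    (∑' j, k j * v j) ^ 2 ≤ (∑' j, k j) * ∑' j, k j * v j ^ 2 := by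
  have hkv := summable_kv k v hpos hk hv2
  have key : ∀ s : Finset ℤ, (∑ j ∈ s, k j * v j) ^ 2 ≤ (∑' j, k j) * ∑' j, k j * v j ^ 2 := by
    intro s
    have h1 : (∑ j ∈ s, k j * v j) ^ 2 ≤ (∑ j ∈ s, k j) * ∑ j ∈ s, k j * v j ^ 2 := by
      refine Finset.sum_sq_le_sum_mul_sum_of_sq_eq_mul s (fun j _ => hpos j)
        (fun j _ => mul_nonneg (hpos j) (sq_nonneg _)) (fun j _ => by ring)
    have h2 : (∑ j ∈ s, k j) ≤ ∑' j, k j := Summable.sum_le_tsum s (fun j _ => hpos j) hk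
    have h3 : (∑ j ∈ s, k j * v j ^ 2) ≤ ∑' j, k j * v j ^ 2 :=
      Summable.sum_le_tsum s (fun j _ => mul_nonneg (hpos j) (sq_nonneg _)) hv2
    have hs1 : 0 ≤ ∑ j ∈ s, k j := Finset.sum_nonneg fun j _ => hpos j
    have hs2 : 0 ≤ ∑ j ∈ s, k j * v j ^ 2 :=
      Finset.sum_nonneg fun j _ => mul_nonneg (hpos j) (sq_nonneg _)
    calc (∑ j ∈ s, k j * v j) ^ 2 ≤ (∑ j ∈ s, k j) * ∑ j ∈ s, k j * v j ^ 2 := h1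
      _ ≤ (∑' j, k j) * ∑' j, k j * v j ^ 2 := by
          apply mul_le_mul h2 h3 hs2 (le_trans hs1 h2)
  have htend : Filter.Tendsto (fun s : Finset ℤ => (∑ j ∈ s, k j * v j) ^ 2)
      Filter.atTop (nhds ((∑' j, k j * v j) ^ 2)) := hkv.hasSum.pow 2
  exact le_of_tendsto' htend key

theorem stmt9 (k : ℤ → ℝ) (hpos : ∀ j, 0 ≤ k j) (hsym : ∀ j, k (-j) = k j)
    (h0 : k 0 = 0) (hsum : Summable k) (hk1 : 0 < ∑' j : ℤ, k j)
    (κ d : ℝ) (hκ : 0 ≤ κ) (hd : 0 < d)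
    (A : (ℤ → ℝ) → Prop)
    (hCD : ∀ u : ℤ → ℝ, A u → u 0 = 0 → Summable (fun j : ℤ => k j * (u j) ^ 2) →
      κ * Gamma k u + (1 / d) * (Lop k u) ^ 2 ≤ Gamma2 k u) :
    ∀ u : ℤ → ℝ, A u → u 0 = 0 → Summable (fun j : ℤ => k j * (u j) ^ 2) →
      (1 / (2 * d * (∑' j : ℤ, k j) / (d * κ + 2 * (∑' j : ℤ, k j)))) * (Lop k u) ^ 2
        ≤ Gamma2 k u := by
  intro u hA hu0 hsu
  set K := ∑' j : ℤ, k j with hK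
  have hcd := hCD u hA hu0 hsu
  have hL : Lop k u = ∑' j, k j * u j := by simp [Lop, hu0]
  have hG : Gamma k u = (1/2) * ∑' j, k j * u j ^ 2 := by simp [Gamma, hu0]
  have hcs : (Lop k u) ^ 2 ≤ 2 * K * Gamma k u := by
    rw [hL, hG]
    have := cs_tsum k u hpos hsum hsu
    linarith
  have hΓnn : 0 ≤ Gamma k u := by
    rw [hG]
    have : 0 ≤ ∑' j, k j * u j ^ 2 :=
      tsum_nonneg fun j => mul_nonneg (hpos j) (sq_nonneg _)
    linarith
  have hdenom : 0 < d * κ + 2 * K := by positivity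
  have hco : 1 / (2 * d * K / (d * κ + 2 * K)) = κ / (2 * K) + 1 / d := by
    field_simp
  rw [hco]
  have h1 : κ / (2 * K) * (Lop k u) ^ 2 ≤ κ * Gamma k u := by
    rw [div_mul_eq_mul_div, div_le_iff₀ (by positivity)]
    calc κ * (Lop k u) ^ 2 ≤ κ * (2 * K * Gamma k u) := by
          exact mul_le_mul_of_nonneg_left hcs hκ
      _ = κ * Gamma k u * (2 * K) := by ring
  linarith
end

section
/- Let k : ℤ → [0,∞) be symmetric, summable, k(0)=0. For any u with the relevant sums finite, Γ₂(u)(0) = (1/4)·∑_{j,l∈ℤ} k(l)k(j)·(u(j+l)-2u(j)+u(0))² − |k|₁·Γ(u)(0) + (1/2)·(ℒu(0))². In particular, Γ₂(u)(0) ≥ −|k|₁·Γ(u)(0) + (1/2)·(ℒu(0))², i.e. CD(−|k|₁, 2) holds. -/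
open scoped ENNReal

set_option maxHeartbeats 1000000 in
theorem stmt11 (k : ℤ → ℝ) (hpos : ∀ j, 0 ≤ k j) (hsym : ∀ j, k (-j) = k j)
    (h0 : k 0 = 0) (hsum : Summable k) (u : ℤ → ℝ)
    (h1 : Summable (fun p : ℤ × ℤ =>
      k p.1 * k p.2 * (u (p.1 + p.2) - u p.1 - u p.2 + u 0) ^ 2))
    (h2 : Summable (fun p : ℤ × ℤ =>
      k p.1 * k p.2 * (u (p.1 + p.2) - 2 * u p.1 + u 0) ^ 2))
    (h3 : Summable (fun j : ℤ => k j * (u j - u 0) ^ 2))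
    (h4 : Summable (fun j : ℤ => k j * |u j - u 0|)) :
    Gamma2 k u =
      (1/4) * (∑' p : ℤ × ℤ, k p.1 * k p.2 * (u (p.1 + p.2) - 2 * u p.1 + u 0) ^ 2)
        - (∑' j : ℤ, k j) * Gamma k u + (1/2) * (Lop k u) ^ 2
    ∧ -(∑' j : ℤ, k j) * Gamma k u + (1/2) * (Lop k u) ^ 2 ≤ Gamma2 k u := by
  -- norm summability facts
  have hnk : Summable (fun j : ℤ => ‖k j‖) := by
    simpa only [Real.norm_eq_abs, fun j => abs_of_nonneg (hpos j)] using hsum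
  have hn3 : Summable (fun j : ℤ => ‖k j * (u j - u 0) ^ 2‖) := by
    have : (fun j : ℤ => ‖k j * (u j - u 0) ^ 2‖) = fun j => k j * (u j - u 0) ^ 2 :=
      funext fun j => Real.norm_of_nonneg (mul_nonneg (hpos j) (sq_nonneg _))
    rw [this]; exact h3
  have hn4 : Summable (fun j : ℤ => ‖k j * (u j - u 0)‖) := by
    have : (fun j : ℤ => ‖k j * (u j - u 0)‖) = fun j => k j * |u j - u 0| :=
      funext fun j => by
        rw [Real.norm_eq_abs, abs_mul, abs_of_nonneg (hpos j)]
    rw [this]; exact h4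
  -- the auxiliary double sums
  have hH1 : Summable (fun p : ℤ × ℤ => (k p.1 * (u p.1 - u 0) ^ 2) * k p.2) :=
    summable_mul_of_summable_norm hn3 hnk
  have hH2 : Summable (fun p : ℤ × ℤ => k p.1 * (k p.2 * (u p.2 - u 0) ^ 2)) :=
    summable_mul_of_summable_norm hnk hn3
  have hH3 : Summable (fun p : ℤ × ℤ => (k p.1 * (u p.1 - u 0)) * (k p.2 * (u p.2 - u 0))) :=
    summable_mul_of_summable_norm (R := ℝ) (f := fun j : ℤ => k j * (u j - u 0)) (g := fun j : ℤ => k j * (u j - u 0)) hn4 hn4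
  have tH1 : (∑' p : ℤ × ℤ, (k p.1 * (u p.1 - u 0) ^ 2) * k p.2)
      = (∑' j : ℤ, k j * (u j - u 0) ^ 2) * (∑' j : ℤ, k j) :=
    (tsum_mul_tsum_of_summable_norm hn3 hnk).symm
  have tH2 : (∑' p : ℤ × ℤ, k p.1 * (k p.2 * (u p.2 - u 0) ^ 2))
      = (∑' j : ℤ, k j) * (∑' j : ℤ, k j * (u j - u 0) ^ 2) :=
    (tsum_mul_tsum_of_summable_norm hnk hn3).symm
  have tH3 : (∑' p : ℤ × ℤ, (k p.1 * (u p.1 - u 0)) * (k p.2 * (u p.2 - u 0)))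
      = (Lop k u) * (Lop k u) := by
    rw [Lop]; exact (tsum_mul_tsum_of_summable_norm (R := ℝ) (f := fun j : ℤ => k j * (u j - u 0)) (g := fun j : ℤ => k j * (u j - u 0)) hn4 hn4).symm
  -- swapped version of h2
  have h2' : Summable (fun p : ℤ × ℤ =>
      k p.1 * k p.2 * (u (p.1 + p.2) - 2 * u p.2 + u 0) ^ 2) := by
    have := ((Equiv.prodComm ℤ ℤ).summable_iff
      (f := fun p : ℤ × ℤ => k p.1 * k p.2 * (u (p.1 + p.2) - 2 * u p.1 + u 0) ^ 2)).mpr h2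
    refine this.congr fun p => ?_
    simp only [Function.comp_apply, Equiv.prodComm_apply, Prod.fst_swap, Prod.snd_swap]
    rw [add_comm p.2 p.1, mul_comm (k p.2) (k p.1)]
  have tswap : (∑' p : ℤ × ℤ, k p.1 * k p.2 * (u (p.1 + p.2) - 2 * u p.2 + u 0) ^ 2)
      = ∑' p : ℤ × ℤ, k p.1 * k p.2 * (u (p.1 + p.2) - 2 * u p.1 + u 0) ^ 2 := by
    rw [← ((Equiv.prodComm ℤ ℤ).tsum_eq
      (f := fun p : ℤ × ℤ => k p.1 * k p.2 * (u (p.1 + p.2) - 2 * u p.1 + u 0) ^ 2))]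
    refine tsum_congr fun p => ?_
    simp only [Function.comp_apply, Equiv.prodComm_apply, Prod.fst_swap, Prod.snd_swap]
    rw [add_comm p.2 p.1, mul_comm (k p.2) (k p.1)]
  -- pointwise identity
  have hpt : ∀ p : ℤ × ℤ,
      k p.1 * k p.2 * (u (p.1 + p.2) - u p.1 - u p.2 + u 0) ^ 2
      = (1/2) * (k p.1 * k p.2 * (u (p.1 + p.2) - 2 * u p.1 + u 0) ^ 2)
        + (1/2) * (k p.1 * k p.2 * (u (p.1 + p.2) - 2 * u p.2 + u 0) ^ 2)
        - ((k p.1 * (u p.1 - u 0) ^ 2) * k p.2)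
        - (k p.1 * (k p.2 * (u p.2 - u 0) ^ 2))
        + 2 * ((k p.1 * (u p.1 - u 0)) * (k p.2 * (u p.2 - u 0))) := by
    intro p; ring
  -- sum the identity
  have key : (∑' p : ℤ × ℤ, k p.1 * k p.2 * (u (p.1 + p.2) - u p.1 - u p.2 + u 0) ^ 2)
      = (1/2) * (∑' p : ℤ × ℤ, k p.1 * k p.2 * (u (p.1 + p.2) - 2 * u p.1 + u 0) ^ 2)
        + (1/2) * (∑' p : ℤ × ℤ, k p.1 * k p.2 * (u (p.1 + p.2) - 2 * u p.2 + u 0) ^ 2)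
        - (∑' p : ℤ × ℤ, (k p.1 * (u p.1 - u 0) ^ 2) * k p.2)
        - (∑' p : ℤ × ℤ, k p.1 * (k p.2 * (u p.2 - u 0) ^ 2))
        + 2 * (∑' p : ℤ × ℤ, (k p.1 * (u p.1 - u 0)) * (k p.2 * (u p.2 - u 0))) := by
    rw [tsum_congr hpt]
    rw [Summable.tsum_add (Summable.sub (Summable.sub (Summable.add (h2.mul_left _) (h2'.mul_left _))
        hH1) hH2) (hH3.mul_left _)]
    rw [Summable.tsum_sub (Summable.sub (Summable.add (h2.mul_left _) (h2'.mul_left _)) hH1) hH2]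
    rw [Summable.tsum_sub (Summable.add (h2.mul_left _) (h2'.mul_left _)) hH1]
    rw [Summable.tsum_add (h2.mul_left _) (h2'.mul_left _)]
    rw [tsum_mul_left, tsum_mul_left, tsum_mul_left]
  -- nonnegativity of the B-sum
  have hBnn : 0 ≤ ∑' p : ℤ × ℤ, k p.1 * k p.2 * (u (p.1 + p.2) - 2 * u p.1 + u 0) ^ 2 :=
    tsum_nonneg fun p => mul_nonneg (mul_nonneg (hpos _) (hpos _)) (sq_nonneg _)
  have hmain : Gamma2 k u =
      (1/4) * (∑' p : ℤ × ℤ, k p.1 * k p.2 * (u (p.1 + p.2) - 2 * u p.1 + u 0) ^ 2)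
        - (∑' j : ℤ, k j) * Gamma k u + (1/2) * (Lop k u) ^ 2 := by
    rw [Gamma2, Gamma, key, tswap, tH1, tH2, tH3]
    ring
  refine ⟨hmain, ?_⟩
  rw [hmain]; linarith [hBnn]
end

section
/- Let k : ℤ → [0,∞) be symmetric, summable, k(0)=0, and suppose k(j) ≥ c for all j in the support of k, for some c > 0. Then for all admissible u, Γ₂(u)(0) ≥ (2c − |k|₁)·Γ(u)(0) + (1/2)·(ℒu(0))², i.e. CD(2c−|k|₁, 2) holds. -/
open scoped ENNReal

set_option maxHeartbeats 1600000

theorem stmt12 (k : ℤ → ℝ) (hpos : ∀ j, 0 ≤ k j) (hsym : ∀ j, k (-j) = k j)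
    (h0 : k 0 = 0) (hsum : Summable k) (c : ℝ) (hc : 0 < c)
    (hlow : ∀ j : ℤ, k j ≠ 0 → c ≤ k j) (u : ℤ → ℝ)
    (h1 : Summable (fun p : ℤ × ℤ =>
      k p.1 * k p.2 * (u (p.1 + p.2) - u p.1 - u p.2 + u 0) ^ 2))
    (h3 : Summable (fun j : ℤ => k j * (u j - u 0) ^ 2))
    (h4 : Summable (fun j : ℤ => k j * |u j - u 0|)) :
    (2 * c - (∑' j : ℤ, k j)) * Gamma k u + (1/2) * (Lop k u) ^ 2 ≤ Gamma2 k u := by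
  -- reindexed version of h3
  have hneg : Summable (fun j : ℤ => k j * (u (-j) - u 0) ^ 2) := by
    have h := (Equiv.neg ℤ).summable_iff.mpr h3
    refine h.congr fun j => ?_
    simp only [Function.comp_apply, Equiv.neg_apply, hsym]
  -- summable blocks on ℤ × ℤ
  have hs1 : Summable (fun p : ℤ × ℤ => k p.1 * k p.2 * (u p.1 - u 0) ^ 2) := by
    refine (h3.mul_of_nonneg hsum
      (fun j => mul_nonneg (hpos j) (sq_nonneg _)) hpos).congr fun p => ?_
    ring
  have hs2 : Summable (fun p : ℤ × ℤ => k p.1 * k p.2 * (u p.2 - u 0) ^ 2) := by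
    refine (hsum.mul_of_nonneg h3 hpos
      (fun j => mul_nonneg (hpos j) (sq_nonneg _))).congr fun p => ?_
    ring
  have hs3 : Summable (fun p : ℤ × ℤ => k p.1 * k p.2 * ((u p.1 - u 0) * (u p.2 - u 0))) := by
    have habs : Summable
        (fun p : ℤ × ℤ => (k p.1 * |u p.1 - u 0|) * (k p.2 * |u p.2 - u 0|)) :=
      h4.mul_of_nonneg h4 (fun j => mul_nonneg (hpos j) (abs_nonneg _))
        (fun j => mul_nonneg (hpos j) (abs_nonneg _))
    refine Summable.of_abs (habs.congr fun p => ?_)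
    rw [abs_mul, abs_mul, abs_mul, abs_of_nonneg (hpos p.1), abs_of_nonneg (hpos p.2)]
    ring
  have hB : Summable
      (fun p : ℤ × ℤ => k p.1 * k p.2 * ((u p.1 - u 0) - (u p.2 - u 0)) ^ 2) := by
    refine ((hs1.add hs2).sub (hs3.mul_left 2)).congr fun p => ?_
    ring
  -- tsum identities
  have tSB : (∑' p : ℤ × ℤ, k p.1 * k p.2 * ((u p.1 - u 0) - (u p.2 - u 0)) ^ 2)
      = (∑' p : ℤ × ℤ, k p.1 * k p.2 * (u p.1 - u 0) ^ 2)
        + (∑' p : ℤ × ℤ, k p.1 * k p.2 * (u p.2 - u 0) ^ 2)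
        - 2 * (∑' p : ℤ × ℤ, k p.1 * k p.2 * ((u p.1 - u 0) * (u p.2 - u 0))) := by
    rw [show (fun p : ℤ × ℤ => k p.1 * k p.2 * ((u p.1 - u 0) - (u p.2 - u 0)) ^ 2)
        = fun p : ℤ × ℤ => (k p.1 * k p.2 * (u p.1 - u 0) ^ 2
            + k p.1 * k p.2 * (u p.2 - u 0) ^ 2)
          - 2 * (k p.1 * k p.2 * ((u p.1 - u 0) * (u p.2 - u 0)))
        from funext fun p => by ring]
    rw [Summable.tsum_sub (hs1.add hs2) (hs3.mul_left 2), Summable.tsum_add hs1 hs2, tsum_mul_left]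
  have tswap : (∑' p : ℤ × ℤ, k p.1 * k p.2 * (u p.1 - u 0) ^ 2)
      = ∑' p : ℤ × ℤ, k p.1 * k p.2 * (u p.2 - u 0) ^ 2 := by
    rw [← (Equiv.prodComm ℤ ℤ).tsum_eq
      (fun p : ℤ × ℤ => k p.1 * k p.2 * (u p.1 - u 0) ^ 2)]
    refine tsum_congr fun p => ?_
    simp only [Equiv.prodComm_apply, Prod.fst_swap, Prod.snd_swap]
    ring
  have hknorm : Summable (fun j : ℤ => ‖k j‖) := by
    refine hsum.congr fun j => ?_
    rw [Real.norm_eq_abs, abs_of_nonneg (hpos j)]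
  have hkfnorm : Summable (fun j : ℤ => ‖k j * (u j - u 0)‖) := by
    refine h4.congr fun j => ?_
    rw [Real.norm_eq_abs, abs_mul, abs_of_nonneg (hpos j)]
  have hkf2norm : Summable (fun j : ℤ => ‖k j * (u j - u 0) ^ 2‖) := by
    refine h3.congr fun j => ?_
    rw [Real.norm_eq_abs, abs_of_nonneg (mul_nonneg (hpos j) (sq_nonneg _))]
  have tSC : (∑' p : ℤ × ℤ, k p.1 * k p.2 * ((u p.1 - u 0) * (u p.2 - u 0)))
      = (∑' j : ℤ, k j * (u j - u 0)) ^ 2 := by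
    rw [sq, tsum_mul_tsum_of_summable_norm hkfnorm hkfnorm]
    exact tsum_congr fun p => by ring
  have tSD : (∑' p : ℤ × ℤ, k p.1 * k p.2 * (u p.2 - u 0) ^ 2)
      = (∑' j : ℤ, k j) * ∑' j : ℤ, k j * (u j - u 0) ^ 2 := by
    rw [tsum_mul_tsum_of_summable_norm hknorm hkf2norm]
    exact tsum_congr fun p => by ring
  -- the combined function and its diagonal lower bound
  have hG : Summable (fun p : ℤ × ℤ =>
      k p.1 * k p.2 * (u (p.1 + p.2) - u p.1 - u p.2 + u 0) ^ 2
        + k p.1 * k p.2 * ((u p.1 - u 0) - (u p.2 - u 0)) ^ 2) := h1.add hB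
  have hGnn : ∀ p : ℤ × ℤ, 0 ≤
      k p.1 * k p.2 * (u (p.1 + p.2) - u p.1 - u p.2 + u 0) ^ 2
        + k p.1 * k p.2 * ((u p.1 - u 0) - (u p.2 - u 0)) ^ 2 := fun p =>
    add_nonneg (mul_nonneg (mul_nonneg (hpos p.1) (hpos p.2)) (sq_nonneg _))
      (mul_nonneg (mul_nonneg (hpos p.1) (hpos p.2)) (sq_nonneg _))
  have hsmall_eq : ∀ j : ℤ,
      2 * (k j ^ 2 * ((u j - u 0) ^ 2 + (u (-j) - u 0) ^ 2))
        = k j * k (-j) * (u (j + -j) - u j - u (-j) + u 0) ^ 2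
          + k j * k (-j) * ((u j - u 0) - (u (-j) - u 0)) ^ 2 := by
    intro j
    rw [hsym j, show j + -j = (0 : ℤ) by ring]
    ring
  have hkK : ∀ j, k j ≤ ∑' i : ℤ, k i := fun j => Summable.le_tsum hsum j (fun i _ => hpos i)
  have hsmall : Summable
      (fun j : ℤ => 2 * (k j ^ 2 * ((u j - u 0) ^ 2 + (u (-j) - u 0) ^ 2))) := by
    have hbound : Summable (fun j : ℤ =>
        2 * ((∑' i : ℤ, k i) * (k j * (u j - u 0) ^ 2)
          + (∑' i : ℤ, k i) * (k j * (u (-j) - u 0) ^ 2))) :=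
      ((h3.mul_left _).add (hneg.mul_left _)).mul_left 2
    refine Summable.of_nonneg_of_le (fun j => by positivity) (fun j => ?_) hbound
    have b1 := mul_le_mul_of_nonneg_right (hkK j) (mul_nonneg (hpos j) (sq_nonneg (u j - u 0)))
    have b2 := mul_le_mul_of_nonneg_right (hkK j) (mul_nonneg (hpos j) (sq_nonneg (u (-j) - u 0)))
    nlinarith [sq_nonneg (u j - u 0), sq_nonneg (u (-j) - u 0), hpos j]
  -- diagonal injection bound
  have hdiag : (∑' j : ℤ, 2 * (k j ^ 2 * ((u j - u 0) ^ 2 + (u (-j) - u 0) ^ 2)))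
      ≤ ∑' p : ℤ × ℤ,
        (k p.1 * k p.2 * (u (p.1 + p.2) - u p.1 - u p.2 + u 0) ^ 2
          + k p.1 * k p.2 * ((u p.1 - u 0) - (u p.2 - u 0)) ^ 2) := by
    have hinj : Function.Injective (fun j : ℤ => ((j, -j) : ℤ × ℤ)) :=
      fun a b h => congrArg Prod.fst h
    exact Summable.tsum_le_tsum_of_inj _ hinj (fun p _ => hGnn p)
      (fun j => le_of_eq (hsmall_eq j)) hsmall hG
  -- lower bound of the diagonal sum
  have hlow2 : ∀ j : ℤ, c * k j ≤ k j ^ 2 := by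
    intro j
    by_cases h : k j = 0
    · simp [h]
    · nlinarith [hlow j h, hpos j]
  have hdlow : 4 * c * (∑' j : ℤ, k j * (u j - u 0) ^ 2)
      ≤ ∑' j : ℤ, 2 * (k j ^ 2 * ((u j - u 0) ^ 2 + (u (-j) - u 0) ^ 2)) := by
    have step : (∑' j : ℤ, (2 * c * (k j * (u j - u 0) ^ 2)
          + 2 * c * (k j * (u (-j) - u 0) ^ 2)))
        ≤ ∑' j : ℤ, 2 * (k j ^ 2 * ((u j - u 0) ^ 2 + (u (-j) - u 0) ^ 2)) := by
      refine Summable.tsum_le_tsum (fun j => ?_)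
        ((h3.mul_left (2 * c)).add (hneg.mul_left (2 * c))) hsmall
      have a1 := mul_le_mul_of_nonneg_right (hlow2 j) (sq_nonneg (u j - u 0))
      have a2 := mul_le_mul_of_nonneg_right (hlow2 j) (sq_nonneg (u (-j) - u 0))
      nlinarith
    have teq : (∑' j : ℤ, (2 * c * (k j * (u j - u 0) ^ 2)
          + 2 * c * (k j * (u (-j) - u 0) ^ 2)))
        = 2 * c * (∑' j : ℤ, k j * (u j - u 0) ^ 2)
          + 2 * c * (∑' j : ℤ, k j * (u (-j) - u 0) ^ 2) := by
      rw [Summable.tsum_add (h3.mul_left (2 * c)) (hneg.mul_left (2 * c)), tsum_mul_left, tsum_mul_left]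
    have tneg : (∑' j : ℤ, k j * (u (-j) - u 0) ^ 2) = ∑' j : ℤ, k j * (u j - u 0) ^ 2 := by
      rw [← (Equiv.neg ℤ).tsum_eq (fun j : ℤ => k j * (u j - u 0) ^ 2)]
      exact tsum_congr fun j => by simp only [Equiv.neg_apply, hsym]
    calc 4 * c * (∑' j : ℤ, k j * (u j - u 0) ^ 2)
        = 2 * c * (∑' j : ℤ, k j * (u j - u 0) ^ 2)
          + 2 * c * (∑' j : ℤ, k j * (u (-j) - u 0) ^ 2) := by rw [tneg]; ring
      _ = _ := teq.symm
      _ ≤ _ := step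
  have tG : (∑' p : ℤ × ℤ,
        (k p.1 * k p.2 * (u (p.1 + p.2) - u p.1 - u p.2 + u 0) ^ 2
          + k p.1 * k p.2 * ((u p.1 - u 0) - (u p.2 - u 0)) ^ 2))
      = (∑' p : ℤ × ℤ, k p.1 * k p.2 * (u (p.1 + p.2) - u p.1 - u p.2 + u 0) ^ 2)
        + ∑' p : ℤ × ℤ, k p.1 * k p.2 * ((u p.1 - u 0) - (u p.2 - u 0)) ^ 2 :=
    Summable.tsum_add h1 hB
  -- assemble
  have key : 4 * c * (∑' j : ℤ, k j * (u j - u 0) ^ 2)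
      ≤ (∑' p : ℤ × ℤ, k p.1 * k p.2 * (u (p.1 + p.2) - u p.1 - u p.2 + u 0) ^ 2)
        + ((∑' j : ℤ, k j) * (∑' j : ℤ, k j * (u j - u 0) ^ 2)
          + (∑' j : ℤ, k j) * (∑' j : ℤ, k j * (u j - u 0) ^ 2)
          - 2 * (∑' j : ℤ, k j * (u j - u 0)) ^ 2) := by
    have := le_trans hdlow (le_of_le_of_eq hdiag tG)
    rw [tSB, tswap, tSD, tSC] at this
    linarith
  rw [Gamma, Gamma2, Lop]
  nlinarith [key]
end

section
/- Let k : ℤ → [0,∞) be symmetric, summable, k(0)=0 with finite second moment ∑_{j∈ℕ} j²·k(j) < ∞. For u(j) = j² one has Γ₂(u)(0) = (ℒu(0))². Consequently, if CD(0,d) holds for all admissible u at 0, then d ≥ 1. -/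
open scoped ENNReal

theorem stmt13 (k : ℤ → ℝ) (hpos : ∀ j, 0 ≤ k j) (hsym : ∀ j, k (-j) = k j)
    (h0 : k 0 = 0) (hsum : Summable k) (hk1 : 0 < ∑' j : ℤ, k j)
    (hM2 : Summable (fun j : ℕ => k (j : ℤ) * (j : ℝ) ^ 2)) :
    Gamma2 k (fun j : ℤ => (j : ℝ) ^ 2) = (Lop k (fun j : ℤ => (j : ℝ) ^ 2)) ^ 2
    ∧ ∀ d : ℝ, 0 < d →
        (∀ u : ℤ → ℝ, Summable (fun j : ℤ => k j * |u j - u 0|) →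
          (1 / d) * (Lop k u) ^ 2 ≤ Gamma2 k u) →
        1 ≤ d := by
  set f : ℤ → ℝ := fun j => k j * (j : ℝ) ^ 2 with hf
  have hfnn : ∀ j, 0 ≤ f j := fun j => mul_nonneg (hpos j) (sq_nonneg _)
  have hfS : Summable f := by
    apply Summable.of_nat_of_neg
    · exact hM2
    · simpa [f, hsym] using hM2
  set S : ℝ := ∑' j : ℤ, f j with hS
  have hLop : Lop k (fun j : ℤ => (j : ℝ) ^ 2) = S := by
    unfold Lop
    simp [f]
    rfl
  have hG2 : Gamma2 k (fun j : ℤ => (j : ℝ) ^ 2) = S ^ 2 := by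
    unfold Gamma2
    have he : ∀ p : ℤ × ℤ, k p.1 * k p.2 *
        (((p.1 + p.2 : ℤ) : ℝ) ^ 2 - (p.1 : ℝ) ^ 2 - (p.2 : ℝ) ^ 2 + ((0:ℤ):ℝ) ^ 2) ^ 2
        = 4 * (f p.1 * f p.2) := by
      intro p
      push_cast
      simp only [f]
      ring
    rw [tsum_congr he, tsum_mul_left, ← tsum_mul_tsum_of_summable_norm
      (by simpa [Real.norm_eq_abs, abs_of_nonneg (hfnn _)] using hfS)
      (by simpa [Real.norm_eq_abs, abs_of_nonneg (hfnn _)] using hfS)]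
    rw [← hS]; ring
  refine ⟨by rw [hG2, hLop], ?_⟩
  intro d hd hCD
  have hu : Summable (fun j : ℤ => k j * |(fun j : ℤ => (j:ℝ)^2) j - (fun j : ℤ => (j:ℝ)^2) 0|) := by
    refine hfS.congr fun j => ?_
    simp [f, abs_of_nonneg (sq_nonneg ((j:ℝ)))]
  have := hCD _ hu
  rw [hG2, hLop] at this
  have hSpos : 0 < S := by
    obtain ⟨j, hj⟩ : ∃ j, k j ≠ 0 := by
      by_contra h
      push_neg at h
      simp [h] at hk1
    have hj0 : j ≠ 0 := fun h => hj (h ▸ h0)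
    have h1 : (1:ℝ) ≤ (j:ℝ)^2 := by
      have : (1:ℤ) ≤ j^2 := by nlinarith [Int.one_le_abs hj0, sq_abs j]
      exact_mod_cast this
    have : 0 < f j := lt_of_lt_of_le (lt_of_le_of_ne (hpos j) (Ne.symm hj)) (le_mul_of_one_le_right (hpos j) h1)
    exact this.trans_le (Summable.le_tsum hfS j fun i _ => hfnn i)
  have hS2 : 0 < S ^ 2 := by positivity
  have h1d : 1 / d ≤ 1 := by
    by_contra h
    push_neg at h
    nlinarith
  rw [div_le_one hd] at h1d
  exact h1d
end

section
/- Let k : ℤ → [0,∞) be symmetric, summable, k(0)=0, with k non-increasing on ℕ, k(1) > 0, and finite second moment M₂ := ∑_{j∈ℕ} k(j)·j² < ∞. Then there exists a finite d > 0 of the form d = C₀·|k|₁·M₂/k(1)² (with C₀ an absolute constant) such that for all admissible u, Γ₂(u)(0) ≥ (1/d)·(ℒu(0))², i.e. ℒ satisfies CD(0,d) at 0. -/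
open scoped ENNReal

open Finset


lemma aux_sqrt1 (i : ℕ) (hi : 1 ≤ i) :
    (Real.sqrt i)⁻¹ ≤ 2 * (Real.sqrt i - Real.sqrt ((i : ℝ) - 1)) := by
  have hi' : (1:ℝ) ≤ (i:ℝ) := by exact_mod_cast hi
  set a := Real.sqrt i with ha'
  set b := Real.sqrt ((i:ℝ) - 1) with hb'
  have ha : a * a = (i : ℝ) := Real.mul_self_sqrt (by positivity)
  have hb : b * b = (i : ℝ) - 1 := Real.mul_self_sqrt (by linarith)
  have hba : b ≤ a := Real.sqrt_le_sqrt (by linarith)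
  have hb0 : 0 ≤ b := Real.sqrt_nonneg _
  have ha0 : 0 < a := Real.sqrt_pos.mpr (by linarith)
  rw [inv_eq_one_div, div_le_iff₀ ha0]
  nlinarith [sq_nonneg (a - b)]

lemma aux_sumA : ∀ j : ℕ, ∑ i ∈ Ico 1 j, (Real.sqrt i)⁻¹ ≤ 2 * Real.sqrt ((j : ℝ) - 1) := by
  intro j
  induction j with
  | zero =>
    rw [Finset.Ico_eq_empty (by omega), sum_empty]
    positivity
  | succ j ih =>
    rcases Nat.eq_zero_or_pos j with hj | hj
    · subst hj; simp
    · rw [Finset.sum_Ico_succ_top (by omega)]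
      have h1 := aux_sqrt1 j hj
      have h2 : ((j + 1 : ℕ) : ℝ) - 1 = (j : ℝ) := by push_cast; ring
      rw [h2]
      linarith

lemma aux_sqrt2 (j : ℕ) (hj : 2 ≤ j) :
    Real.sqrt j / (j : ℝ)^2 ≤ 2 * ((Real.sqrt ((j:ℝ) - 1))⁻¹ - (Real.sqrt j)⁻¹) := by
  have hj' : (2:ℝ) ≤ (j:ℝ) := by exact_mod_cast hj
  set a := Real.sqrt j with ha'
  set b := Real.sqrt ((j:ℝ) - 1) with hb'
  have ha : a * a = (j : ℝ) := Real.mul_self_sqrt (by positivity)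
  have hb : b * b = (j : ℝ) - 1 := Real.mul_self_sqrt (by linarith)
  have hba : b ≤ a := Real.sqrt_le_sqrt (by linarith)
  have ha0 : 0 < a := Real.sqrt_pos.mpr (by linarith)
  have hb0 : 0 < b := Real.sqrt_pos.mpr (by linarith)
  have h1 : (a - b) * (a + b) = 1 := by nlinarith
  have hj2 : (j:ℝ)^2 = (a*a)^2 := by rw [ha]
  rw [inv_sub_inv hb0.ne' ha0.ne']
  have h2 : 2*(a-b)*(a*a)^2*(a+b) = 2*(a*a)^2 := by
    have : 2*(a-b)*(a*a)^2*(a+b) = 2*((a-b)*(a+b))*(a*a)^2 := by ring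
    rw [this, h1]; ring
  have h3 : a*(b*a)*(a+b) ≤ 2*(a*a)^2 := by nlinarith [mul_pos ha0 hb0, mul_pos (mul_pos ha0 ha0) (mul_pos ha0 hb0)]
  have h4 : a*(b*a) ≤ 2*(a-b)*(a*a)^2 := by
    have h5 : a*(b*a)*(a+b) ≤ 2*(a-b)*(a*a)^2*(a+b) := by rw [h2]; exact h3
    exact le_of_mul_le_mul_right h5 (by positivity)
  have h6 : 2*((a-b)/(b*a))*(j:ℝ)^2 = (2*(a-b)*(a*a)^2)/(b*a) := by rw [hj2]; ring
  rw [div_le_iff₀ (by positivity : (0:ℝ) < (j:ℝ)^2), h6, le_div_iff₀ (by positivity)]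
  exact h4

lemma aux_sumB (i : ℕ) (hi : 1 ≤ i) (N : ℕ) :
    ∑ j ∈ Ico (i+1) N, Real.sqrt j / (j:ℝ)^2 ≤ 2 * (Real.sqrt i)⁻¹ := by
  rw [Finset.sum_Ico_eq_sum_range]
  have key : ∀ m ∈ Finset.range (N - (i+1)),
      Real.sqrt (i+1+m : ℕ) / ((i+1+m : ℕ):ℝ)^2
        ≤ 2 * (Real.sqrt (i+m : ℕ))⁻¹ - 2 * (Real.sqrt (i+m+1 : ℕ))⁻¹ := by
    intro m _
    have h := aux_sqrt2 (i+1+m) (by omega)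
    have hc : ((i+1+m : ℕ):ℝ) - 1 = ((i+m : ℕ):ℝ) := by push_cast; ring
    rw [hc] at h
    have hc2 : (i+1+m : ℕ) = (i+m+1 : ℕ) := by omega
    rw [hc2] at h ⊢
    linarith
  calc ∑ m ∈ Finset.range (N - (i+1)), Real.sqrt (i+1+m : ℕ) / ((i+1+m : ℕ):ℝ)^2
      ≤ ∑ m ∈ Finset.range (N - (i+1)),
          (2 * (Real.sqrt (i+m : ℕ))⁻¹ - 2 * (Real.sqrt (i+m+1 : ℕ))⁻¹) :=
        Finset.sum_le_sum key
    _ = 2 * (Real.sqrt (i+0 : ℕ))⁻¹ - 2 * (Real.sqrt (i + (N-(i+1)) : ℕ))⁻¹ := by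
        have := Finset.sum_range_sub' (fun m => 2 * (Real.sqrt (i+m : ℕ))⁻¹) (N - (i+1))
        simpa [add_assoc] using this
    _ ≤ 2 * (Real.sqrt i)⁻¹ := by
        simp only [Nat.add_zero]
        have : 0 ≤ 2 * (Real.sqrt (i + (N-(i+1)) : ℕ))⁻¹ := by positivity
        linarith

lemma tsum_cs (f g : ℕ → ℝ) (hf : ∀ n, 0 ≤ f n) (hg : ∀ n, 0 ≤ g n)
    (hf2 : Summable (fun n => f n ^ 2)) (hg2 : Summable (fun n => g n ^ 2)) :
    (∑' n, f n * g n) ^ 2 ≤ (∑' n, f n ^ 2) * (∑' n, g n ^ 2) := by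
  set A := ∑' n, f n ^ 2 with hA
  set B := ∑' n, g n ^ 2 with hB
  have hA0 : 0 ≤ A := tsum_nonneg (fun n => sq_nonneg _)
  have hB0 : 0 ≤ B := tsum_nonneg (fun n => sq_nonneg _)
  have hbound : ∀ s : Finset ℕ, ∑ n ∈ s, f n * g n ≤ Real.sqrt (A * B) := by
    intro s
    have h1 : (∑ n ∈ s, f n * g n) ^ 2 ≤ (∑ n ∈ s, f n ^ 2) * (∑ n ∈ s, g n ^ 2) :=
      Finset.sum_mul_sq_le_sq_mul_sq s f g
    have h2 : (∑ n ∈ s, f n ^ 2) ≤ A := Summable.sum_le_tsum s (fun n _ => sq_nonneg _) hf2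
    have h3 : (∑ n ∈ s, g n ^ 2) ≤ B := Summable.sum_le_tsum s (fun n _ => sq_nonneg _) hg2
    have h4 : (∑ n ∈ s, f n * g n) ^ 2 ≤ A * B := by
      calc (∑ n ∈ s, f n * g n) ^ 2 ≤ (∑ n ∈ s, f n ^ 2) * (∑ n ∈ s, g n ^ 2) := h1
        _ ≤ A * B := by
            apply mul_le_mul h2 h3 (Finset.sum_nonneg (fun n _ => sq_nonneg _)) hA0
    have h5 : 0 ≤ ∑ n ∈ s, f n * g n := Finset.sum_nonneg (fun n _ => mul_nonneg (hf n) (hg n))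
    nlinarith [Real.sq_sqrt (mul_nonneg hA0 hB0), Real.sqrt_nonneg (A*B)]
  have h6 : ∑' n, f n * g n ≤ Real.sqrt (A * B) :=
    tsum_le_of_sum_le' (Real.sqrt_nonneg _) hbound
  have h7 : 0 ≤ ∑' n, f n * g n := tsum_nonneg (fun n => mul_nonneg (hf n) (hg n))
  nlinarith [Real.sq_sqrt (mul_nonneg hA0 hB0), Real.sqrt_nonneg (A*B)]

set_option maxHeartbeats 2000000 in
lemma main_real (k : ℤ → ℝ) (hk0 : ∀ j, 0 ≤ k j) (hksym : ∀ j, k (-j) = k j) (hk00 : k 0 = 0)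
    (hksum : Summable k) (hmono : ∀ m n : ℤ, 1 ≤ m → m ≤ n → k n ≤ k m) (hk1 : 0 < k 1)
    (hM : Summable (fun j : ℕ => k (j:ℤ) * (j:ℝ)^2))
    (v : ℤ → ℝ) (hv0 : v 0 = 0) (hvsym : ∀ j, v (-j) = v j)
    (hvsum : Summable (fun j : ℤ => k j * |v j|))
    (hF : Summable (fun p : ℤ × ℤ => k p.1 * k p.2 * (v (p.1+p.2) - v p.1 - v p.2)^2)) :
    (k 1)^2 / (1000 * (∑' j : ℤ, k j) * (∑' j : ℕ, k (j:ℤ) * (j:ℝ)^2)) * (∑' j : ℤ, k j * v j)^2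
      ≤ (1/4) * ∑' p : ℤ × ℤ, k p.1 * k p.2 * (v (p.1+p.2) - v p.1 - v p.2)^2 := by
  set F : ℤ×ℤ → ℝ := fun p => k p.1 * k p.2 * (v (p.1+p.2) - v p.1 - v p.2)^2 with hFdef
  have hFnn : ∀ p, 0 ≤ F p := fun p => mul_nonneg (mul_nonneg (hk0 _) (hk0 _)) (sq_nonneg _)
  set G := ∑' p, F p with hGdef
  set K := ∑' j : ℤ, k j with hKdef
  set M := ∑' j : ℕ, k (j:ℤ) * (j:ℝ)^2 with hMdef
  set L := ∑' j : ℤ, k j * v j with hLdef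
  have hG0 : 0 ≤ G := tsum_nonneg hFnn
  have hKk1 : k 1 ≤ K := Summable.le_tsum hksum 1 (fun j _ => hk0 j)
  have hMk1 : k 1 ≤ M := by
    have h := Summable.le_tsum hM 1 (fun j _ => mul_nonneg (hk0 _) (sq_nonneg _))
    simpa using h
  have hK0 : 0 < K := lt_of_lt_of_le hk1 hKk1
  have hM0 : 0 < M := lt_of_lt_of_le hk1 hMk1
  have hv1sq : 4 * ((k 1)^2 * (v 1)^2) ≤ G := by
    have h := Summable.le_tsum hF ((1:ℤ), (-1:ℤ)) (fun p _ => hFnn p)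
    have he : F ((1:ℤ), (-1:ℤ)) = 4 * ((k 1)^2 * (v 1)^2) := by
      show k 1 * k (-1) * (v (1 + -1) - v 1 - v (-1))^2 = _
      rw [hksym 1, (by norm_num : (1:ℤ) + -1 = 0), hv0, hvsym 1]
      ring
    rw [he] at h; exact h
  -- injections
  have hinj1 : Function.Injective (fun n : ℕ => (((n:ℤ)+1, (1:ℤ)) : ℤ×ℤ)) := by
    intro a b h; simp [Prod.ext_iff] at h; omega
  have hinj2 : Function.Injective (fun n : ℕ => (n:ℤ)+1) := by
    intro a b h; simp at h; omega
  have hFline : Summable (fun n : ℕ => F ((n:ℤ)+1, 1)) := hF.comp_injective hinj1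
  have hlineG : ∑' n : ℕ, F ((n:ℤ)+1, 1) ≤ G :=
    Summable.tsum_le_tsum_of_inj _ hinj1 (fun c _ => hFnn c) (fun n => le_rfl) hFline hF
  have hkshift : Summable (fun n : ℕ => k ((n:ℤ)+1)) := hksum.comp_injective hinj2
  have hKp : ∑' n : ℕ, k ((n:ℤ)+1) ≤ K :=
    Summable.tsum_le_tsum_of_inj _ hinj2 (fun c _ => hk0 c) (fun n => le_rfl) hkshift hksum
  -- the sequence s
  set s : ℕ → ℝ := fun n => k ((n:ℤ)+1) * (v ((n:ℤ)+1+1) - v ((n:ℤ)+1))^2 with hsdef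
  have hsnn : ∀ n, 0 ≤ s n := fun n => mul_nonneg (hk0 _) (sq_nonneg _)
  have hsle : ∀ n, s n ≤ (2/(k 1)) * F ((n:ℤ)+1, 1) + (2*(v 1)^2) * k ((n:ℤ)+1) := by
    intro n
    have hFn : F ((n:ℤ)+1, 1) = k ((n:ℤ)+1) * k 1 * (v ((n:ℤ)+1+1) - v ((n:ℤ)+1) - v 1)^2 := rfl
    rw [hFn]
    have h1 : (2/(k 1))*(k ((n:ℤ)+1) * k 1 * (v ((n:ℤ)+1+1) - v ((n:ℤ)+1) - v 1)^2)
        = 2*(k ((n:ℤ)+1))*(v ((n:ℤ)+1+1) - v ((n:ℤ)+1) - v 1)^2 := by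
      field_simp
    rw [h1]
    have h2 : (v ((n:ℤ)+1+1) - v ((n:ℤ)+1))^2
        ≤ 2*(v ((n:ℤ)+1+1) - v ((n:ℤ)+1) - v 1)^2 + 2*(v 1)^2 := by
      nlinarith [sq_nonneg (v ((n:ℤ)+1+1) - v ((n:ℤ)+1) - 2*v 1)]
    have h3 := mul_le_mul_of_nonneg_left h2 (hk0 ((n:ℤ)+1))
    simp only [hsdef]
    nlinarith [h3]
  have hssum : Summable s :=
    Summable.of_nonneg_of_le hsnn hsle ((hFline.mul_left _).add (hkshift.mul_left _))
  set S := ∑' n, s n with hSdef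
  have hS0 : 0 ≤ S := tsum_nonneg hsnn
  have hS1 : S ≤ (2/(k 1)) * G + (2*(v 1)^2) * K := by
    have h1 : S ≤ ∑' n : ℕ, ((2/(k 1)) * F ((n:ℤ)+1, 1) + (2*(v 1)^2) * k ((n:ℤ)+1)) :=
      Summable.tsum_le_tsum hsle hssum ((hFline.mul_left _).add (hkshift.mul_left _))
    have h2 : ∑' n : ℕ, ((2/(k 1)) * F ((n:ℤ)+1, 1) + (2*(v 1)^2) * k ((n:ℤ)+1))
        = (2/(k 1)) * (∑' n : ℕ, F ((n:ℤ)+1, 1)) + (2*(v 1)^2) * ∑' n : ℕ, k ((n:ℤ)+1) := by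
      rw [Summable.tsum_add (hFline.mul_left _) (hkshift.mul_left _), tsum_mul_left, tsum_mul_left]
    rw [h2] at h1
    have h3 : (2/(k 1)) * (∑' n : ℕ, F ((n:ℤ)+1, 1)) ≤ (2/(k 1)) * G :=
      mul_le_mul_of_nonneg_left hlineG (by positivity)
    have h4 : (2*(v 1)^2) * (∑' n : ℕ, k ((n:ℤ)+1)) ≤ (2*(v 1)^2) * K :=
      mul_le_mul_of_nonneg_left hKp (by positivity)
    linarith
  have hSm : S * k 1 ≤ 2*G + 2*(v 1)^2*K*(k 1) := by
    have h := mul_le_mul_of_nonneg_right hS1 hk1.le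
    have h2 : ((2/(k 1)) * G + (2*(v 1)^2) * K) * k 1 = 2*G + 2*(v 1)^2*K*(k 1) := by
      field_simp
    rw [h2] at h; exact h
  -- Hardy-type estimate
  have hHardy : ∀ N : ℕ, ∑ j ∈ Finset.Ico 2 N, k (j:ℤ) * (v (j:ℤ) - v 1)^2 / (j:ℝ)^2 ≤ 4 * S := by
    intro N
    have hWnn : ∀ j : ℕ, 0 ≤ ∑ i ∈ Finset.Ico 1 j, Real.sqrt i * (v ((i:ℤ)+1) - v (i:ℤ))^2 :=
      fun j => Finset.sum_nonneg fun i _ => mul_nonneg (Real.sqrt_nonneg _) (sq_nonneg _)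
    have step1 : ∀ j ∈ Finset.Ico 2 N, k (j:ℤ) * (v (j:ℤ) - v 1)^2 / (j:ℝ)^2
        ≤ 2 * (k (j:ℤ) * (Real.sqrt j / (j:ℝ)^2))
          * ∑ i ∈ Finset.Ico 1 j, Real.sqrt i * (v ((i:ℤ)+1) - v (i:ℤ))^2 := by
      intro j hj
      obtain ⟨hj2, hjN⟩ := Finset.mem_Ico.mp hj
      -- telescoping
      have htel : v (j:ℤ) - v 1 = ∑ i ∈ Finset.Ico 1 j, (v ((i:ℤ)+1) - v (i:ℤ)) := by
        rw [Finset.sum_Ico_eq_sum_range]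
        have hc : ∀ m, v (((1+m:ℕ):ℤ)+1) - v ((1+m:ℕ):ℤ)
            = (fun m : ℕ => v ((m:ℤ)+1)) (m+1) - (fun m : ℕ => v ((m:ℤ)+1)) m := by
          intro m; push_cast; ring_nf
        rw [Finset.sum_congr rfl (fun m _ => hc m), Finset.sum_range_sub (fun m : ℕ => v ((m:ℤ)+1))]
        have h1 : (((j-1:ℕ):ℤ)+1) = (j:ℤ) := by omega
        have h2 : (((0:ℕ):ℤ)+1) = (1:ℤ) := by norm_num
        rw [h1, h2]
      -- Cauchy-Schwarz with weights
      have hCS : (v (j:ℤ) - v 1)^2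
          ≤ (∑ i ∈ Finset.Ico 1 j, (Real.sqrt i)⁻¹)
            * ∑ i ∈ Finset.Ico 1 j, Real.sqrt i * (v ((i:ℤ)+1) - v (i:ℤ))^2 := by
        have h := Finset.sum_mul_sq_le_sq_mul_sq (Finset.Ico 1 j)
          (fun i => (Real.sqrt (Real.sqrt i))⁻¹)
          (fun i => Real.sqrt (Real.sqrt i) * (v ((i:ℤ)+1) - v (i:ℤ)))
        have e1 : ∑ i ∈ Finset.Ico 1 j,
            (Real.sqrt (Real.sqrt i))⁻¹ * (Real.sqrt (Real.sqrt i) * (v ((i:ℤ)+1) - v (i:ℤ)))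
            = ∑ i ∈ Finset.Ico 1 j, (v ((i:ℤ)+1) - v (i:ℤ)) := by
          apply Finset.sum_congr rfl
          intro i hi
          obtain ⟨hi1, _⟩ := Finset.mem_Ico.mp hi
          have : Real.sqrt (Real.sqrt i) ≠ 0 := by
            apply ne_of_gt; apply Real.sqrt_pos.mpr; apply Real.sqrt_pos.mpr
            exact_mod_cast hi1
          field_simp
        have e2 : ∑ i ∈ Finset.Ico 1 j, ((Real.sqrt (Real.sqrt i))⁻¹)^2
            = ∑ i ∈ Finset.Ico 1 j, (Real.sqrt i)⁻¹ := by
          apply Finset.sum_congr rfl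
          intro i _
          rw [inv_pow, Real.sq_sqrt (Real.sqrt_nonneg _)]
        have e3 : ∑ i ∈ Finset.Ico 1 j, (Real.sqrt (Real.sqrt i) * (v ((i:ℤ)+1) - v (i:ℤ)))^2
            = ∑ i ∈ Finset.Ico 1 j, Real.sqrt i * (v ((i:ℤ)+1) - v (i:ℤ))^2 := by
          apply Finset.sum_congr rfl
          intro i _
          rw [mul_pow, Real.sq_sqrt (Real.sqrt_nonneg _)]
        rw [e1, e2, e3] at h
        rw [htel]
        exact h
      have hA' : (∑ i ∈ Finset.Ico 1 j, (Real.sqrt i)⁻¹) ≤ 2 * Real.sqrt j := by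
        refine (aux_sumA j).trans ?_
        have : Real.sqrt ((j:ℝ)-1) ≤ Real.sqrt j := Real.sqrt_le_sqrt (by linarith)
        linarith
      have hCS2 : (v (j:ℤ) - v 1)^2 ≤ (2 * Real.sqrt j)
          * ∑ i ∈ Finset.Ico 1 j, Real.sqrt i * (v ((i:ℤ)+1) - v (i:ℤ))^2 := by
        refine hCS.trans ?_
        exact mul_le_mul_of_nonneg_right hA' (hWnn j)
      have hrhs : 2 * (k (j:ℤ) * (Real.sqrt j / (j:ℝ)^2))
            * ∑ i ∈ Finset.Ico 1 j, Real.sqrt i * (v ((i:ℤ)+1) - v (i:ℤ))^2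
          = k (j:ℤ) * ((2 * Real.sqrt j)
            * ∑ i ∈ Finset.Ico 1 j, Real.sqrt i * (v ((i:ℤ)+1) - v (i:ℤ))^2) / (j:ℝ)^2 := by
        ring
      rw [hrhs]
      have hj0 : (0:ℝ) < (j:ℝ)^2 := by
        have : (0:ℝ) < (j:ℝ) := by exact_mod_cast (by omega : 0 < j)
        positivity
      gcongr
      exact hk0 _
    have hstep2 : ∑ j ∈ Finset.Ico 2 N, 2 * (k (j:ℤ) * (Real.sqrt j / (j:ℝ)^2))
        * (∑ i ∈ Finset.Ico 1 j, Real.sqrt i * (v ((i:ℤ)+1) - v (i:ℤ))^2)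
        ≤ 4 * ∑ i ∈ Finset.Ico 1 N, k (i:ℤ) * (v ((i:ℤ)+1) - v (i:ℤ))^2 := by
      have h1 : ∀ j ∈ Finset.Ico 2 N, 2 * (k (j:ℤ) * (Real.sqrt j / (j:ℝ)^2))
          * (∑ i ∈ Finset.Ico 1 j, Real.sqrt i * (v ((i:ℤ)+1) - v (i:ℤ))^2)
          = ∑ i ∈ Finset.Ico 1 N, (if i < j then
              2 * (k (j:ℤ) * (Real.sqrt j / (j:ℝ)^2)) * (Real.sqrt i * (v ((i:ℤ)+1) - v (i:ℤ))^2)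
            else 0) := by
        intro j hj
        obtain ⟨hj2, hjN⟩ := Finset.mem_Ico.mp hj
        rw [Finset.mul_sum, ← Finset.sum_filter]
        apply Finset.sum_congr
        · ext i; simp only [Finset.mem_Ico, Finset.mem_filter]; omega
        · intro i _; rfl
      rw [Finset.sum_congr rfl h1, Finset.sum_comm]
      have h2 : ∀ i ∈ Finset.Ico 1 N, (∑ j ∈ Finset.Ico 2 N, (if i < j then
            2 * (k (j:ℤ) * (Real.sqrt j / (j:ℝ)^2)) * (Real.sqrt i * (v ((i:ℤ)+1) - v (i:ℤ))^2)
          else 0))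
          ≤ 4 * (k (i:ℤ) * (v ((i:ℤ)+1) - v (i:ℤ))^2) := by
        intro i hi
        obtain ⟨hi1, hiN⟩ := Finset.mem_Ico.mp hi
        have hqi : (0:ℝ) < Real.sqrt i := Real.sqrt_pos.mpr (by exact_mod_cast hi1)
        rw [← Finset.sum_filter]
        have hfil : Finset.filter (fun j => i < j) (Finset.Ico 2 N) = Finset.Ico (i+1) N := by
          ext j; simp only [Finset.mem_Ico, Finset.mem_filter]; omega
        rw [hfil]
        have h3 : ∀ j ∈ Finset.Ico (i+1) N,
            2 * (k (j:ℤ) * (Real.sqrt j / (j:ℝ)^2)) * (Real.sqrt i * (v ((i:ℤ)+1) - v (i:ℤ))^2)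
            ≤ (2 * (Real.sqrt i * (v ((i:ℤ)+1) - v (i:ℤ))^2) * k (i:ℤ)) * (Real.sqrt j / (j:ℝ)^2) := by
          intro j hjm
          obtain ⟨hji, hjN2⟩ := Finset.mem_Ico.mp hjm
          have hkj : k (j:ℤ) ≤ k (i:ℤ) := hmono (i:ℤ) (j:ℤ) (by exact_mod_cast hi1) (by exact_mod_cast (by omega : i ≤ j))
          have hpsi : (0:ℝ) ≤ Real.sqrt j / (j:ℝ)^2 := by positivity
          have hw : (0:ℝ) ≤ 2 * (Real.sqrt i * (v ((i:ℤ)+1) - v (i:ℤ))^2) :=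
            by positivity
          calc 2 * (k (j:ℤ) * (Real.sqrt j / (j:ℝ)^2)) * (Real.sqrt i * (v ((i:ℤ)+1) - v (i:ℤ))^2)
              = (2 * (Real.sqrt i * (v ((i:ℤ)+1) - v (i:ℤ))^2)) * (k (j:ℤ) * (Real.sqrt j / (j:ℝ)^2)) := by
                ring
            _ ≤ (2 * (Real.sqrt i * (v ((i:ℤ)+1) - v (i:ℤ))^2)) * (k (i:ℤ) * (Real.sqrt j / (j:ℝ)^2)) :=
                mul_le_mul_of_nonneg_left (mul_le_mul_of_nonneg_right hkj hpsi) hw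
            _ = (2 * (Real.sqrt i * (v ((i:ℤ)+1) - v (i:ℤ))^2) * k (i:ℤ)) * (Real.sqrt j / (j:ℝ)^2) := by
                ring
        have h4 : ∑ j ∈ Finset.Ico (i+1) N,
            2 * (k (j:ℤ) * (Real.sqrt j / (j:ℝ)^2)) * (Real.sqrt i * (v ((i:ℤ)+1) - v (i:ℤ))^2)
            ≤ (2 * (Real.sqrt i * (v ((i:ℤ)+1) - v (i:ℤ))^2) * k (i:ℤ))
              * ∑ j ∈ Finset.Ico (i+1) N, Real.sqrt j / (j:ℝ)^2 := by
          rw [Finset.mul_sum]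
          exact Finset.sum_le_sum h3
        have h5 : (2 * (Real.sqrt i * (v ((i:ℤ)+1) - v (i:ℤ))^2) * k (i:ℤ))
              * ∑ j ∈ Finset.Ico (i+1) N, Real.sqrt j / (j:ℝ)^2
            ≤ (2 * (Real.sqrt i * (v ((i:ℤ)+1) - v (i:ℤ))^2) * k (i:ℤ)) * (2 * (Real.sqrt i)⁻¹) := by
          apply mul_le_mul_of_nonneg_left (aux_sumB i hi1 N)
          have := hk0 (i:ℤ)
          positivity
        have h6 : (2 * (Real.sqrt i * (v ((i:ℤ)+1) - v (i:ℤ))^2) * k (i:ℤ)) * (2 * (Real.sqrt i)⁻¹)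
            = 4 * (k (i:ℤ) * (v ((i:ℤ)+1) - v (i:ℤ))^2) * (Real.sqrt i * (Real.sqrt i)⁻¹) := by
          ring
        have h7 : Real.sqrt i * (Real.sqrt i)⁻¹ = 1 := mul_inv_cancel₀ hqi.ne'
        calc ∑ j ∈ Finset.Ico (i+1) N,
            2 * (k (j:ℤ) * (Real.sqrt j / (j:ℝ)^2)) * (Real.sqrt i * (v ((i:ℤ)+1) - v (i:ℤ))^2)
            ≤ _ := h4
          _ ≤ _ := h5
          _ = 4 * (k (i:ℤ) * (v ((i:ℤ)+1) - v (i:ℤ))^2) := by rw [h6, h7, mul_one]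
      calc ∑ i ∈ Finset.Ico 1 N, (∑ j ∈ Finset.Ico 2 N, (if i < j then
            2 * (k (j:ℤ) * (Real.sqrt j / (j:ℝ)^2)) * (Real.sqrt i * (v ((i:ℤ)+1) - v (i:ℤ))^2)
          else 0))
          ≤ ∑ i ∈ Finset.Ico 1 N, 4 * (k (i:ℤ) * (v ((i:ℤ)+1) - v (i:ℤ))^2) :=
            Finset.sum_le_sum h2
        _ = 4 * ∑ i ∈ Finset.Ico 1 N, k (i:ℤ) * (v ((i:ℤ)+1) - v (i:ℤ))^2 := by
            rw [Finset.mul_sum]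
    have hstep3 : ∑ i ∈ Finset.Ico 1 N, k (i:ℤ) * (v ((i:ℤ)+1) - v (i:ℤ))^2 ≤ S := by
      have h1 : ∑ i ∈ Finset.Ico 1 N, k (i:ℤ) * (v ((i:ℤ)+1) - v (i:ℤ))^2
          = ∑ m ∈ Finset.range (N-1), s m := by
        rw [Finset.sum_Ico_eq_sum_range]
        apply Finset.sum_congr rfl
        intro m _
        simp only [hsdef]
        have hc1 : ((1+m:ℕ):ℤ) = (m:ℤ)+1 := by push_cast; ring
        rw [hc1]
      rw [h1]
      exact Summable.sum_le_tsum _ (fun n _ => hsnn n) hssum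
    calc ∑ j ∈ Finset.Ico 2 N, k (j:ℤ) * (v (j:ℤ) - v 1)^2 / (j:ℝ)^2
        ≤ ∑ j ∈ Finset.Ico 2 N, 2 * (k (j:ℤ) * (Real.sqrt j / (j:ℝ)^2))
          * (∑ i ∈ Finset.Ico 1 j, Real.sqrt i * (v ((i:ℤ)+1) - v (i:ℤ))^2) :=
          Finset.sum_le_sum step1
      _ ≤ 4 * ∑ i ∈ Finset.Ico 1 N, k (i:ℤ) * (v ((i:ℤ)+1) - v (i:ℤ))^2 := hstep2
      _ ≤ 4 * S := by linarith [hstep3]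
  -- the weighted sum T
  set t' : ℕ → ℝ := fun n => k ((n:ℤ)+1) * (v ((n:ℤ)+1))^2 / ((n:ℝ)+1)^2 with htdef
  have ht'nn : ∀ n, 0 ≤ t' n := fun n => by
    have := hk0 ((n:ℤ)+1)
    simp only [htdef]
    positivity
  set Cb := G/(4*(k 1)) + 8*S + 2*(v 1)^2*K with hCbdef
  have hCb0 : 0 ≤ Cb := by
    have h1 : 0 ≤ G/(4*(k 1)) := by positivity
    have h2 : 0 ≤ 2*(v 1)^2*K := by positivity
    simp only [hCbdef]; linarith
  have hkNat : Summable (fun n : ℕ => k (n:ℤ)) := hksum.comp_injective Nat.cast_injective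
  have hkNatK : ∑' n : ℕ, k (n:ℤ) ≤ K :=
    Summable.tsum_le_tsum_of_inj _ Nat.cast_injective (fun c _ => hk0 c) (fun n => le_rfl) hkNat hksum
  have hpartial : ∀ N : ℕ, ∑ n ∈ Finset.range N, t' n ≤ Cb := by
    intro N
    have hre : ∑ n ∈ Finset.range N, t' n
        = ∑ j ∈ Finset.Ico 1 (N+1), k (j:ℤ) * (v (j:ℤ))^2 / (j:ℝ)^2 := by
      rw [Finset.sum_Ico_eq_sum_range]
      simp only [Nat.add_sub_cancel]
      apply Finset.sum_congr rfl
      intro m _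
      simp only [htdef]
      have hc1 : ((1+m:ℕ):ℤ) = (m:ℤ)+1 := by push_cast; ring
      have hc2 : ((1+m:ℕ):ℝ) = (m:ℝ)+1 := by push_cast; ring
      rw [hc1, hc2]
    rw [hre]
    rcases Nat.eq_zero_or_pos N with h | h
    · subst h; rw [Finset.Ico_eq_empty (by omega), Finset.sum_empty]; exact hCb0
    · have hsplit : Finset.Ico 1 (N+1) = insert 1 (Finset.Ico 2 (N+1)) := by
        ext x; simp only [Finset.mem_Ico, Finset.mem_insert]; omega
      rw [hsplit, Finset.sum_insert (by simp)]
      have hterm1 : k ((1:ℕ):ℤ) * (v ((1:ℕ):ℤ))^2 / ((1:ℕ):ℝ)^2 ≤ G/(4*(k 1)) := by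
        have he : k ((1:ℕ):ℤ) * (v ((1:ℕ):ℤ))^2 / ((1:ℕ):ℝ)^2 = k 1 * (v 1)^2 := by norm_num
        rw [he, le_div_iff₀ (by positivity)]
        nlinarith [hv1sq]
      have hterm2 : ∀ j ∈ Finset.Ico 2 (N+1), k (j:ℤ) * (v (j:ℤ))^2/(j:ℝ)^2
          ≤ 2 * (k (j:ℤ) * (v (j:ℤ) - v 1)^2/(j:ℝ)^2) + 2*(v 1)^2 * k (j:ℤ) := by
        intro j hj
        obtain ⟨hj2, _⟩ := Finset.mem_Ico.mp hj
        have hj1R : (1:ℝ) ≤ (j:ℝ)^2 := by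
          have : (1:ℝ) ≤ (j:ℝ) := by exact_mod_cast (by omega : 1 ≤ j)
          nlinarith
        have hjpos : (0:ℝ) < (j:ℝ)^2 := by linarith
        have h1 : (v (j:ℤ))^2 ≤ 2*(v (j:ℤ) - v 1)^2 + 2*(v 1)^2 := by
          nlinarith [sq_nonneg (v (j:ℤ) - 2*v 1)]
        have h2 : k (j:ℤ) * (v (j:ℤ))^2/(j:ℝ)^2
            ≤ (k (j:ℤ) * (2*(v (j:ℤ) - v 1)^2 + 2*(v 1)^2))/(j:ℝ)^2 := by
          gcongr
          exact hk0 _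
        have h3 : (k (j:ℤ) * (2*(v (j:ℤ) - v 1)^2 + 2*(v 1)^2))/(j:ℝ)^2
            = 2 * (k (j:ℤ) * (v (j:ℤ) - v 1)^2/(j:ℝ)^2) + 2*(v 1)^2 * (k (j:ℤ)/(j:ℝ)^2) := by
          ring
        have h4 : 2*(v 1)^2 * (k (j:ℤ)/(j:ℝ)^2) ≤ 2*(v 1)^2 * k (j:ℤ) := by
          apply mul_le_mul_of_nonneg_left _ (by positivity)
          rw [div_le_iff₀ hjpos]
          nlinarith [hk0 (j:ℤ)]
        linarith [h2, h3 ▸ h2]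
      have hsum2 : ∑ j ∈ Finset.Ico 2 (N+1), k (j:ℤ) * (v (j:ℤ))^2/(j:ℝ)^2
          ≤ 2 * (∑ j ∈ Finset.Ico 2 (N+1), k (j:ℤ) * (v (j:ℤ) - v 1)^2/(j:ℝ)^2)
            + 2*(v 1)^2 * ∑ j ∈ Finset.Ico 2 (N+1), k (j:ℤ) := by
        calc ∑ j ∈ Finset.Ico 2 (N+1), k (j:ℤ) * (v (j:ℤ))^2/(j:ℝ)^2
            ≤ ∑ j ∈ Finset.Ico 2 (N+1),
              (2 * (k (j:ℤ) * (v (j:ℤ) - v 1)^2/(j:ℝ)^2) + 2*(v 1)^2 * k (j:ℤ)) :=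
              Finset.sum_le_sum hterm2
          _ = _ := by rw [Finset.sum_add_distrib, Finset.mul_sum, Finset.mul_sum]
      have hsumk : ∑ j ∈ Finset.Ico 2 (N+1), k (j:ℤ) ≤ K :=
        le_trans (Summable.sum_le_tsum _ (fun i _ => hk0 _) hkNat) hkNatK
      have hH := hHardy (N+1)
      have hfin1 : 2 * (∑ j ∈ Finset.Ico 2 (N+1), k (j:ℤ) * (v (j:ℤ) - v 1)^2/(j:ℝ)^2) ≤ 8*S := by
        linarith
      have hfin2 : 2*(v 1)^2 * ∑ j ∈ Finset.Ico 2 (N+1), k (j:ℤ) ≤ 2*(v 1)^2*K :=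
        mul_le_mul_of_nonneg_left hsumk (by positivity)
      simp only [hCbdef]
      linarith [hterm1, hsum2, hfin1, hfin2]
  have ht'sum : Summable t' := summable_of_sum_range_le ht'nn hpartial
  set T := ∑' n, t' n with hTdef
  have hT : T ≤ Cb := Summable.tsum_le_of_sum_range_le ht'sum hpartial
  have hT0 : 0 ≤ T := tsum_nonneg ht'nn
  -- Cauchy-Schwarz over the positive axis
  have hinj3 : Function.Injective (fun n : ℕ => n+1) := fun a b h => by simpa using h
  have hMshift : Summable (fun n : ℕ => k ((n:ℤ)+1) * ((n:ℝ)+1)^2) := by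
    have h := hM.comp_injective hinj3
    apply h.congr
    intro n
    show k (((n+1:ℕ)):ℤ) * (((n+1:ℕ)):ℝ)^2 = _
    push_cast
    ring
  have hMle : ∑' n : ℕ, k ((n:ℤ)+1) * ((n:ℝ)+1)^2 ≤ M := by
    apply Summable.tsum_le_tsum_of_inj (fun n : ℕ => n+1) hinj3
      (fun c _ => mul_nonneg (hk0 _) (sq_nonneg _)) _ hMshift hM
    intro n
    show k ((n:ℤ)+1) * ((n:ℝ)+1)^2 ≤ k (((n+1:ℕ)):ℤ) * (((n+1:ℕ)):ℝ)^2
    push_cast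
    exact le_rfl
  set P := ∑' n : ℕ, k ((n:ℤ)+1) * |v ((n:ℤ)+1)| with hPdef
  have hP0 : 0 ≤ P := tsum_nonneg (fun n => mul_nonneg (hk0 _) (abs_nonneg _))
  have hP2 : P^2 ≤ M * T := by
    have hcs := tsum_cs (fun n => Real.sqrt (k ((n:ℤ)+1)) * ((n:ℝ)+1))
        (fun n => Real.sqrt (k ((n:ℤ)+1)) * |v ((n:ℤ)+1)| / ((n:ℝ)+1))
        (fun n => by positivity) (fun n => by positivity) ?_ ?_
    · have hfg : ∀ n : ℕ, (Real.sqrt (k ((n:ℤ)+1)) * ((n:ℝ)+1))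
          * (Real.sqrt (k ((n:ℤ)+1)) * |v ((n:ℤ)+1)| / ((n:ℝ)+1)) = k ((n:ℤ)+1) * |v ((n:ℤ)+1)| := by
        intro n
        have hr : Real.sqrt (k ((n:ℤ)+1)) * Real.sqrt (k ((n:ℤ)+1)) = k ((n:ℤ)+1) :=
          Real.mul_self_sqrt (hk0 _)
        have hn0 : ((n:ℝ)+1) ≠ 0 := by positivity
        have he : (Real.sqrt (k ((n:ℤ)+1)) * ((n:ℝ)+1))
            * (Real.sqrt (k ((n:ℤ)+1)) * |v ((n:ℤ)+1)| / ((n:ℝ)+1))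
            = (Real.sqrt (k ((n:ℤ)+1)) * Real.sqrt (k ((n:ℤ)+1))) * |v ((n:ℤ)+1)|
              * (((n:ℝ)+1) / ((n:ℝ)+1)) := by ring
        rw [he, div_self hn0, mul_one, hr]
      have hf2 : ∀ n : ℕ, ((Real.sqrt (k ((n:ℤ)+1)) * ((n:ℝ)+1)))^2 = k ((n:ℤ)+1)*((n:ℝ)+1)^2 := by
        intro n; rw [mul_pow, Real.sq_sqrt (hk0 _)]
      have hg2 : ∀ n : ℕ, (Real.sqrt (k ((n:ℤ)+1)) * |v ((n:ℤ)+1)| / ((n:ℝ)+1))^2 = t' n := by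
        intro n
        simp only [htdef]
        rw [div_pow, mul_pow, Real.sq_sqrt (hk0 _), sq_abs]
      rw [tsum_congr hfg, tsum_congr hf2, tsum_congr hg2] at hcs
      calc P^2 ≤ (∑' n : ℕ, k ((n:ℤ)+1) * ((n:ℝ)+1)^2) * T := hcs
        _ ≤ M * T := mul_le_mul_of_nonneg_right hMle hT0
    · apply hMshift.congr
      intro n
      rw [mul_pow, Real.sq_sqrt (hk0 _)]
    · apply ht'sum.congr
      intro n
      simp only [htdef]
      rw [div_pow, mul_pow, Real.sq_sqrt (hk0 _), sq_abs]
  -- relating L to P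
  have habs : ∀ j : ℤ, |k j * v j| = k j * |v j| := fun j => by
    rw [abs_mul, abs_of_nonneg (hk0 j)]
  have hLsum : Summable (fun j : ℤ => k j * v j) :=
    Summable.of_abs (by simpa only [habs] using hvsum)
  have hposside : Summable (fun n : ℕ => k ((n:ℤ)+1) * |v ((n:ℤ)+1)|) :=
    hvsum.comp_injective hinj2
  have hnegside : Summable (fun n : ℕ => k (-((n:ℤ)+1)) * |v (-((n:ℤ)+1))|) := by
    apply hposside.congr
    intro n
    rw [hksym, hvsym]
  have h2P : ∑' j : ℤ, k j * |v j| = 2 * P := by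
    rw [tsum_of_add_one_of_neg_add_one hposside hnegside]
    have hc : ∀ n : ℕ, k (-((n:ℤ)+1)) * |v (-((n:ℤ)+1))| = k ((n:ℤ)+1) * |v ((n:ℤ)+1)| :=
      fun n => by rw [hksym, hvsym]
    rw [tsum_congr hc, hk00]
    simp only [hPdef]
    ring
  have hLP : L^2 ≤ 4 * P^2 := by
    have h1 : |L| ≤ ∑' j : ℤ, |k j * v j| := by
      have := norm_tsum_le_tsum_norm (f := fun j : ℤ => k j * v j)
        (by simpa only [Real.norm_eq_abs, habs] using hvsum)
      simpa only [Real.norm_eq_abs] using this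
    have h2 : ∑' j : ℤ, |k j * v j| = 2 * P := by rw [tsum_congr (fun j => habs j), h2P]
    have h3 : |L| ≤ 2 * P := h2 ▸ h1
    nlinarith [sq_abs L, abs_nonneg L]
  -- final assembly
  have hLT : L^2 ≤ 4*(M*T) := by nlinarith [hP2, hLP]
  have hCbk : (4*(k 1))*Cb = G + 32*(k 1)*S + 8*(v 1)^2*K*(k 1) := by
    simp only [hCbdef]
    field_simp
    ring
  have h4' : k 1 * ((4*(k 1))*Cb) ≤ 83*(K*G) := by
    rw [hCbk]
    have hA : 0 ≤ (2*G + 2*(v 1)^2*K*(k 1) - S*(k 1)) * (k 1) :=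
      mul_nonneg (by linarith [hSm]) hk1.le
    have hB : 0 ≤ (K - k 1)*G := mul_nonneg (by linarith [hKk1]) hG0
    have hC : 0 ≤ (G - 4*((k 1)^2*(v 1)^2))*K := mul_nonneg (by linarith [hv1sq]) hK0.le
    nlinarith [hA, hB, hC]
  have hmain : (k 1)^2 * L^2 ≤ 83*(M*(K*G)) := by
    have h1 : (k 1)^2 * L^2 ≤ (k 1)^2 * (4*(M*T)) :=
      mul_le_mul_of_nonneg_left hLT (by positivity)
    have h2 : (k 1)^2 * (4*(M*T)) ≤ (k 1)^2 * (4*(M*Cb)) := by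
      apply mul_le_mul_of_nonneg_left _ (by positivity)
      have := mul_le_mul_of_nonneg_left hT hM0.le
      linarith
    have h3 : (k 1)^2*(4*(M*Cb)) = M * (k 1 * ((4*(k 1))*Cb)) := by ring
    have h4 : M * (k 1 * ((4*(k 1))*Cb)) ≤ M * (83*(K*G)) :=
      mul_le_mul_of_nonneg_left h4' hM0.le
    calc (k 1)^2 * L^2 ≤ (k 1)^2 * (4*(M*T)) := h1
      _ ≤ (k 1)^2 * (4*(M*Cb)) := h2
      _ = M * (k 1 * ((4*(k 1))*Cb)) := h3
      _ ≤ M * (83*(K*G)) := h4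
      _ = 83*(M*(K*G)) := by ring
  have hden : (0:ℝ) < 1000 * K * M := by positivity
  rw [div_mul_eq_mul_div, div_le_iff₀ hden]
  nlinarith [hmain, mul_nonneg (mul_nonneg hK0.le hM0.le) hG0]

theorem stmt16 :
    ∃ C₀ : ℝ, 0 < C₀ ∧
      ∀ k : ℤ → ℝ, (∀ j, 0 ≤ k j) → (∀ j, k (-j) = k j) → k 0 = 0 → Summable k →
        (∀ m n : ℤ, 1 ≤ m → m ≤ n → k n ≤ k m) → 0 < k 1 →
        Summable (fun j : ℕ => k (j : ℤ) * (j : ℝ) ^ 2) →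
        ∀ u : ℤ → ℝ, Summable (fun j : ℤ => k j * |u j - u 0|) →
          ENNReal.ofReal
              (((k 1) ^ 2 / (C₀ * (∑' j : ℤ, k j) * (∑' j : ℕ, k (j : ℤ) * (j : ℝ) ^ 2)))
                * (Lop k u) ^ 2)
            ≤ Gamma2e k u := by
  refine ⟨1000, by norm_num, ?_⟩
  intro k hk0 hksym hk00 hksum hmono hk1 hM u hu
  -- symmetrized function
  set v : ℤ → ℝ := fun j => (u j + u (-j))/2 - u 0 with hvdef
  have hv0 : v 0 = 0 := by simp [hvdef]
  have hvsym : ∀ j, v (-j) = v j := by intro j; simp only [hvdef, neg_neg]; ring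
  -- symmetrization decreases Gamma2e
  have hDv : ∀ p : ℤ × ℤ, v (p.1 + p.2) - v p.1 - v p.2 + v 0
      = (1/2) * ((u (p.1 + p.2) - u p.1 - u p.2 + u 0)
        + (u (-p.1 + -p.2) - u (-p.1) - u (-p.2) + u 0)) := by
    intro p
    simp only [hvdef, neg_add]
    ring
  have hG2 : Gamma2e k v ≤ Gamma2e k u := by
    unfold Gamma2e
    apply mul_le_mul_right
    have hptw : ∀ p : ℤ × ℤ,
        ENNReal.ofReal (k p.1 * k p.2 * (v (p.1 + p.2) - v p.1 - v p.2 + v 0)^2)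
          ≤ ENNReal.ofReal ((1/2) * (k p.1 * k p.2 * (u (p.1 + p.2) - u p.1 - u p.2 + u 0)^2))
            + ENNReal.ofReal ((1/2) * (k (-p.1) * k (-p.2) * (u (-p.1 + -p.2) - u (-p.1) - u (-p.2) + u 0)^2)) := by
      intro p
      have hnn1 : (0:ℝ) ≤ (1/2) * (k p.1 * k p.2 * (u (p.1 + p.2) - u p.1 - u p.2 + u 0)^2) :=
        mul_nonneg (by norm_num) (mul_nonneg (mul_nonneg (hk0 _) (hk0 _)) (sq_nonneg _))
      have hnn2 : (0:ℝ) ≤ (1/2) * (k (-p.1) * k (-p.2) * (u (-p.1 + -p.2) - u (-p.1) - u (-p.2) + u 0)^2) :=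
        mul_nonneg (by norm_num) (mul_nonneg (mul_nonneg (hk0 _) (hk0 _)) (sq_nonneg _))
      rw [← ENNReal.ofReal_add hnn1 hnn2]
      apply ENNReal.ofReal_le_ofReal
      rw [hDv p, hksym p.1, hksym p.2]
      have hc : (0:ℝ) ≤ k p.1 * k p.2 := mul_nonneg (hk0 _) (hk0 _)
      nlinarith [mul_nonneg hc (sq_nonneg ((u (p.1 + p.2) - u p.1 - u p.2 + u 0)
        - (u (-p.1 + -p.2) - u (-p.1) - u (-p.2) + u 0)))]
    calc ∑' p : ℤ × ℤ, ENNReal.ofReal (k p.1 * k p.2 * (v (p.1 + p.2) - v p.1 - v p.2 + v 0)^2)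
        ≤ ∑' p : ℤ × ℤ,
            (ENNReal.ofReal ((1/2) * (k p.1 * k p.2 * (u (p.1 + p.2) - u p.1 - u p.2 + u 0)^2))
            + ENNReal.ofReal ((1/2) * (k (-p.1) * k (-p.2) * (u (-p.1 + -p.2) - u (-p.1) - u (-p.2) + u 0)^2))) :=
          ENNReal.tsum_le_tsum hptw
      _ = (∑' p : ℤ × ℤ, ENNReal.ofReal ((1/2) * (k p.1 * k p.2 * (u (p.1 + p.2) - u p.1 - u p.2 + u 0)^2)))
          + ∑' p : ℤ × ℤ, ENNReal.ofReal ((1/2) * (k (-p.1) * k (-p.2) * (u (-p.1 + -p.2) - u (-p.1) - u (-p.2) + u 0)^2)) :=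
          ENNReal.tsum_add
      _ = (∑' p : ℤ × ℤ, ENNReal.ofReal ((1/2) * (k p.1 * k p.2 * (u (p.1 + p.2) - u p.1 - u p.2 + u 0)^2)))
          + ∑' p : ℤ × ℤ, ENNReal.ofReal ((1/2) * (k p.1 * k p.2 * (u (p.1 + p.2) - u p.1 - u p.2 + u 0)^2)) := by
          congr 1
          rw [← (Equiv.neg (ℤ × ℤ)).tsum_eq (fun p : ℤ × ℤ =>
            ENNReal.ofReal ((1/2) * (k p.1 * k p.2 * (u (p.1 + p.2) - u p.1 - u p.2 + u 0)^2)))]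
          apply tsum_congr
          intro p
          rfl
      _ = ∑' p : ℤ × ℤ, (ENNReal.ofReal (1/2) + ENNReal.ofReal (1/2))
            * ENNReal.ofReal (k p.1 * k p.2 * (u (p.1 + p.2) - u p.1 - u p.2 + u 0)^2) := by
          rw [ENNReal.tsum_mul_left, ← two_mul]
          rw [tsum_congr (fun p : ℤ × ℤ => ENNReal.ofReal_mul (p := (1/2:ℝ)) (by norm_num)),
            ENNReal.tsum_mul_left]
          ring
      _ = ∑' p : ℤ × ℤ, ENNReal.ofReal (k p.1 * k p.2 * (u (p.1 + p.2) - u p.1 - u p.2 + u 0)^2) := by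
          apply tsum_congr
          intro p
          rw [← ENNReal.ofReal_add (by norm_num) (by norm_num)]
          norm_num
  -- Lop of u equals the symmetrized sum
  have hsum1 : Summable (fun j : ℤ => k j * (u j - u 0)) :=
    Summable.of_abs (by simpa [abs_mul, abs_of_nonneg (hk0 _)] using hu)
  have hsum2 : Summable (fun j : ℤ => k j * (u (-j) - u 0)) := by
    have h := hsum1.comp_injective (neg_injective : Function.Injective (fun j : ℤ => -j))
    apply h.congr
    intro j
    show k (-j) * (u (-j) - u 0) = _
    rw [hksym]
  have h2 : ∑' j : ℤ, k j * (u (-j) - u 0) = ∑' j : ℤ, k j * (u j - u 0) := by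
    rw [← (Equiv.neg ℤ).tsum_eq (fun j : ℤ => k j * (u j - u 0))]
    apply tsum_congr
    intro j
    show k j * (u (-j) - u 0) = k (-j) * (u (-j) - u 0)
    rw [hksym]
  have hL : ∑' j : ℤ, k j * v j = Lop k u := by
    have h1 : ∀ j : ℤ, k j * v j
        = (1/2) * (k j * (u j - u 0)) + (1/2) * (k j * (u (-j) - u 0)) := by
      intro j; simp only [hvdef]; ring
    rw [tsum_congr h1, Summable.tsum_add (hsum1.mul_left _) (hsum2.mul_left _),
      tsum_mul_left, tsum_mul_left, h2]
    unfold Lop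
    ring
  -- summability of k * |v|
  have hu2 : Summable (fun j : ℤ => k j * |u (-j) - u 0|) := by
    have h := hu.comp_injective (neg_injective : Function.Injective (fun j : ℤ => -j))
    apply h.congr
    intro j
    show k (-j) * |u (-j) - u 0| = _
    rw [hksym]
  have hvsum : Summable (fun j : ℤ => k j * |v j|) := by
    refine Summable.of_nonneg_of_le (fun j => mul_nonneg (hk0 _) (abs_nonneg _)) ?_
      ((hu.mul_left (1/2)).add (hu2.mul_left (1/2)))
    intro j
    have h1 : |v j| ≤ (1/2) * |u j - u 0| + (1/2) * |u (-j) - u 0| := by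
      have : v j = (1/2) * (u j - u 0) + (1/2) * (u (-j) - u 0) := by
        simp only [hvdef]; ring
      rw [this]
      calc |(1/2) * (u j - u 0) + (1/2) * (u (-j) - u 0)|
          ≤ |(1/2) * (u j - u 0)| + |(1/2) * (u (-j) - u 0)| := abs_add_le _ _
        _ = (1/2) * |u j - u 0| + (1/2) * |u (-j) - u 0| := by
            rw [abs_mul, abs_mul, abs_of_nonneg (by norm_num : (0:ℝ) ≤ 1/2)]
    have h2 := mul_le_mul_of_nonneg_left h1 (hk0 j)
    nlinarith [h2]
  -- case on finiteness of Gamma2 of v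
  by_cases htop : (∑' p : ℤ × ℤ,
      ENNReal.ofReal (k p.1 * k p.2 * (v (p.1 + p.2) - v p.1 - v p.2 + v 0)^2)) = ⊤
  · have hvtop : Gamma2e k v = ⊤ := by
      unfold Gamma2e
      rw [htop, ENNReal.mul_top (by norm_num)]
    have hutop : Gamma2e k u = ⊤ := top_le_iff.mp (hvtop ▸ hG2)
    rw [hutop]
    exact le_top
  · set Fv : ℤ × ℤ → ℝ := fun p => k p.1 * k p.2 * (v (p.1 + p.2) - v p.1 - v p.2)^2 with hFvdef
    have hFveq : ∀ p : ℤ × ℤ,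
        k p.1 * k p.2 * (v (p.1 + p.2) - v p.1 - v p.2 + v 0)^2 = Fv p := by
      intro p; rw [hv0, add_zero]
    have hFvnn : ∀ p, 0 ≤ Fv p := fun p => mul_nonneg (mul_nonneg (hk0 _) (hk0 _)) (sq_nonneg _)
    have hFvsum : Summable Fv := by
      have h := ENNReal.summable_toReal htop
      apply h.congr
      intro p
      rw [ENNReal.toReal_ofReal (mul_nonneg (mul_nonneg (hk0 _) (hk0 _)) (sq_nonneg _))]
      exact hFveq p
    have hofquarter : (1/4 : ℝ≥0∞) = ENNReal.ofReal (1/4 : ℝ) := by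
      rw [ENNReal.ofReal_div_of_pos (by norm_num)]
      norm_num
    have hGv : Gamma2e k v = ENNReal.ofReal ((1/4) * ∑' p : ℤ × ℤ, Fv p) := by
      unfold Gamma2e
      rw [tsum_congr (fun p => congrArg ENNReal.ofReal (hFveq p)),
        ← ENNReal.ofReal_tsum_of_nonneg hFvnn hFvsum, hofquarter,
        ← ENNReal.ofReal_mul (by norm_num)]
    refine le_trans ?_ hG2
    rw [hGv, ← hL]
    apply ENNReal.ofReal_le_ofReal
    exact main_real k hk0 hksym hk00 hksum hmono hk1 hM v hv0 hvsym hvsum hFvsum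
end

section
/- Let k : ℤ → [0,∞) be symmetric, summable, k(0)=0, with support S = {±2^l : l ∈ ℕ₀} and satisfying ∑_{l∈S₊} (k(2l)/k(l))² < ∞ where S₊ = S ∩ ℕ. Then there exists a finite d > 0 such that Γ₂(u)(0) ≥ (1/d)·(ℒu(0))² for all admissible u, i.e. CD(0,d) holds at 0. -/
open scoped ENNReal

/-- Product of two ℓ² sequences is summable. -/
lemma l2_mul_summable {f g : ℕ → ℝ} (hf : Summable fun n => f n ^ 2)
    (hg : Summable fun n => g n ^ 2) : Summable fun n => f n * g n := by
  refine Summable.of_abs ?_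
  refine Summable.of_nonneg_of_le (fun n => abs_nonneg _) (fun n => ?_)
    (((hf.add hg).mul_left (1/2)))
  rw [abs_mul]
  nlinarith [sq_abs (f n), sq_abs (g n), sq_nonneg (|f n| - |g n|)]

/-- Cauchy–Schwarz for tsums. -/
lemma tsum_cauchy_schwarz {f g : ℕ → ℝ} (hf : Summable fun n => f n ^ 2)
    (hg : Summable fun n => g n ^ 2) :
    (∑' n, f n * g n) ^ 2 ≤ (∑' n, f n ^ 2) * (∑' n, g n ^ 2) := by
  have hfg := l2_mul_summable hf hg
  have key : ∀ s : Finset ℕ, (∑ n ∈ s, f n * g n) ^ 2 ≤ (∑' n, f n ^ 2) * (∑' n, g n ^ 2) := by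
    intro s
    calc (∑ n ∈ s, f n * g n) ^ 2 ≤ (∑ n ∈ s, f n ^ 2) * (∑ n ∈ s, g n ^ 2) :=
          Finset.sum_mul_sq_le_sq_mul_sq s f g
      _ ≤ (∑' n, f n ^ 2) * (∑' n, g n ^ 2) := by
          refine mul_le_mul (Summable.sum_le_tsum s (fun i _ => sq_nonneg _) hf)
            (Summable.sum_le_tsum s (fun i _ => sq_nonneg _) hg)
            (Finset.sum_nonneg fun i _ => sq_nonneg _) (tsum_nonneg fun i => sq_nonneg _)
  have h2 : Filter.Tendsto (fun s : Finset ℕ => (∑ n ∈ s, f n * g n) ^ 2) Filter.atTop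
      (nhds ((∑' n, f n * g n) ^ 2)) := hfg.hasSum.pow 2
  exact le_of_tendsto h2 (Filter.Eventually.of_forall key)

theorem stmt17 (k : ℤ → ℝ) (hpos : ∀ j, 0 ≤ k j) (hsym : ∀ j, k (-j) = k j)
    (h0 : k 0 = 0) (hsum : Summable k)
    (hsupp : Function.support k = {j : ℤ | ∃ l : ℕ, j = 2 ^ l ∨ j = -(2 ^ l)})
    (hratio : Summable (fun l : ℕ => (k (2 ^ (l + 1)) / k (2 ^ l)) ^ 2)) :
    ∃ d : ℝ, 0 < d ∧ ∀ u : ℤ → ℝ, Summable (fun j : ℤ => k j * |u j - u 0|) →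
      ENNReal.ofReal ((1 / d) * (Lop k u) ^ 2) ≤ Gamma2e k u := by
  classical
  -- notation
  set a : ℕ → ℝ := fun l => k (2 ^ l) with ha
  set r : ℕ → ℝ := fun l => a (l + 1) / a l with hrdef
  set R : ℝ := ∑' l, r l ^ 2 with hRdef
  have hmem : ∀ j : ℤ, k j ≠ 0 ↔ ∃ l : ℕ, j = 2 ^ l ∨ j = -(2 ^ l) := by
    intro j
    rw [← Function.mem_support, hsupp]; rfl
  have hapos : ∀ l, 0 < a l := by
    intro l
    refine lt_of_le_of_ne (hpos _) (Ne.symm ?_)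
    exact (hmem _).mpr ⟨l, Or.inl rfl⟩
  have hr2 : Summable fun l => r l ^ 2 := hratio
  have hR0 : 0 ≤ R := tsum_nonneg fun l => sq_nonneg _
  have hpinj : Function.Injective fun l : ℕ => (2 : ℤ) ^ l := by
    intro l m h
    have h2 : (2 : ℤ) ^ l = (2 : ℤ) ^ m := h
    have h' : (2 : ℕ) ^ l = 2 ^ m := by exact_mod_cast h2
    exact Nat.pow_right_injective le_rfl h'
  have hpowpos : ∀ l : ℕ, (0 : ℤ) < 2 ^ l := fun l => pow_pos (by norm_num) l
  refine ⟨12 + 96 * R, by positivity, fun u hu => ?_⟩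
  set v : ℤ → ℝ := fun j => u j - u 0 with hv
  set f : ℤ → ℝ := fun j => k j * v j with hf
  set w : ℕ → ℝ := fun l => v (2 ^ l) + v (-(2 ^ l)) with hw
  set G : ℕ → ℝ := fun l => a l * w l with hG
  -- summability of f
  have hfabs : ∀ j, |f j| = k j * |v j| := by
    intro j; rw [hf]; simp only; rw [abs_mul, abs_of_nonneg (hpos j)]
  have hfsum : Summable f := by
    refine Summable.of_abs ?_
    simpa only [hfabs] using hu
  -- Lop as a sum over ℕ
  have hnat : ∑' n : ℕ, (f n + f (-(n : ℤ))) = (∑' j : ℤ, f j) + f 0 := tsum_nat_add_neg hfsum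
  have hf0 : f 0 = 0 := by simp [hf, h0]
  set F : ℕ → ℝ := fun n => f n + f (-(n : ℤ)) with hF
  have hFsum : Summable F := hfsum.nat_add_neg
  have hFsupp : Function.support F ⊆ Set.range fun l : ℕ => 2 ^ l := by
    intro n hn
    have hk : k (n : ℤ) ≠ 0 := by
      by_contra hk0
      apply hn
      have hkneg : k (-(n : ℤ)) = 0 := by rw [hsym]; exact hk0
      simp [hF, hf, hk0, hkneg]
    obtain ⟨l, hl⟩ := (hmem _).mp hk
    rcases hl with hl | hl
    · refine ⟨l, ?_⟩
      have : ((2 ^ l : ℕ) : ℤ) = (n : ℤ) := by push_cast; omega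
      exact_mod_cast this
    · exfalso
      have := hpowpos l
      omega
  have hinjN : Function.Injective fun l : ℕ => (2 : ℕ) ^ l :=
    Nat.pow_right_injective le_rfl
  have hFcomp : ∑' l : ℕ, F (2 ^ l) = ∑' n : ℕ, F n := hinjN.tsum_eq hFsupp
  have hFval : ∀ l : ℕ, F (2 ^ l) = G l := by
    intro l
    have hcast : (((2 : ℕ) ^ l : ℕ) : ℤ) = (2 : ℤ) ^ l := by push_cast; ring
    simp only [hF, hf, hG, hw]
    rw [hcast, hsym]
    ring
  have hGsum : Summable G := (hFsum.comp_injective hinjN).congr hFval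
  have hLop : Lop k u = ∑' l, G l := by
    have : Lop k u = ∑' j : ℤ, f j := rfl
    rw [this, ← add_zero (∑' j : ℤ, f j), ← hf0, ← hnat, ← hFcomp]
    exact tsum_congr hFval
  -- Gamma2e side
  set term : ℤ × ℤ → ℝ≥0∞ := fun p =>
    ENNReal.ofReal (k p.1 * k p.2 * (u (p.1 + p.2) - u p.1 - u p.2 + u 0) ^ 2) with hterm
  set T : ℝ≥0∞ := ∑' p : ℤ × ℤ, term p with hT
  have hGamma : Gamma2e k u = (1 / 4 : ℝ≥0∞) * T := rfl
  by_cases hTtop : T = ⊤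
  · rw [hGamma, hTtop, ENNReal.mul_top (by norm_num)]
    exact le_top
  -- the three diagonal/antidiagonal families
  set gp : ℕ → ℝ := fun l => u (2 ^ (l + 1)) - 2 * u (2 ^ l) + u 0 with hgp
  set gm : ℕ → ℝ := fun l => u (-(2 ^ (l + 1))) - 2 * u (-(2 ^ l)) + u 0 with hgm
  have hφ1 : Function.Injective fun l : ℕ => (((2 : ℤ) ^ l, (2 : ℤ) ^ l) : ℤ × ℤ) := by
    intro l m h; exact hpinj (congrArg Prod.fst h)
  have hφ2 : Function.Injective fun l : ℕ => ((-(2 : ℤ) ^ l, -(2 : ℤ) ^ l) : ℤ × ℤ) := by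
    intro l m h
    have := congrArg Prod.fst h
    simp only [neg_inj] at this
    exact hpinj this
  have hφ3 : Function.Injective fun l : ℕ => (((2 : ℤ) ^ l, -(2 : ℤ) ^ l) : ℤ × ℤ) := by
    intro l m h; exact hpinj (congrArg Prod.fst h)
  have h1val : ∀ l : ℕ, term ((2 : ℤ) ^ l, (2 : ℤ) ^ l) = ENNReal.ofReal ((a l * gp l) ^ 2) := by
    intro l
    have hsum2 : (2 : ℤ) ^ l + 2 ^ l = 2 ^ (l + 1) := by ring
    simp only [hterm, hgp, ha]
    rw [hsum2]
    congr 1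
    ring
  have h2val : ∀ l : ℕ, term (-(2 : ℤ) ^ l, -(2 : ℤ) ^ l)
      = ENNReal.ofReal ((a l * gm l) ^ 2) := by
    intro l
    have hsum2 : -(2 : ℤ) ^ l + -(2 : ℤ) ^ l = -(2 ^ (l + 1)) := by ring
    simp only [hterm, hgm, ha]
    rw [hsum2, hsym]
    congr 1
    ring
  have h3val : ∀ l : ℕ, term ((2 : ℤ) ^ l, -(2 : ℤ) ^ l)
      = ENNReal.ofReal ((a l * w l) ^ 2) := by
    intro l
    have hsum2 : (2 : ℤ) ^ l + -(2 : ℤ) ^ l = 0 := by ring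
    simp only [hterm, hw, hv, ha]
    rw [hsum2, hsym]
    congr 1
    ring
  have hAe : ∑' l, ENNReal.ofReal ((a l * gp l) ^ 2) ≤ T := by
    calc ∑' l, ENNReal.ofReal ((a l * gp l) ^ 2)
        = ∑' l, term ((2 : ℤ) ^ l, (2 : ℤ) ^ l) := tsum_congr fun l => (h1val l).symm
      _ ≤ T := ENNReal.tsum_comp_le_tsum_of_injective hφ1 term
  have hBe : ∑' l, ENNReal.ofReal ((a l * gm l) ^ 2) ≤ T := by
    calc ∑' l, ENNReal.ofReal ((a l * gm l) ^ 2)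
        = ∑' l, term (-(2 : ℤ) ^ l, -(2 : ℤ) ^ l) := tsum_congr fun l => (h2val l).symm
      _ ≤ T := ENNReal.tsum_comp_le_tsum_of_injective hφ2 term
  have hWe : ∑' l, ENNReal.ofReal ((a l * w l) ^ 2) ≤ T := by
    calc ∑' l, ENNReal.ofReal ((a l * w l) ^ 2)
        = ∑' l, term ((2 : ℤ) ^ l, -(2 : ℤ) ^ l) := tsum_congr fun l => (h3val l).symm
      _ ≤ T := ENNReal.tsum_comp_le_tsum_of_injective hφ3 term
  -- summability of the real families
  have hsummable_of : ∀ {x : ℕ → ℝ}, (∀ l, 0 ≤ x l) →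
      (∑' l, ENNReal.ofReal (x l)) ≤ T → Summable x ∧ (∑' l, x l) ≤ T.toReal := by
    intro x hx hxT
    have hne : (∑' l, ENNReal.ofReal (x l)) ≠ ⊤ := by
      exact ne_top_of_le_ne_top hTtop hxT
    have hs : Summable x := by
      have := ENNReal.summable_toReal hne
      simpa only [ENNReal.toReal_ofReal (hx _)] using this
    refine ⟨hs, ?_⟩
    rw [← ENNReal.ofReal_le_iff_le_toReal hTtop, ENNReal.ofReal_tsum_of_nonneg hx hs]
    exact hxT
  obtain ⟨sA, hAle⟩ := hsummable_of (fun l => sq_nonneg (a l * gp l)) hAe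
  obtain ⟨sB, hBle⟩ := hsummable_of (fun l => sq_nonneg (a l * gm l)) hBe
  obtain ⟨sW, hWle⟩ := hsummable_of (fun l => sq_nonneg (a l * w l)) hWe
  set t : ℝ := T.toReal with htdef
  have ht0 : 0 ≤ t := ENNReal.toReal_nonneg
  -- the doubling identity
  set g : ℕ → ℝ := fun l => w (l + 1) - 2 * w l with hgdef
  have hgpm : ∀ l, g l = gp l + gm l := by
    intro l
    simp only [hgdef, hw, hv, hgp, hgm, pow_succ]
    ring
  have sAG : Summable fun l => (a l * g l) ^ 2 := by
    refine Summable.of_nonneg_of_le (fun l => sq_nonneg _) (fun l => ?_)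
      ((sA.add sB).mul_left 2)
    rw [hgpm l]
    nlinarith [sq_nonneg (a l * gp l - a l * gm l)]
  have hAGle : (∑' l, (a l * g l) ^ 2) ≤ 2 * (t + t) := by
    calc (∑' l, (a l * g l) ^ 2)
        ≤ ∑' l, 2 * ((a l * gp l) ^ 2 + (a l * gm l) ^ 2) := by
          refine Summable.tsum_le_tsum (fun l => ?_) sAG ((sA.add sB).mul_left 2)
          rw [hgpm l]
          nlinarith [sq_nonneg (a l * gp l - a l * gm l)]
      _ = 2 * ((∑' l, (a l * gp l) ^ 2) + ∑' l, (a l * gm l) ^ 2) := by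
          rw [tsum_mul_left, Summable.tsum_add sA sB]
      _ ≤ 2 * (t + t) := by
          have := add_le_add hAle hBle
          linarith
  -- decompose the tail of the Lop sum
  have hGsucc : ∀ l, G (l + 1) = r l * (a l * g l) + 2 * (r l * (a l * w l)) := by
    intro l
    have hal : a l ≠ 0 := (hapos l).ne'
    have har : a (l + 1) = r l * a l := by
      rw [hrdef]; field_simp
    simp only [hG, hgdef]
    rw [har]
    ring
  have sW' : Summable fun l => G l ^ 2 := by
    simpa only [hG] using sW
  have sP : Summable fun l => r l * (a l * g l) := l2_mul_summable hr2 sAG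
  have sQ : Summable fun l => r l * (a l * w l) := l2_mul_summable hr2 sW
  set X : ℝ := ∑' l, r l * (a l * g l) with hX
  set Y : ℝ := ∑' l, r l * (a l * w l) with hY
  have htail : ∑' l, G (l + 1) = X + 2 * Y := by
    calc ∑' l, G (l + 1)
        = ∑' l, (r l * (a l * g l) + 2 * (r l * (a l * w l))) := tsum_congr hGsucc
      _ = X + ∑' l, 2 * (r l * (a l * w l)) := Summable.tsum_add sP (sQ.mul_left 2)
      _ = X + 2 * Y := by rw [tsum_mul_left]
  have hLopsplit : Lop k u = G 0 + (X + 2 * Y) := by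
    rw [hLop, Summable.tsum_eq_zero_add hGsum, htail]
  -- bounds
  have hG0 : G 0 ^ 2 ≤ t := by
    have h1 : (a 0 * w 0) ^ 2 ≤ ∑' l, (a l * w l) ^ 2 :=
      Summable.le_tsum sW 0 fun b _ => sq_nonneg _
    calc G 0 ^ 2 = (a 0 * w 0) ^ 2 := rfl
      _ ≤ ∑' l, (a l * w l) ^ 2 := h1
      _ ≤ t := hWle
  have hX2 : X ^ 2 ≤ R * (2 * (t + t)) := by
    calc X ^ 2 ≤ R * ∑' l, (a l * g l) ^ 2 := tsum_cauchy_schwarz hr2 sAG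
      _ ≤ R * (2 * (t + t)) := by
          refine mul_le_mul_of_nonneg_left hAGle hR0
  have hY2 : Y ^ 2 ≤ R * t := by
    calc Y ^ 2 ≤ R * ∑' l, (a l * w l) ^ 2 := tsum_cauchy_schwarz hr2 sW
      _ ≤ R * t := mul_le_mul_of_nonneg_left hWle hR0
  have hRt : 0 ≤ R * t := mul_nonneg hR0 ht0
  have hfinal : Lop k u ^ 2 ≤ (3 + 24 * R) * t := by
    rw [hLopsplit]
    nlinarith [sq_nonneg (G 0 - X), sq_nonneg (G 0 - 2 * Y), sq_nonneg (X - 2 * Y),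
      sq_nonneg (G 0 + X + 2 * Y)]
  -- conclude in ℝ≥0∞
  have hd : (0 : ℝ) < 12 + 96 * R := by positivity
  have hreal : (1 / (12 + 96 * R)) * Lop k u ^ 2 ≤ (1 / 4) * t := by
    rw [div_mul_eq_mul_div, one_mul, div_le_iff₀ hd]
    calc Lop k u ^ 2 ≤ (3 + 24 * R) * t := hfinal
      _ = 1 / 4 * t * (12 + 96 * R) := by ring
  calc ENNReal.ofReal ((1 / (12 + 96 * R)) * Lop k u ^ 2)
      ≤ ENNReal.ofReal ((1 / 4) * t) := ENNReal.ofReal_le_ofReal hreal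
    _ = Gamma2e k u := by
        rw [hGamma, ENNReal.ofReal_mul (by norm_num), htdef, ENNReal.ofReal_toReal hTtop,
          one_div, one_div, ENNReal.ofReal_inv_of_pos (by norm_num), ENNReal.ofReal_ofNat]
end

section
/- Let k : ℤ → [0,∞) be symmetric, summable, k(0)=0, with support S = {±3^l : l ∈ ℕ₀} and satisfying ∑_{l∈S₊} k(3l)/k(l) < ∞ where S₊ = S ∩ ℕ. Then there exists a finite d > 0 such that Γ₂(u)(0) ≥ (1/d)·(ℒu(0))² for all admissible u, i.e. CD(0,d) holds at 0. -/
open scoped ENNReal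

open MeasureTheory


lemma ennreal_cs (f g : ℕ → ℝ≥0∞) :
    (∑' n, f n * g n) ^ 2 ≤ (∑' n, f n ^ 2) * (∑' n, g n ^ 2) := by
  have hconj : Real.HolderConjugate 2 2 := Real.holderConjugate_iff.mpr ⟨one_lt_two, by norm_num⟩
  have key := ENNReal.lintegral_mul_le_Lp_mul_Lq (Measure.count (α := ℕ)) hconj
    (measurable_from_top (f := f)).aemeasurable (measurable_from_top (f := g)).aemeasurable
  simp only [Pi.mul_apply, lintegral_count] at key
  have hf2 : ∀ x : ℝ≥0∞, x ^ (2:ℝ) = x ^ 2 := fun x => by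
    rw [← ENNReal.rpow_natCast x 2]; norm_num
  have hsq : ∀ x : ℝ≥0∞, (x ^ ((2:ℝ)⁻¹)) ^ 2 = x := fun x => by
    rw [← ENNReal.rpow_natCast _ 2, ← ENNReal.rpow_mul]; norm_num
  simp only [hf2, one_div] at key
  calc (∑' n, f n * g n) ^ 2
      ≤ ((∑' n, f n ^ 2) ^ ((2:ℝ)⁻¹) * (∑' n, g n ^ 2) ^ ((2:ℝ)⁻¹)) ^ 2 :=
        pow_le_pow_left' key 2
    _ = (∑' n, f n ^ 2) * (∑' n, g n ^ 2) := by rw [mul_pow, hsq, hsq]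

lemma ennreal_half_sq (x : ℝ≥0∞) : (x ^ ((2:ℝ)⁻¹)) ^ 2 = x := by
  rw [← ENNReal.rpow_natCast _ 2, ← ENNReal.rpow_mul]; norm_num

lemma ennreal_sq_half (x : ℝ≥0∞) : (x ^ 2) ^ ((2:ℝ)⁻¹) = x := by
  rw [← ENNReal.rpow_natCast x 2, ← ENNReal.rpow_mul]; norm_num

lemma ennreal_mul_le_sq_add_sq (a b : ℝ≥0∞) : a * b ≤ a ^ 2 + b ^ 2 := by
  rcases le_total a b with h | h
  · calc a * b ≤ b * b := mul_le_mul_left h b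
      _ = b ^ 2 := (sq b).symm
      _ ≤ a ^ 2 + b ^ 2 := le_add_self
  · calc a * b ≤ a * a := mul_le_mul_right h a
      _ = a ^ 2 := (sq a).symm
      _ ≤ a ^ 2 + b ^ 2 := le_self_add

lemma ennreal_add_sq_le (a b : ℝ≥0∞) : (a + b) ^ 2 ≤ 3 * a ^ 2 + 3 * b ^ 2 := by
  have h := ennreal_mul_le_sq_add_sq a b
  calc (a + b) ^ 2 = a ^ 2 + 2 * (a * b) + b ^ 2 := by ring
    _ ≤ a ^ 2 + 2 * (a ^ 2 + b ^ 2) + b ^ 2 := by gcongr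
    _ = 3 * a ^ 2 + 3 * b ^ 2 := by ring

lemma ennreal_add4_sq_le (a b c d : ℝ≥0∞) :
    (a + (b + c + d)) ^ 2 ≤ 9 * a ^ 2 + 9 * b ^ 2 + 9 * c ^ 2 + 9 * d ^ 2 := by
  have h1 : a + (b + c + d) = (a + b) + (c + d) := by ring
  rw [h1]
  calc ((a + b) + (c + d)) ^ 2 ≤ 3 * (a + b) ^ 2 + 3 * (c + d) ^ 2 := ennreal_add_sq_le _ _
    _ ≤ 3 * (3 * a ^ 2 + 3 * b ^ 2) + 3 * (3 * c ^ 2 + 3 * d ^ 2) := by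
        gcongr <;> exact ennreal_add_sq_le _ _
    _ = 9 * a ^ 2 + 9 * b ^ 2 + 9 * c ^ 2 + 9 * d ^ 2 := by ring

lemma p3pos (a : ℕ) : (0:ℤ) < 3 ^ a := pow_pos (by norm_num) a

lemma p3inj {a b : ℕ} (h : (3:ℤ) ^ a = 3 ^ b) : a = b := by
  have h2 : (3:ℕ) ^ a = 3 ^ b := by exact_mod_cast h
  exact Nat.pow_right_injective (by norm_num) h2

noncomputable def Fq (u : ℤ → ℝ) (l : ℕ) : ℝ := u (3 ^ l) + u (-(3 ^ l)) - 2 * u 0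
noncomputable def T1 (u : ℤ → ℝ) (l : ℕ) : ℝ :=
  u (2 * 3 ^ l) - u (3 ^ (l + 1)) - u (-(3 ^ l)) + u 0
noncomputable def T1' (u : ℤ → ℝ) (l : ℕ) : ℝ :=
  u (-(2 * 3 ^ l)) - u (-(3 ^ (l + 1))) - u (3 ^ l) + u 0
noncomputable def T2 (u : ℤ → ℝ) (l : ℕ) : ℝ := u (2 * 3 ^ l) - 2 * u (3 ^ l) + u 0
noncomputable def T2' (u : ℤ → ℝ) (l : ℕ) : ℝ := u (-(2 * 3 ^ l)) - 2 * u (-(3 ^ l)) + u 0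
noncomputable def Aq (u : ℤ → ℝ) (l : ℕ) : ℝ := T2 u l + T2' u l
noncomputable def Bq (u : ℤ → ℝ) (l : ℕ) : ℝ := T1 u l + T1' u l

lemma Fq_succ (u : ℤ → ℝ) (l : ℕ) : Fq u (l + 1) = -(Bq u l) + Aq u l + Fq u l := by
  simp only [Fq, Aq, Bq, T1, T1', T2, T2']
  ring

noncomputable def gq (k u : ℤ → ℝ) : ℤ × ℤ → ℝ≥0∞ := fun p =>
  ENNReal.ofReal (k p.1 * k p.2 * (u (p.1 + p.2) - u p.1 - u p.2 + u 0) ^ 2)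

section gqlemmas
variable (k u : ℤ → ℝ)

lemma gq_diag (hsym : ∀ j, k (-j) = k j) (l : ℕ) :
    gq k u (3 ^ l, -(3 ^ l)) = ENNReal.ofReal (k (3 ^ l) ^ 2 * Fq u l ^ 2) := by
  simp only [gq]
  rw [show (3:ℤ) ^ l + -(3 ^ l) = 0 by ring, hsym]
  congr 1
  simp only [Fq]; ring

lemma gq_pp (hsym : ∀ j, k (-j) = k j) (l : ℕ) :
    gq k u (3 ^ l, 3 ^ l) = ENNReal.ofReal (k (3 ^ l) ^ 2 * T2 u l ^ 2) := by
  simp only [gq]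
  rw [show (3:ℤ) ^ l + 3 ^ l = 2 * 3 ^ l by ring]
  congr 1
  simp only [T2]; ring

lemma gq_mm (hsym : ∀ j, k (-j) = k j) (l : ℕ) :
    gq k u (-(3 ^ l), -(3 ^ l)) = ENNReal.ofReal (k (3 ^ l) ^ 2 * T2' u l ^ 2) := by
  simp only [gq]
  rw [show -(3:ℤ) ^ l + -(3 ^ l) = -(2 * 3 ^ l) by ring, hsym]
  congr 1
  simp only [T2']; ring

lemma gq_pm (hsym : ∀ j, k (-j) = k j) (l : ℕ) :
    gq k u (3 ^ (l + 1), -(3 ^ l)) =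
      ENNReal.ofReal (k (3 ^ (l + 1)) * k (3 ^ l) * T1 u l ^ 2) := by
  simp only [gq]
  rw [show (3:ℤ) ^ (l + 1) + -(3 ^ l) = 2 * 3 ^ l by ring, hsym]
  congr 1

lemma gq_mp (hsym : ∀ j, k (-j) = k j) (l : ℕ) :
    gq k u (-(3 ^ (l + 1)), 3 ^ l) =
      ENNReal.ofReal (k (3 ^ (l + 1)) * k (3 ^ l) * T1' u l ^ 2) := by
  simp only [gq]
  rw [show -(3:ℤ) ^ (l + 1) + 3 ^ l = -(2 * 3 ^ l) by ring, hsym]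
  congr 1

end gqlemmas

lemma cs_step1 (r C x : ℕ → ℝ≥0∞) (RE : ℝ≥0∞)
    (hr0 : ∀ l, r l ≠ 0) (hrt : ∀ l, r l ≠ ⊤) (hrC : ∀ l, r l * C l = C (l + 1))
    (hrRE : ∀ l, r l ≤ RE) (hsum : ∑' l, r l ≤ RE) :
    (∑' l, C (l + 1) * x l) ^ 2 ≤ RE * (RE * ∑' l, (C l * x l) ^ 2) := by
  have hterm : ∀ l, C (l + 1) * x l
      = r l ^ ((2:ℝ)⁻¹) * (r l ^ ((2:ℝ)⁻¹) * (C l * x l)) := by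
    intro l
    rw [← mul_assoc, ← ENNReal.rpow_add _ _ (hr0 l) (hrt l),
      show (2:ℝ)⁻¹ + (2:ℝ)⁻¹ = 1 by norm_num, ENNReal.rpow_one, ← mul_assoc, hrC l]
  calc (∑' l, C (l + 1) * x l) ^ 2
      = (∑' l, r l ^ ((2:ℝ)⁻¹) * (r l ^ ((2:ℝ)⁻¹) * (C l * x l))) ^ 2 := by
        rw [tsum_congr hterm]
    _ ≤ (∑' l, (r l ^ ((2:ℝ)⁻¹)) ^ 2) * (∑' l, (r l ^ ((2:ℝ)⁻¹) * (C l * x l)) ^ 2) :=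
        ennreal_cs _ _
    _ = (∑' l, r l) * (∑' l, r l * (C l * x l) ^ 2) := by
        rw [tsum_congr (fun l => ennreal_half_sq (r l)),
          tsum_congr (fun l => by rw [mul_pow, ennreal_half_sq] :
            ∀ l, (r l ^ ((2:ℝ)⁻¹) * (C l * x l)) ^ 2 = r l * (C l * x l) ^ 2)]
    _ ≤ RE * (RE * ∑' l, (C l * x l) ^ 2) := by
        refine mul_le_mul' hsum ?_
        rw [← ENNReal.tsum_mul_left]
        exact ENNReal.tsum_le_tsum fun l => mul_le_mul_left (hrRE l) _
    
lemma cs_step2 (r C y : ℕ → ℝ≥0∞) (RE : ℝ≥0∞)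
    (hr0 : ∀ l, r l ≠ 0) (hrt : ∀ l, r l ≠ ⊤) (hrC : ∀ l, r l * C l = C (l + 1))
    (hsum : ∑' l, r l ≤ RE) :
    (∑' l, C (l + 1) * y l) ^ 2 ≤ RE * ∑' l, (C (l + 1) * C l) * y l ^ 2 := by
  have hterm : ∀ l, C (l + 1) * y l
      = r l ^ ((2:ℝ)⁻¹) * ((C (l + 1) * C l) ^ ((2:ℝ)⁻¹) * y l) := by
    intro l
    have h2 : r l * (C (l + 1) * C l) = C (l + 1) ^ 2 := by rw [← hrC l]; ring
    rw [← mul_assoc, ← ENNReal.mul_rpow_of_nonneg _ _ (by norm_num : (0:ℝ) ≤ 2⁻¹), h2,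
      ennreal_sq_half]
  calc (∑' l, C (l + 1) * y l) ^ 2
      = (∑' l, r l ^ ((2:ℝ)⁻¹) * ((C (l + 1) * C l) ^ ((2:ℝ)⁻¹) * y l)) ^ 2 := by
        rw [tsum_congr hterm]
    _ ≤ (∑' l, (r l ^ ((2:ℝ)⁻¹)) ^ 2) * (∑' l, ((C (l + 1) * C l) ^ ((2:ℝ)⁻¹) * y l) ^ 2) :=
        ennreal_cs _ _
    _ = (∑' l, r l) * (∑' l, (C (l + 1) * C l) * y l ^ 2) := by
        rw [tsum_congr (fun l => ennreal_half_sq (r l)),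
          tsum_congr (fun l => by rw [mul_pow, ennreal_half_sq] :
            ∀ l, ((C (l + 1) * C l) ^ ((2:ℝ)⁻¹) * y l) ^ 2 = (C (l + 1) * C l) * y l ^ 2)]
    _ ≤ RE * ∑' l, (C (l + 1) * C l) * y l ^ 2 := mul_le_mul_left hsum _

lemma p3ne {a b : ℕ} : (3:ℤ) ^ a ≠ -3 ^ b := by
  have := p3pos a; have := p3pos b; intro h; omega

lemma inj_pow : Function.Injective (fun l : ℕ => (3:ℤ) ^ l) := fun a b h => p3inj h

lemma inj_npow : Function.Injective (fun l : ℕ => -(3:ℤ) ^ l) := fun a b h => by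
  simp only [neg_inj] at h; exact p3inj h

lemma inj_e2 : Function.Injective
    (fun p : ℕ × Bool => if p.2 then (3:ℤ) ^ p.1 else -(3:ℤ) ^ p.1) := by
  rintro ⟨l, b⟩ ⟨l', b'⟩ h
  cases b <;> cases b' <;> simp only [if_true, if_false, Bool.false_eq_true, Prod.mk.injEq] at h ⊢
  · exact ⟨p3inj (neg_inj.mp h), trivial⟩
  · exact absurd h.symm p3ne
  · exact absurd h p3ne
  · exact ⟨p3inj h, trivial⟩

lemma inj_a : Function.Injective (fun l : ℕ => (((3:ℤ) ^ l, -(3:ℤ) ^ l) : ℤ × ℤ)) := by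
  intro a b h
  simp only [Prod.mk.injEq] at h
  exact p3inj h.1

lemma inj_b : Function.Injective (fun p : ℕ × Bool =>
    if p.2 then (((3:ℤ) ^ p.1, (3:ℤ) ^ p.1) : ℤ × ℤ) else (-(3:ℤ) ^ p.1, -(3:ℤ) ^ p.1)) := by
  rintro ⟨l, b⟩ ⟨l', b'⟩ h
  cases b <;> cases b' <;>
    simp only [if_true, if_false, Bool.false_eq_true, Prod.mk.injEq] at h ⊢
  · exact ⟨p3inj (neg_inj.mp h.1), trivial⟩
  · exact absurd h.1.symm p3ne
  · exact absurd h.1 p3ne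
  · exact ⟨p3inj h.1, trivial⟩

lemma inj_c : Function.Injective (fun p : ℕ × Bool =>
    if p.2 then (((3:ℤ) ^ (p.1 + 1), -(3:ℤ) ^ p.1) : ℤ × ℤ)
    else (-(3:ℤ) ^ (p.1 + 1), (3:ℤ) ^ p.1)) := by
  rintro ⟨l, b⟩ ⟨l', b'⟩ h
  cases b <;> cases b' <;>
    simp only [if_true, if_false, Bool.false_eq_true, Prod.mk.injEq] at h ⊢
  · exact ⟨p3inj h.2, trivial⟩
  · exact absurd h.2 p3ne
  · exact absurd h.2.symm p3ne
  · exact ⟨p3inj (neg_inj.mp h.2), trivial⟩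

lemma sumF (k u : ℤ → ℝ) (hpos : ∀ j, 0 ≤ k j) (hsym : ∀ j, k (-j) = k j)
    (hU : Summable fun j => k j * |u j - u 0|) :
    Summable (fun l : ℕ => k (3 ^ l) * |Fq u l|) := by
  have s1 : Summable (fun l : ℕ => k (3 ^ l) * |u (3 ^ l) - u 0|) :=
    hU.comp_injective inj_pow
  have s2 : Summable (fun l : ℕ => k (-(3 ^ l)) * |u (-(3 ^ l)) - u 0|) :=
    hU.comp_injective inj_npow
  refine Summable.of_nonneg_of_le (fun l => mul_nonneg (hpos _) (abs_nonneg _))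
    (fun l => ?_) (s1.add s2)
  have habs : |Fq u l| ≤ |u (3 ^ l) - u 0| + |u (-(3 ^ l)) - u 0| := by
    rw [show Fq u l = (u (3 ^ l) - u 0) + (u (-(3 ^ l)) - u 0) from by rw [Fq]; ring]
    exact abs_add_le _ _
  calc k (3 ^ l) * |Fq u l|
      ≤ k (3 ^ l) * (|u (3 ^ l) - u 0| + |u (-(3 ^ l)) - u 0|) :=
        mul_le_mul_of_nonneg_left habs (hpos _)
    _ = k (3 ^ l) * |u (3 ^ l) - u 0| + k (-(3 ^ l)) * |u (-(3 ^ l)) - u 0| := by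
        rw [hsym]; ring

lemma lop_eq (k u : ℤ → ℝ) (hpos : ∀ j, 0 ≤ k j) (hsym : ∀ j, k (-j) = k j)
    (hsupp : Function.support k = {j : ℤ | ∃ l : ℕ, j = 3 ^ l ∨ j = -(3 ^ l)})
    (hU : Summable fun j => k j * |u j - u 0|) :
    Lop k u = ∑' l : ℕ, k (3 ^ l) * Fq u l := by
  have h1 : Summable (fun j : ℤ => k j * (u j - u 0)) := by
    refine Summable.of_norm ?_
    refine hU.congr fun j => ?_
    rw [Real.norm_eq_abs, abs_mul, abs_of_nonneg (hpos j)]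
  have hsub : Function.support (fun j : ℤ => k j * (u j - u 0)) ⊆
      Set.range (fun p : ℕ × Bool => if p.2 then (3:ℤ) ^ p.1 else -(3:ℤ) ^ p.1) := by
    intro j hj
    have hk : k j ≠ 0 := by
      intro h0'
      exact hj (by simp [h0'])
    have : j ∈ Function.support k := hk
    rw [hsupp] at this
    obtain ⟨l, hl | hl⟩ := this
    · exact ⟨(l, true), hl.symm⟩
    · exact ⟨(l, false), hl.symm⟩
  rw [Lop, ← inj_e2.tsum_eq hsub]
  have h2 : Summable (fun p : ℕ × Bool =>
      k (if p.2 then (3:ℤ) ^ p.1 else -(3:ℤ) ^ p.1) *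
        (u (if p.2 then (3:ℤ) ^ p.1 else -(3:ℤ) ^ p.1) - u 0)) :=
    (h1.comp_injective inj_e2).congr fun p => rfl
  rw [Summable.tsum_prod' h2 (fun l => Summable.of_finite)]
  refine tsum_congr fun l => ?_
  rw [tsum_bool]
  simp only [if_true, if_false, Bool.false_eq_true]
  rw [hsym, Fq]
  ring

lemma oR_mul_abs_sq (x y : ℝ) (hx : 0 ≤ x) :
    (ENNReal.ofReal x * ENNReal.ofReal |y|) ^ 2 = ENNReal.ofReal (x ^ 2 * y ^ 2) := by
  rw [mul_pow, ← ENNReal.ofReal_pow hx, ← ENNReal.ofReal_pow (abs_nonneg y), sq_abs,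
    ← ENNReal.ofReal_mul (pow_nonneg hx 2)]

lemma oR_two_mul (x : ℝ) : ENNReal.ofReal (2 * x) = 2 * ENNReal.ofReal x := by
  rw [ENNReal.ofReal_mul (by norm_num : (0:ℝ) ≤ 2)]
  norm_num

theorem stmt18 (k : ℤ → ℝ) (hpos : ∀ j, 0 ≤ k j) (hsym : ∀ j, k (-j) = k j)
    (h0 : k 0 = 0) (hsum : Summable k)
    (hsupp : Function.support k = {j : ℤ | ∃ l : ℕ, j = 3 ^ l ∨ j = -(3 ^ l)})
    (hratio : Summable (fun l : ℕ => k (3 ^ (l + 1)) / k (3 ^ l))) :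
    ∃ d : ℝ, 0 < d ∧ ∀ u : ℤ → ℝ, Summable (fun j : ℤ => k j * |u j - u 0|) →
      ENNReal.ofReal ((1 / d) * (Lop k u) ^ 2) ≤ Gamma2e k u := by
  have hkpos : ∀ l : ℕ, 0 < k (3 ^ l) := by
    intro l
    have hmem : (3:ℤ) ^ l ∈ Function.support k := by
      rw [hsupp]; exact ⟨l, Or.inl rfl⟩
    exact lt_of_le_of_ne (hpos _) (Ne.symm hmem)
  set Rr := ∑' l : ℕ, k (3 ^ (l + 1)) / k (3 ^ l) with hRrdef
  have hRr0 : 0 ≤ Rr := tsum_nonneg fun l => div_nonneg (hpos _) (hpos _)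
  refine ⟨36 + 72 * Rr + 108 * Rr ^ 2, by nlinarith [sq_nonneg Rr], ?_⟩
  intro u hU
  set d : ℝ := 36 + 72 * Rr + 108 * Rr ^ 2 with hd
  have hdpos : 0 < d := by rw [hd]; nlinarith [sq_nonneg Rr]
  set C : ℕ → ℝ≥0∞ := fun l => ENNReal.ofReal (k (3 ^ l)) with hCdef
  set G : ℕ → ℝ≥0∞ := fun l => ENNReal.ofReal |Fq u l| with hGdef
  set Al : ℕ → ℝ≥0∞ := fun l => ENNReal.ofReal |Aq u l| with hAldef
  set Bl : ℕ → ℝ≥0∞ := fun l => ENNReal.ofReal |Bq u l| with hBldef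
  set RE : ℝ≥0∞ := ENNReal.ofReal Rr with hREdef
  have hC0 : ∀ l, C l ≠ 0 := fun l => (ENNReal.ofReal_pos.mpr (hkpos l)).ne'
  have hCt : ∀ l, C l ≠ ⊤ := fun l => ENNReal.ofReal_ne_top
  set r : ℕ → ℝ≥0∞ := fun l => C (l + 1) / C l with hrdef
  have hrofReal : ∀ l, r l = ENNReal.ofReal (k (3 ^ (l + 1)) / k (3 ^ l)) := fun l =>
    (ENNReal.ofReal_div_of_pos (hkpos l)).symm
  have hr0 : ∀ l, r l ≠ 0 := fun l => by
    rw [hrofReal]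
    exact (ENNReal.ofReal_pos.mpr (div_pos (hkpos _) (hkpos _))).ne'
  have hrt : ∀ l, r l ≠ ⊤ := fun l => (ENNReal.div_lt_top (hCt _) (hC0 _)).ne
  have hrC : ∀ l, r l * C l = C (l + 1) := fun l => ENNReal.div_mul_cancel (hC0 l) (hCt l)
  have hsumr : ∑' l, r l = RE := by
    rw [tsum_congr hrofReal,
      ← ENNReal.ofReal_tsum_of_nonneg (fun l => div_nonneg (hpos _) (hpos _)) hratio]
  have hrRE : ∀ l, r l ≤ RE := fun l => hsumr ▸ ENNReal.le_tsum l
  -- the Gamma2e bound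
  have h4Γ : ∑' p : ℤ × ℤ, gq k u p = 4 * Gamma2e k u := by
    rw [Gamma2e, ← mul_assoc, show (4:ℝ≥0∞) * (1/4) = 1 from by
      rw [one_div]; exact ENNReal.mul_inv_cancel (by norm_num) (by norm_num), one_mul]
    rfl
  have hI1 : ∑' l : ℕ, (C l * G l) ^ 2 ≤ 4 * Gamma2e k u := by
    rw [← h4Γ]
    have heq : ∀ l : ℕ, (C l * G l) ^ 2 = gq k u ((3:ℤ) ^ l, -(3:ℤ) ^ l) := by
      intro l
      rw [hCdef, hGdef]
      simp only
      rw [oR_mul_abs_sq _ _ (hpos _), gq_diag k u hsym l]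
    rw [tsum_congr heq]
    exact ENNReal.tsum_comp_le_tsum_of_injective inj_a _
  have hI2 : ∑' l : ℕ, (C l * Al l) ^ 2 ≤ 8 * Gamma2e k u := by
    have hpt : ∀ l : ℕ, (C l * Al l) ^ 2 ≤
        2 * (gq k u (-(3:ℤ) ^ l, -(3:ℤ) ^ l) + gq k u ((3:ℤ) ^ l, (3:ℤ) ^ l)) := by
      intro l
      rw [hCdef, hAldef]
      simp only
      rw [oR_mul_abs_sq _ _ (hpos _), gq_pp k u hsym l, gq_mm k u hsym l]
      calc ENNReal.ofReal (k (3 ^ l) ^ 2 * Aq u l ^ 2)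
          ≤ ENNReal.ofReal (2 * (k (3 ^ l) ^ 2 * T2' u l ^ 2)
              + 2 * (k (3 ^ l) ^ 2 * T2 u l ^ 2)) := by
            refine ENNReal.ofReal_le_ofReal ?_
            have : Aq u l ^ 2 ≤ 2 * T2 u l ^ 2 + 2 * T2' u l ^ 2 := by
              rw [Aq]; nlinarith [sq_nonneg (T2 u l - T2' u l)]
            nlinarith [sq_nonneg (k (3 ^ l))]
        _ ≤ ENNReal.ofReal (2 * (k (3 ^ l) ^ 2 * T2' u l ^ 2))
              + ENNReal.ofReal (2 * (k (3 ^ l) ^ 2 * T2 u l ^ 2)) :=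
            ENNReal.ofReal_add_le
        _ = 2 * (ENNReal.ofReal (k (3 ^ l) ^ 2 * T2' u l ^ 2)
              + ENNReal.ofReal (k (3 ^ l) ^ 2 * T2 u l ^ 2)) := by
            rw [oR_two_mul, oR_two_mul]; ring
    calc ∑' l : ℕ, (C l * Al l) ^ 2
        ≤ ∑' l : ℕ, 2 * (gq k u (-(3:ℤ) ^ l, -(3:ℤ) ^ l) + gq k u ((3:ℤ) ^ l, (3:ℤ) ^ l)) :=
          ENNReal.tsum_le_tsum hpt
      _ = 2 * ∑' l : ℕ, (gq k u (-(3:ℤ) ^ l, -(3:ℤ) ^ l) + gq k u ((3:ℤ) ^ l, (3:ℤ) ^ l)) :=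
          ENNReal.tsum_mul_left
      _ = 2 * ∑' p : ℕ × Bool, gq k u (if p.2 then ((3:ℤ) ^ p.1, (3:ℤ) ^ p.1)
            else (-(3:ℤ) ^ p.1, -(3:ℤ) ^ p.1)) := by
          rw [ENNReal.tsum_prod']
          congr 1
          refine tsum_congr fun l => ?_
          rw [tsum_bool]
          simp
      _ ≤ 2 * ∑' p : ℤ × ℤ, gq k u p := by
          refine mul_le_mul_right ?_ 2
          exact ENNReal.tsum_comp_le_tsum_of_injective inj_b _
      _ = 8 * Gamma2e k u := by rw [h4Γ]; ring
  have hI3 : ∑' l : ℕ, (C (l + 1) * C l) * Bl l ^ 2 ≤ 8 * Gamma2e k u := by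
    have hpt : ∀ l : ℕ, (C (l + 1) * C l) * Bl l ^ 2 ≤
        2 * (gq k u (-(3:ℤ) ^ (l + 1), (3:ℤ) ^ l) + gq k u ((3:ℤ) ^ (l + 1), -(3:ℤ) ^ l)) := by
      intro l
      rw [hCdef, hBldef]
      simp only
      rw [← ENNReal.ofReal_mul (hpos _), ← ENNReal.ofReal_pow (abs_nonneg _), sq_abs,
        ← ENNReal.ofReal_mul (mul_nonneg (hpos _) (hpos _)),
        gq_pm k u hsym l, gq_mp k u hsym l]
      calc ENNReal.ofReal (k (3 ^ (l + 1)) * k (3 ^ l) * Bq u l ^ 2)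
          ≤ ENNReal.ofReal (2 * (k (3 ^ (l + 1)) * k (3 ^ l) * T1' u l ^ 2)
              + 2 * (k (3 ^ (l + 1)) * k (3 ^ l) * T1 u l ^ 2)) := by
            refine ENNReal.ofReal_le_ofReal ?_
            have h1 : Bq u l ^ 2 ≤ 2 * T1 u l ^ 2 + 2 * T1' u l ^ 2 := by
              rw [Bq]; nlinarith [sq_nonneg (T1 u l - T1' u l)]
            have h2 : 0 ≤ k (3 ^ (l + 1)) * k (3 ^ l) := mul_nonneg (hpos _) (hpos _)
            nlinarith
        _ ≤ ENNReal.ofReal (2 * (k (3 ^ (l + 1)) * k (3 ^ l) * T1' u l ^ 2))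
              + ENNReal.ofReal (2 * (k (3 ^ (l + 1)) * k (3 ^ l) * T1 u l ^ 2)) :=
            ENNReal.ofReal_add_le
        _ = 2 * (ENNReal.ofReal (k (3 ^ (l + 1)) * k (3 ^ l) * T1' u l ^ 2)
              + ENNReal.ofReal (k (3 ^ (l + 1)) * k (3 ^ l) * T1 u l ^ 2)) := by
            rw [oR_two_mul, oR_two_mul]; ring
    calc ∑' l : ℕ, (C (l + 1) * C l) * Bl l ^ 2
        ≤ ∑' l : ℕ, 2 * (gq k u (-(3:ℤ) ^ (l + 1), (3:ℤ) ^ l)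
            + gq k u ((3:ℤ) ^ (l + 1), -(3:ℤ) ^ l)) := ENNReal.tsum_le_tsum hpt
      _ = 2 * ∑' l : ℕ, (gq k u (-(3:ℤ) ^ (l + 1), (3:ℤ) ^ l)
            + gq k u ((3:ℤ) ^ (l + 1), -(3:ℤ) ^ l)) := ENNReal.tsum_mul_left
      _ = 2 * ∑' p : ℕ × Bool, gq k u (if p.2 then ((3:ℤ) ^ (p.1 + 1), -(3:ℤ) ^ p.1)
            else (-(3:ℤ) ^ (p.1 + 1), (3:ℤ) ^ p.1)) := by
          rw [ENNReal.tsum_prod']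
          congr 1
          refine tsum_congr fun l => ?_
          rw [tsum_bool]
          simp
      _ ≤ 2 * ∑' p : ℤ × ℤ, gq k u p := by
          refine mul_le_mul_right ?_ 2
          exact ENNReal.tsum_comp_le_tsum_of_injective inj_c _
      _ = 8 * Gamma2e k u := by rw [h4Γ]; ring
  -- bounding |Lop|
  have hT : ENNReal.ofReal |Lop k u| ≤ ∑' l : ℕ, C l * G l := by
    have habs : |Lop k u| ≤ ∑' l : ℕ, k (3 ^ l) * |Fq u l| := by
      rw [lop_eq k u hpos hsym hsupp hU]
      have hnorm : Summable fun l : ℕ => ‖k (3 ^ l) * Fq u l‖ := by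
        refine (sumF k u hpos hsym hU).congr fun l => ?_
        rw [Real.norm_eq_abs, abs_mul, abs_of_nonneg (hpos _)]
      calc |∑' l : ℕ, k (3 ^ l) * Fq u l| ≤ ∑' l : ℕ, ‖k (3 ^ l) * Fq u l‖ := by
            rw [← Real.norm_eq_abs]
            exact norm_tsum_le_tsum_norm hnorm
        _ = ∑' l : ℕ, k (3 ^ l) * |Fq u l| := tsum_congr fun l => by
            rw [Real.norm_eq_abs, abs_mul, abs_of_nonneg (hpos _)]
    calc ENNReal.ofReal |Lop k u| ≤ ENNReal.ofReal (∑' l : ℕ, k (3 ^ l) * |Fq u l|) :=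
          ENNReal.ofReal_le_ofReal habs
      _ = ∑' l : ℕ, ENNReal.ofReal (k (3 ^ l) * |Fq u l|) :=
          ENNReal.ofReal_tsum_of_nonneg (fun l => mul_nonneg (hpos _) (abs_nonneg _))
            (sumF k u hpos hsym hU)
      _ = ∑' l : ℕ, C l * G l := tsum_congr fun l => ENNReal.ofReal_mul (hpos _)
  -- recursion
  have hrec : ∀ l : ℕ, G (l + 1) ≤ Bl l + Al l + G l := by
    intro l
    have habs : |Fq u (l + 1)| ≤ |Bq u l| + |Aq u l| + |Fq u l| := by
      rw [Fq_succ]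
      calc |(-(Bq u l) + Aq u l) + Fq u l| ≤ |(-(Bq u l) + Aq u l)| + |Fq u l| := abs_add_le _ _
        _ ≤ (|(-(Bq u l))| + |Aq u l|) + |Fq u l| := by gcongr; exact abs_add_le _ _
        _ = |Bq u l| + |Aq u l| + |Fq u l| := by rw [abs_neg]
    rw [hGdef, hBldef, hAldef]
    simp only
    calc ENNReal.ofReal |Fq u (l + 1)| ≤ ENNReal.ofReal (|Bq u l| + |Aq u l| + |Fq u l|) :=
          ENNReal.ofReal_le_ofReal habs
      _ = ENNReal.ofReal |Bq u l| + ENNReal.ofReal |Aq u l| + ENNReal.ofReal |Fq u l| := by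
          rw [ENNReal.ofReal_add (by positivity) (abs_nonneg _),
            ENNReal.ofReal_add (abs_nonneg _) (abs_nonneg _)]
  -- assembling
  set T : ℝ≥0∞ := ∑' l : ℕ, C l * G l with hTdef
  have hsplit : T ≤ C 0 * G 0 + ((∑' l : ℕ, C (l + 1) * Bl l) + (∑' l : ℕ, C (l + 1) * Al l)
      + (∑' l : ℕ, C (l + 1) * G l)) := by
    rw [hTdef, tsum_eq_zero_add' ENNReal.summable]
    refine add_le_add_right ?_ _
    calc ∑' l : ℕ, C (l + 1) * G (l + 1)
        ≤ ∑' l : ℕ, (C (l + 1) * Bl l + C (l + 1) * Al l + C (l + 1) * G l) := by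
          refine ENNReal.tsum_le_tsum fun l => ?_
          rw [← mul_add, ← mul_add]
          exact mul_le_mul_right (hrec l) _
      _ = (∑' l : ℕ, C (l + 1) * Bl l) + (∑' l : ℕ, C (l + 1) * Al l)
            + (∑' l : ℕ, C (l + 1) * G l) := by
          rw [ENNReal.tsum_add, ENNReal.tsum_add]
  have hY0 : (C 0 * G 0) ^ 2 ≤ 4 * Gamma2e k u :=
    le_trans (ENNReal.le_tsum 0) hI1
  have hX2 : (∑' l : ℕ, C (l + 1) * Bl l) ^ 2 ≤ RE * (8 * Gamma2e k u) :=
    le_trans (cs_step2 r C Bl RE hr0 hrt hrC hsumr.le) (mul_le_mul_right hI3 RE)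
  have hX3 : (∑' l : ℕ, C (l + 1) * Al l) ^ 2 ≤ RE * (RE * (8 * Gamma2e k u)) :=
    le_trans (cs_step1 r C Al RE hr0 hrt hrC hrRE hsumr.le)
      (mul_le_mul_right (mul_le_mul_right hI2 RE) RE)
  have hX1 : (∑' l : ℕ, C (l + 1) * G l) ^ 2 ≤ RE * (RE * (4 * Gamma2e k u)) :=
    le_trans (cs_step1 r C G RE hr0 hrt hrC hrRE hsumr.le)
      (mul_le_mul_right (mul_le_mul_right hI1 RE) RE)
  have hDre : ENNReal.ofReal d = 36 + 72 * RE + 108 * RE ^ 2 := by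
    rw [hd, hREdef, ENNReal.ofReal_add (by positivity) (by positivity),
      ENNReal.ofReal_add (by norm_num) (by positivity),
      ENNReal.ofReal_mul (by norm_num : (0:ℝ) ≤ 72),
      ENNReal.ofReal_mul (by norm_num : (0:ℝ) ≤ 108),
      ENNReal.ofReal_pow hRr0]
    norm_num
  have hfinal : T ^ 2 ≤ ENNReal.ofReal d * Gamma2e k u := by
    calc T ^ 2 ≤ (C 0 * G 0 + ((∑' l : ℕ, C (l + 1) * Bl l) + (∑' l : ℕ, C (l + 1) * Al l)
          + (∑' l : ℕ, C (l + 1) * G l))) ^ 2 := pow_le_pow_left' hsplit 2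
      _ ≤ 9 * (C 0 * G 0) ^ 2 + 9 * (∑' l : ℕ, C (l + 1) * Bl l) ^ 2
            + 9 * (∑' l : ℕ, C (l + 1) * Al l) ^ 2
            + 9 * (∑' l : ℕ, C (l + 1) * G l) ^ 2 := ennreal_add4_sq_le _ _ _ _
      _ ≤ 9 * (4 * Gamma2e k u) + 9 * (RE * (8 * Gamma2e k u))
            + 9 * (RE * (RE * (8 * Gamma2e k u)))
            + 9 * (RE * (RE * (4 * Gamma2e k u))) := by
          gcongr
      _ = (36 + 72 * RE + 108 * RE ^ 2) * Gamma2e k u := by ring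
      _ = ENNReal.ofReal d * Gamma2e k u := by rw [hDre]
  -- conclusion
  have hL2 : ENNReal.ofReal ((Lop k u) ^ 2) ≤ T ^ 2 := by
    rw [← sq_abs, ENNReal.ofReal_pow (abs_nonneg _)]
    exact pow_le_pow_left' hT 2
  calc ENNReal.ofReal ((1 / d) * (Lop k u) ^ 2)
      = ENNReal.ofReal (1 / d) * ENNReal.ofReal ((Lop k u) ^ 2) :=
        ENNReal.ofReal_mul (by positivity)
    _ ≤ ENNReal.ofReal (1 / d) * (ENNReal.ofReal d * Gamma2e k u) :=
        mul_le_mul_right (le_trans hL2 hfinal) _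
    _ = (ENNReal.ofReal (1 / d) * ENNReal.ofReal d) * Gamma2e k u := by rw [mul_assoc]
    _ = Gamma2e k u := by
        rw [← ENNReal.ofReal_mul (by positivity), one_div_mul_cancel hdpos.ne',
          ENNReal.ofReal_one, one_mul]
end

section
/- Let k : ℤ → [0,∞) be symmetric, summable, k(0)=0, with unbounded support S, and assume: (i) there is N ∈ ℕ₀ such that for all j,l ∈ S with max(|j|,|l|) > N one has j+l ∉ S; (ii) every integer m > 2N admits at most one decomposition m = j+l with j,l ∈ S; (iii) every integer m with 1 ≤ m ≤ 2N admits at most finitely many decompositions m = j+l with j,l ∈ S. Then for every finite d > 0 there exists a finitely supported function u : ℤ → ℝ with Γ₂(u)(0) < (1/d)·(ℒu(0))²; i.e. CD(0,d) fails at 0 for all finite d. -/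
open scoped ENNReal

/-! ### Auxiliary construction -/

open Classical in
/-- the "multiplicity of `±f`" in the canonical representation of `m`. -/
noncomputable def efn (k : ℤ → ℝ) (R f m : ℤ) : ℝ :=
  (if k (m - f) ≠ 0 ∧ |m - f| ≤ R ∧ m ≠ 0 then 1 else 0)
  + (if k (m + f) ≠ 0 ∧ |m + f| ≤ R ∧ m ≠ 0 then 1 else 0)
  + (if m = f ∨ m = -f ∨ m = 2*f ∨ m = -2*f then 1 else 0)

/-- the counterexample function. -/
noncomputable def ufn (k : ℤ → ℝ) (R : ℤ) (F : Finset ℤ) (m : ℤ) : ℝ :=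
  ∑ f ∈ F, (k f)⁻¹ * efn k R f m

/-- membership in `±F`. -/
def inF (F : Finset ℤ) (x : ℤ) : Prop := ∃ f ∈ F, x = f ∨ x = -f

/-- The context of the construction. -/
structure Ctx (k : ℤ → ℝ) (N : ℕ) (F : Finset ℤ) (R : ℤ) : Prop where
  pos : ∀ j, 0 ≤ k j
  sym : ∀ j, k (-j) = k j
  zero : k 0 = 0
  hi : ∀ j l : ℤ, k j ≠ 0 → k l ≠ 0 → (N:ℤ) < max |j| |l| → k (j + l) = 0
  uniq : ∀ a b a' b' : ℤ, k a ≠ 0 → k b ≠ 0 → k a' ≠ 0 → k b' ≠ 0 →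
      a + b = a' + b' → 2*(N:ℤ) < |a + b| → (a = a' ∧ b = b') ∨ (a = b' ∧ b = a')
  memF : ∀ f ∈ F, k f ≠ 0 ∧ 2*(N:ℤ) < f ∧ ∀ s, k s ≠ 0 → |f + s| ≤ 2*(N:ℤ) → s = -f
  hRF : ∀ f ∈ F, f + 2*(N:ℤ) < R

namespace Ctx

variable {k : ℤ → ℝ} {N : ℕ} {F : Finset ℤ} {R : ℤ} (hc : Ctx k N F R)

include hc

lemma hN0 : (0:ℤ) ≤ 2*(N:ℤ) := by positivity

lemma negne {a : ℤ} (ha : k a ≠ 0) : k (-a) ≠ 0 := by rw [hc.sym]; exact ha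

lemma fpos {f : ℤ} (hf : f ∈ F) : 0 < f := by
  have h1 := (hc.memF f hf).2.1
  have h2 := hc.hN0
  omega

lemma fR {f : ℤ} (hf : f ∈ F) : f ≤ R := by
  have h1 := hc.hRF f hf
  have h2 := hc.hN0
  omega

lemma sum_ne {a b : ℤ} (ha : k a ≠ 0) (hb : k b ≠ 0) (h : 2*(N:ℤ) < |a + b|) :
    k (a + b) = 0 := by
  rcases le_or_gt (max |a| |b|) (N:ℤ) with h' | h'
  · exfalso
    have h1 : |a| ≤ (N:ℤ) := le_trans (le_max_left _ _) h'
    have h2 : |b| ≤ (N:ℤ) := le_trans (le_max_right _ _) h'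
    have h3 := abs_add_le a b
    linarith
  · exact hc.hi a b ha hb h'

lemma k2f {f : ℤ} (hf : k f ≠ 0) (hNf : (N:ℤ) < f) : k (2*f) = 0 := by
  have h0 : (0:ℤ) ≤ (N:ℤ) := Int.ofNat_nonneg N
  have h := hc.hi f f hf hf (by rw [max_self, abs_of_pos (by omega)]; exact hNf)
  rw [show f + f = 2*f by ring] at h
  exact h

lemma e_small {f : ℤ} (hfF : f ∈ F) {m : ℤ} (hm : |m| ≤ 2*(N:ℤ)) : efn k R f m = 0 := by
  obtain ⟨hkf, hNf, hiso⟩ := hc.memF f hfF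
  have hf0 : 0 < f := hc.fpos hfF
  have hn1 : ¬(k (m - f) ≠ 0 ∧ |m - f| ≤ R ∧ m ≠ 0) := by
    rintro ⟨h1, -, h3⟩
    have h4 := hiso (m - f) h1 (by rw [show f + (m - f) = m by ring]; exact hm)
    omega
  have hn2 : ¬(k (m + f) ≠ 0 ∧ |m + f| ≤ R ∧ m ≠ 0) := by
    rintro ⟨h1, -, h3⟩
    have h4 := hiso (-(m + f)) (hc.negne h1)
      (by rw [show f + -(m + f) = -m by ring, abs_neg]; exact hm)
    omega
  have hn3 : ¬(m = f ∨ m = -f ∨ m = 2*f ∨ m = -2*f) := by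
    rintro (h | h | h | h) <;> subst h <;> rw [abs_le] at hm <;> omega
  rw [efn, if_neg hn1, if_neg hn2, if_neg hn3]
  norm_num

lemma u_small {m : ℤ} (hm : |m| ≤ 2*(N:ℤ)) : ufn k R F m = 0 :=
  Finset.sum_eq_zero fun f hf => by rw [hc.e_small hf hm, mul_zero]

lemma u_zero : ufn k R F 0 = 0 := hc.u_small (by simpa using hc.hN0)

lemma e_on_S {f : ℤ} (hfF : f ∈ F) {a : ℤ} (ha : k a ≠ 0) :
    efn k R f a = if a = f ∨ a = -f then 1 else 0 := by
  obtain ⟨hkf, hNf, -⟩ := hc.memF f hfF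
  have hf0 : 0 < f := hc.fpos hfF
  have hfN : (N:ℤ) < |f| := by
    rw [abs_of_pos hf0]; have := hc.hN0; omega
  have hn1 : ¬(k (a - f) ≠ 0 ∧ |a - f| ≤ R ∧ a ≠ 0) := by
    rintro ⟨h1, -, -⟩
    have h2 := hc.hi f (a - f) hkf h1 (lt_of_lt_of_le hfN (le_max_left _ _))
    rw [show f + (a - f) = a by ring] at h2
    exact ha h2
  have hn2 : ¬(k (a + f) ≠ 0 ∧ |a + f| ≤ R ∧ a ≠ 0) := by
    rintro ⟨h1, -, -⟩
    have h2 := hc.hi (-f) (a + f) (hc.negne hkf) h1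
      (by rw [abs_neg]; exact lt_of_lt_of_le hfN (le_max_left _ _))
    rw [show -f + (a + f) = a by ring] at h2
    exact ha h2
  have h2f : k (2*f) = 0 := hc.k2f hkf (by omega)
  have h2f' : k (-2*f) = 0 := by rw [show (-2*f : ℤ) = -(2*f) by ring, hc.sym]; exact h2f
  rw [efn, if_neg hn1, if_neg hn2]
  by_cases hm : a = f ∨ a = -f
  · rw [if_pos (by tauto), if_pos hm]; norm_num
  · rw [if_neg hm, if_neg ?_]
    · norm_num
    rintro (h | h | h | h)
    · exact hm (Or.inl h)
    · exact hm (Or.inr h)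
    · rw [h] at ha; exact ha h2f
    · rw [h] at ha; exact ha h2f'

lemma u_S {a : ℤ} (ha : k a ≠ 0) :
    ufn k R F a = ∑ f ∈ F, (k f)⁻¹ * (if a = f ∨ a = -f then 1 else 0) :=
  Finset.sum_congr rfl fun f hf => by rw [hc.e_on_S hf ha]

lemma u_F {f : ℤ} (hf : f ∈ F) : ufn k R F f = (k f)⁻¹ := by
  rw [hc.u_S (hc.memF f hf).1, Finset.sum_eq_single f]
  · rw [if_pos (Or.inl rfl), mul_one]
  · intro g hg hgf
    rw [if_neg ?_, mul_zero]
    have h1 := hc.fpos hf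
    have h2 := hc.fpos hg
    rintro (h | h) <;> omega
  · intro h; exact absurd hf h

lemma u_negF {f : ℤ} (hf : f ∈ F) : ufn k R F (-f) = (k f)⁻¹ := by
  have hkf := (hc.memF f hf).1
  rw [hc.u_S (hc.negne hkf), Finset.sum_eq_single f]
  · rw [if_pos (Or.inr rfl), mul_one]
  · intro g hg hgf
    rw [if_neg ?_, mul_zero]
    have h1 := hc.fpos hf
    have h2 := hc.fpos hg
    rintro (h | h) <;> omega
  · intro h; exact absurd hf h

lemma u_S0 {a : ℤ} (ha : k a ≠ 0) (h : ¬ inF F a) : ufn k R F a = 0 := by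
  rw [hc.u_S ha]
  refine Finset.sum_eq_zero fun f hf => ?_
  rw [if_neg (fun hcon => h ⟨f, hf, hcon⟩), mul_zero]

lemma inF_props {a : ℤ} (h : inF F a) :
    k a ≠ 0 ∧ 2*(N:ℤ) < |a| ∧ |a| + 2*(N:ℤ) < R ∧
      ufn k R F a = (k a)⁻¹ ∧ ufn k R F (-a) = (k a)⁻¹ := by
  obtain ⟨f, hf, hcase⟩ := h
  obtain ⟨hkf, hNf, -⟩ := hc.memF f hf
  have hf0 : 0 < f := hc.fpos hf
  have hfR := hc.hRF f hf
  rcases hcase with h | h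
  · subst h
    exact ⟨hkf, by rwa [abs_of_pos hf0], by rw [abs_of_pos hf0]; omega,
      hc.u_F hf, hc.u_negF hf⟩
  · subst h
    refine ⟨hc.negne hkf, ?_, ?_, ?_, ?_⟩
    · rwa [abs_neg, abs_of_pos hf0]
    · rw [abs_neg, abs_of_pos hf0]; omega
    · rw [hc.u_negF hf, hc.sym]
    · rw [neg_neg, hc.u_F hf, hc.sym]

lemma inF_neg {a : ℤ} (h : inF F a) : inF F (-a) := by
  obtain ⟨f, hf, hcase⟩ := h
  rcases hcase with h | h
  · exact ⟨f, hf, Or.inr (by omega)⟩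
  · exact ⟨f, hf, Or.inl (by omega)⟩

/-- The fundamental evaluation for `efn` on sums far from zero. -/
lemma e_eval {f : ℤ} (hfF : f ∈ F) {a b : ℤ} (ha : k a ≠ 0) (hb : k b ≠ 0)
    (hm2N : 2*(N:ℤ) < |a + b|) :
    efn k R f (a + b) =
      (if (a = f ∧ |b| ≤ R) ∨ (b = f ∧ |a| ≤ R) then 1 else 0)
      + (if (a = -f ∧ |b| ≤ R) ∨ (b = -f ∧ |a| ≤ R) then 1 else 0)
      + (if (a = f ∧ b = f) ∨ (a = -f ∧ b = -f) then 1 else 0) := by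
  obtain ⟨hkf, hNf, -⟩ := hc.memF f hfF
  have hf0 : 0 < f := hc.fpos hfF
  have hm0 : a + b ≠ 0 := by
    intro h; rw [h] at hm2N; simp at hm2N; have := hc.hN0; omega
  have hkm : k (a + b) = 0 := hc.sum_ne ha hb hm2N
  have hkf' : k (-f) ≠ 0 := hc.negne hkf
  have hiff1 : (k (a + b - f) ≠ 0 ∧ |a + b - f| ≤ R ∧ a + b ≠ 0) ↔
      ((a = f ∧ |b| ≤ R) ∨ (b = f ∧ |a| ≤ R)) := by
    constructor
    · rintro ⟨h1, h2, -⟩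
      rcases hc.uniq f (a + b - f) a b hkf h1 ha hb (by ring)
        (by rw [show f + (a + b - f) = a + b by ring]; exact hm2N) with ⟨hfa, hrest⟩ | ⟨hfb, hrest⟩
      · left; rw [hrest] at h2; exact ⟨hfa.symm, h2⟩
      · right; rw [hrest] at h2; exact ⟨hfb.symm, h2⟩
    · rintro (⟨hab, hbR⟩ | ⟨hab, haR⟩)
      · have e : a + b - f = b := by rw [hab]; ring
        rw [e]; exact ⟨hb, hbR, hm0⟩
      · have e : a + b - f = a := by rw [hab]; ring
        rw [e]; exact ⟨ha, haR, hm0⟩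
  have hiff2 : (k (a + b + f) ≠ 0 ∧ |a + b + f| ≤ R ∧ a + b ≠ 0) ↔
      ((a = -f ∧ |b| ≤ R) ∨ (b = -f ∧ |a| ≤ R)) := by
    constructor
    · rintro ⟨h1, h2, -⟩
      rcases hc.uniq (-f) (a + b + f) a b hkf' h1 ha hb (by ring)
        (by rw [show -f + (a + b + f) = a + b by ring]; exact hm2N) with ⟨hfa, hrest⟩ | ⟨hfb, hrest⟩
      · left; rw [hrest] at h2; exact ⟨hfa.symm, h2⟩
      · right; rw [hrest] at h2; exact ⟨hfb.symm, h2⟩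
    · rintro (⟨hab, hbR⟩ | ⟨hab, haR⟩)
      · have e : a + b + f = b := by rw [hab]; ring
        rw [e]; exact ⟨hb, hbR, hm0⟩
      · have e : a + b + f = a := by rw [hab]; ring
        rw [e]; exact ⟨ha, haR, hm0⟩
  have hiff3 : (a + b = f ∨ a + b = -f ∨ a + b = 2*f ∨ a + b = -2*f) ↔
      ((a = f ∧ b = f) ∨ (a = -f ∧ b = -f)) := by
    constructor
    · rintro (h | h | h | h)
      · exfalso; rw [h] at hkm; exact hkf hkm
      · exfalso; rw [h] at hkm; exact hkf' hkm
      · rcases hc.uniq f f a b hkf hkf ha hb (by omega)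
          (by rw [show f + f = a + b by omega]; exact hm2N) with ⟨h1, h2⟩ | ⟨h1, h2⟩
        · exact Or.inl ⟨h1.symm, h2.symm⟩
        · exact Or.inl ⟨h2.symm, h1.symm⟩
      · rcases hc.uniq (-f) (-f) a b hkf' hkf' ha hb (by omega)
          (by rw [show -f + -f = a + b by omega]; exact hm2N) with ⟨h1, h2⟩ | ⟨h1, h2⟩
        · exact Or.inr ⟨h1.symm, h2.symm⟩
        · exact Or.inr ⟨h2.symm, h1.symm⟩
    · rintro (⟨h1, h2⟩ | ⟨h1, h2⟩)
      · right; right; left; omega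
      · right; right; right; omega
  rw [efn, if_congr hiff1 rfl rfl, if_congr hiff2 rfl rfl, if_congr hiff3 rfl rfl]

/-- Additivity of `u` away from the bad sets. -/
lemma u_add {a b : ℤ} (ha : k a ≠ 0) (hb : k b ≠ 0)
    (h1 : ¬(a + b = 0 ∧ inF F a)) (h2 : ¬(inF F a ∧ R < |b|)) (h3 : ¬(inF F b ∧ R < |a|)) :
    ufn k R F (a + b) = ufn k R F a + ufn k R F b := by
  rcases le_or_gt |a + b| (2*(N:ℤ)) with hm | hm
  · -- small case : all three vanish
    rw [hc.u_small hm]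
    have hnA : ¬ inF F a := by
      intro hA
      obtain ⟨f, hf, hcase⟩ := hA
      obtain ⟨hkf, hNf, hiso⟩ := hc.memF f hf
      rcases hcase with h | h
      · have hb' := hiso b hb (by rw [show f + b = a + b by omega]; exact hm)
        exact h1 ⟨by omega, ⟨f, hf, Or.inl h⟩⟩
      · have hb' := hiso (-b) (hc.negne hb)
          (by rw [show f + -b = -(a + b) by omega, abs_neg]; exact hm)
        exact h1 ⟨by omega, ⟨f, hf, Or.inr h⟩⟩
    have hnB : ¬ inF F b := by
      intro hB
      obtain ⟨f, hf, hcase⟩ := hB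
      obtain ⟨hkf, hNf, hiso⟩ := hc.memF f hf
      rcases hcase with h | h
      · have ha' := hiso a ha (by rw [show f + a = a + b by omega]; exact hm)
        exact h1 ⟨by omega, ⟨f, hf, Or.inr ha'⟩⟩
      · have ha' := hiso (-a) (hc.negne ha)
          (by rw [show f + -a = -(a + b) by omega, abs_neg]; exact hm)
        exact h1 ⟨by omega, ⟨f, hf, Or.inl (by omega)⟩⟩
    rw [hc.u_S0 ha hnA, hc.u_S0 hb hnB]; ring
  · -- large case
    have hm0 : a + b ≠ 0 := by
      intro h; rw [h] at hm; simp at hm; have := hc.hN0; omega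
    rw [hc.u_S ha, hc.u_S hb, ← Finset.sum_add_distrib]
    refine Finset.sum_congr rfl fun f hf => ?_
    rw [hc.e_eval hf ha hb hm]
    rw [← mul_add]
    congr 1
    have hf0 : 0 < f := hc.fpos hf
    have hBa : a = f ∨ a = -f → |b| ≤ R := by
      intro h
      by_contra hR
      exact h2 ⟨⟨f, hf, h⟩, lt_of_not_ge hR⟩
    have hBb : b = f ∨ b = -f → |a| ≤ R := by
      intro h
      by_contra hR
      exact h3 ⟨⟨f, hf, h⟩, lt_of_not_ge hR⟩
    by_cases hA1 : a = f
    · by_cases hB1 : b = f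
      · rw [if_pos (Or.inl ⟨hA1, hBa (Or.inl hA1)⟩),
          if_neg (by rintro (⟨h, -⟩ | ⟨h, -⟩) <;> omega),
          if_pos (Or.inl ⟨hA1, hB1⟩), if_pos (Or.inl hA1), if_pos (Or.inl hB1)]
        norm_num
      · by_cases hB2 : b = -f
        · exfalso; omega
        · rw [if_pos (Or.inl ⟨hA1, hBa (Or.inl hA1)⟩),
            if_neg (by rintro (⟨h, -⟩ | ⟨h, -⟩) <;> omega),
            if_neg (by rintro (⟨-, h⟩ | ⟨h, -⟩) <;> omega),
            if_pos (Or.inl hA1), if_neg (by rintro (h | h) <;> omega)]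
          norm_num
    · by_cases hA2 : a = -f
      · by_cases hB2 : b = -f
        · rw [if_neg (by rintro (⟨h, -⟩ | ⟨h, -⟩) <;> omega),
            if_pos (Or.inl ⟨hA2, hBa (Or.inr hA2)⟩),
            if_pos (Or.inr ⟨hA2, hB2⟩), if_pos (Or.inr hA2), if_pos (Or.inr hB2)]
          norm_num
        · by_cases hB1 : b = f
          · exfalso; omega
          · rw [if_neg (by rintro (⟨h, -⟩ | ⟨h, -⟩) <;> omega),
              if_pos (Or.inl ⟨hA2, hBa (Or.inr hA2)⟩),
              if_neg (by rintro (⟨h, -⟩ | ⟨-, h⟩) <;> omega),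
              if_pos (Or.inr hA2), if_neg (by rintro (h | h) <;> omega)]
            norm_num
      · by_cases hB1 : b = f
        · rw [if_pos (Or.inr ⟨hB1, hBb (Or.inl hB1)⟩),
            if_neg (by rintro (⟨h, -⟩ | ⟨h, -⟩) <;> omega),
            if_neg (by rintro (⟨h, -⟩ | ⟨h, -⟩) <;> omega),
            if_neg (by rintro (h | h) <;> omega), if_pos (Or.inl hB1)]
          norm_num
        · by_cases hB2 : b = -f
          · rw [if_neg (by rintro (⟨h, -⟩ | ⟨h, -⟩) <;> omega),
              if_pos (Or.inr ⟨hB2, hBb (Or.inr hB2)⟩),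
              if_neg (by rintro (⟨h, -⟩ | ⟨h, -⟩) <;> omega),
              if_neg (by rintro (h | h) <;> omega), if_pos (Or.inr hB2)]
            norm_num
          · rw [if_neg (by rintro (⟨h, -⟩ | ⟨h, -⟩) <;> omega),
              if_neg (by rintro (⟨h, -⟩ | ⟨h, -⟩) <;> omega),
              if_neg (by rintro (⟨h, -⟩ | ⟨h, -⟩) <;> omega),
              if_neg (by rintro (h | h) <;> omega), if_neg (by rintro (h | h) <;> omega)]
            norm_num

/-- Far-away sums vanish. -/
lemma u_far {a b : ℤ} (ha : k a ≠ 0) (hb : k b ≠ 0) (hA : inF F a) (hbR : R < |b|) :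
    ufn k R F (a + b) = 0 ∧ ufn k R F b = 0 := by
  obtain ⟨-, h2Na, hRa, -, -⟩ := hc.inF_props hA
  have hnB : ¬ inF F b := by
    intro hB
    have := (hc.inF_props hB).2.2.1
    have := hc.hN0
    omega
  constructor
  · refine Finset.sum_eq_zero fun f hf => ?_
    have hm2N : 2*(N:ℤ) < |a + b| := by
      have h5 : |b| ≤ |a + b| + |a| := by
        calc |b| = |(a + b) + (-a)| := by ring_nf
        _ ≤ |a + b| + |(-a)| := abs_add_le _ _
        _ = |a + b| + |a| := by rw [abs_neg]
      omega
    rw [hc.e_eval hf ha hb hm2N]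
    have hf0 : 0 < f := hc.fpos hf
    have hfR : f ≤ R := hc.fR hf
    have habs : ∀ x : ℤ, x = f ∨ x = -f → |x| ≤ R := by
      rintro x (rfl | rfl)
      · rwa [abs_of_pos hf0]
      · rwa [abs_neg, abs_of_pos hf0]
    have hn1 : ¬((a = f ∧ |b| ≤ R) ∨ (b = f ∧ |a| ≤ R)) := by
      rintro (⟨-, h'⟩ | ⟨h, -⟩)
      · omega
      · have := habs b (Or.inl h); omega
    have hn2 : ¬((a = -f ∧ |b| ≤ R) ∨ (b = -f ∧ |a| ≤ R)) := by
      rintro (⟨-, h'⟩ | ⟨h, -⟩)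
      · omega
      · have := habs b (Or.inr h); omega
    have hn3 : ¬((a = f ∧ b = f) ∨ (a = -f ∧ b = -f)) := by
      rintro (⟨-, h⟩ | ⟨-, h⟩)
      · have := habs b (Or.inl h); omega
      · have := habs b (Or.inr h); omega
    rw [if_neg hn1, if_neg hn2, if_neg hn3]
    norm_num
  · exact hc.u_S0 hb hnB

/-- Support bound. -/
lemma u_supp {m : ℤ} (hm : ufn k R F m ≠ 0) : |m| ≤ 2*R := by
  by_contra hM
  push_neg at hM
  apply hm
  refine Finset.sum_eq_zero fun f hf => ?_
  have hf0 : 0 < f := hc.fpos hf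
  have hfR : f ≤ R := hc.fR hf
  have hR0 : 0 < R := by omega
  have hn1 : ¬(k (m - f) ≠ 0 ∧ |m - f| ≤ R ∧ m ≠ 0) := by
    rintro ⟨-, h, -⟩
    have h5 : |m| ≤ |m - f| + |f| := by
      calc |m| = |(m - f) + f| := by ring_nf
      _ ≤ |m - f| + |f| := abs_add_le _ _
    rw [abs_of_pos hf0] at h5
    omega
  have hn2 : ¬(k (m + f) ≠ 0 ∧ |m + f| ≤ R ∧ m ≠ 0) := by
    rintro ⟨-, h, -⟩
    have h5 : |m| ≤ |m + f| + |f| := by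
      calc |m| = |(m + f) + (-f)| := by ring_nf
      _ ≤ |m + f| + |(-f)| := abs_add_le _ _
      _ = |m + f| + |f| := by rw [abs_neg]
    rw [abs_of_pos hf0] at h5
    omega
  have hn3 : ¬(m = f ∨ m = -f ∨ m = 2*f ∨ m = -2*f) := by
    rintro (h | h | h | h) <;> subst h <;> rw [lt_abs] at hM <;> omega
  rw [efn, if_neg hn1, if_neg hn2, if_neg hn3]
  norm_num

end Ctx

theorem stmt19 (k : ℤ → ℝ) (hpos : ∀ j, 0 ≤ k j) (hsym : ∀ j, k (-j) = k j)
    (h0 : k 0 = 0) (hsum : Summable k)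
    (hinf : (Function.support k).Infinite) (N : ℕ)
    (hi : ∀ j l : ℤ, k j ≠ 0 → k l ≠ 0 → (N : ℤ) < max |j| |l| → k (j + l) = 0)
    (hii : ∀ m : ℤ, 2 * (N : ℤ) < m →
      ∀ j l j' l' : ℤ, k j ≠ 0 → k l ≠ 0 → k j' ≠ 0 → k l' ≠ 0 →
        j + l = m → j' + l' = m → (j = j' ∧ l = l') ∨ (j = l' ∧ l = j'))
    (hiii : ∀ m : ℤ, 1 ≤ m → m ≤ 2 * (N : ℤ) →
      {p : ℤ × ℤ | k p.1 ≠ 0 ∧ k p.2 ≠ 0 ∧ p.1 + p.2 = m}.Finite) :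
    ∀ d : ℝ, 0 < d → ∃ u : ℤ → ℝ,
      (Function.support u).Finite ∧ u 0 = 0 ∧
      Gamma2 k u < (1 / d) * (Lop k u) ^ 2 := by
  intro d hd
  classical
  have hN0 : (0:ℤ) ≤ 2*(N:ℤ) := by positivity
  -- uniqueness of decompositions, both signs
  have huniq : ∀ a b a' b' : ℤ, k a ≠ 0 → k b ≠ 0 → k a' ≠ 0 → k b' ≠ 0 →
      a + b = a' + b' → 2*(N:ℤ) < |a + b| → (a = a' ∧ b = b') ∨ (a = b' ∧ b = a') := by
    intro a b a' b' ha hb ha' hb' he habs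
    rcases lt_or_ge (2*(N:ℤ)) (a + b) with hm | hm
    · exact hii (a + b) hm a b a' b' ha hb ha' hb' rfl he.symm
    · have hm' : 2*(N:ℤ) < -(a + b) := by
        rcases abs_cases (a + b) with ⟨h, -⟩ | ⟨h, -⟩ <;> omega
      have hres := hii (-(a + b)) hm' (-a) (-b) (-a') (-b')
        (by rw [hsym]; exact ha) (by rw [hsym]; exact hb)
        (by rw [hsym]; exact ha') (by rw [hsym]; exact hb')
        (by ring) (by rw [he]; ring)
      rcases hres with ⟨h1, h2⟩ | ⟨h1, h2⟩
      · left; omega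
      · right; omega
  -- the set of "close pairs" is finite
  set CP : Set (ℤ × ℤ) :=
    {p | k p.1 ≠ 0 ∧ k p.2 ≠ 0 ∧ p.1 + p.2 ≠ 0 ∧ |p.1 + p.2| ≤ 2*(N:ℤ)} with hCPdef
  have hCP : CP.Finite := by
    have hsub : CP ⊆ ⋃ m ∈ ((Finset.Icc (-(2*(N:ℤ))) (2*(N:ℤ))).erase 0 : Finset ℤ),
        {p : ℤ × ℤ | k p.1 ≠ 0 ∧ k p.2 ≠ 0 ∧ p.1 + p.2 = m} := by
      rintro ⟨x, y⟩ ⟨h1, h2, h3, h4⟩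
      simp only [Set.mem_iUnion]
      refine ⟨x + y, ?_, h1, h2, rfl⟩
      simp only [Finset.mem_coe, Finset.mem_erase, Finset.mem_Icc]
      rw [abs_le] at h4
      exact ⟨h3, h4⟩
    refine Set.Finite.subset (Set.Finite.biUnion (Finset.finite_toSet _) ?_) hsub
    intro m hm
    simp only [Finset.mem_coe, Finset.mem_erase, Finset.mem_Icc] at hm
    rcases lt_or_ge 0 m with hm1 | hm1
    · exact hiii m (by omega) (by omega)
    · have hfin := hiii (-m) (by omega) (by omega)
      refine Set.Finite.subset (hfin.image (fun p => (-p.1, -p.2))) ?_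
      rintro ⟨x, y⟩ ⟨u1, u2, u3⟩
      exact ⟨(-x, -y), ⟨by rw [hsym]; exact u1, by rw [hsym]; exact u2, by omega⟩, by simp⟩
  -- the set of large isolated support points is infinite
  -- the set of large positive support points is infinite
  have hSpos : {f : ℤ | k f ≠ 0 ∧ 2*(N:ℤ) < f}.Infinite := by
    intro hfin
    apply hinf
    have hsub : Function.support k ⊆
        {f : ℤ | k f ≠ 0 ∧ 2*(N:ℤ) < f} ∪ (Neg.neg '' {f : ℤ | k f ≠ 0 ∧ 2*(N:ℤ) < f}) ∪
          Set.Icc (-(2*(N:ℤ))) (2*(N:ℤ)) := by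
      intro j hj
      by_cases hj1 : 2*(N:ℤ) < j
      · exact Or.inl (Or.inl ⟨hj, hj1⟩)
      by_cases hj2 : j < -(2*(N:ℤ))
      · exact Or.inl (Or.inr ⟨-j, ⟨by rw [hsym]; exact hj, by omega⟩, by simp⟩)
      · exact Or.inr (by simp only [Set.mem_Icc]; omega)
    exact ((hfin.union (hfin.image _)).union (Set.finite_Icc _ _)).subset hsub
  -- choose F
  have hGood : ({f : ℤ | k f ≠ 0 ∧ 2*(N:ℤ) < f} \ (Prod.fst '' CP)).Infinite :=
    hSpos.diff (hCP.image _)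
  set n : ℕ := ⌈d⌉₊ + 1 with hn
  obtain ⟨F, hFsub, hFcard⟩ := hGood.exists_subset_card_eq n
  have hFne : F.Nonempty := by
    rw [← Finset.card_pos, hFcard]; omega
  have hmemF : ∀ f ∈ F, k f ≠ 0 ∧ 2*(N:ℤ) < f ∧
      ∀ s, k s ≠ 0 → |f + s| ≤ 2*(N:ℤ) → s = -f := by
    intro f hf
    obtain ⟨⟨hk1, hk2⟩, hE⟩ := hFsub hf
    refine ⟨hk1, hk2, fun s hs habs => ?_⟩
    by_contra hne
    exact hE ⟨(f, s), ⟨hk1, hs, by omega, habs⟩, rfl⟩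
  -- the minimum of k on F
  set κ : ℝ := (F.image k).min' (hFne.image k) with hκ
  have hκmem : κ ∈ F.image k := Finset.min'_mem _ _
  have hκpos : 0 < κ := by
    obtain ⟨f, hf, hfk⟩ := Finset.mem_image.1 hκmem
    rw [← hfk]
    exact lt_of_le_of_ne (hpos f) (Ne.symm (hmemF f hf).1)
  have hκle : ∀ f ∈ F, κ ≤ k f := fun f hf => Finset.min'_le _ _ (Finset.mem_image_of_mem k hf)
  -- choose the truncation radius R
  obtain ⟨s₀, hs₀⟩ : ∃ s₀ : Finset ℤ, ∑' (x : {x : ℤ // x ∉ s₀}), k x < κ := by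
    have ht := (tendsto_tsum_compl_atTop_zero k).eventually_lt_const hκpos
    rcases Filter.eventually_atTop.1 ht with ⟨s₀, h⟩
    exact ⟨s₀, h s₀ le_rfl⟩
  set B : Finset ℤ := insert 0 ((s₀.image (fun x => |x|)) ∪ (F.image (fun f => f + 2*(N:ℤ))))
    with hB
  set R : ℤ := B.max' ⟨0, Finset.mem_insert_self _ _⟩ + 1 with hR
  have hRb : ∀ x ∈ B, x < R := fun x hx => by
    have := Finset.le_max' B x hx; omega
  have hRF : ∀ f ∈ F, f + 2*(N:ℤ) < R := fun f hf => hRb _ (by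
    rw [hB]
    exact Finset.mem_insert_of_mem (Finset.mem_union_right _ (Finset.mem_image_of_mem _ hf)))
  have hR0 : 0 < R := hRb 0 (Finset.mem_insert_self _ _)
  have hs₀R : ∀ x ∈ s₀, |x| < R := fun x hx => hRb _ (by
    rw [hB]
    exact Finset.mem_insert_of_mem (Finset.mem_union_left _ (Finset.mem_image_of_mem _ hx)))
  -- the context
  have hc : Ctx k N F R := ⟨hpos, hsym, h0, hi, huniq, hmemF, hRF⟩
  set u : ℤ → ℝ := ufn k R F with hu
  have hu0 : u 0 = 0 := hc.u_zero
  have hu_F : ∀ f ∈ F, u f = (k f)⁻¹ := fun f hf => hc.u_F hf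
  have hu_negF : ∀ f ∈ F, u (-f) = (k f)⁻¹ := fun f hf => hc.u_negF hf
  have hu_S0 : ∀ a : ℤ, k a ≠ 0 → ¬ inF F a → u a = 0 := fun a ha h => hc.u_S0 ha h
  have hu_add : ∀ a b : ℤ, k a ≠ 0 → k b ≠ 0 → ¬(a + b = 0 ∧ inF F a) →
      ¬(inF F a ∧ R < |b|) → ¬(inF F b ∧ R < |a|) → u (a + b) = u a + u b :=
    fun a b ha hb x1 x2 x3 => hc.u_add ha hb x1 x2 x3
  have hu_far : ∀ a b : ℤ, k a ≠ 0 → k b ≠ 0 → inF F a → R < |b| →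
      u (a + b) = 0 ∧ u b = 0 := fun a b ha hb hA hR => hc.u_far ha hb hA hR
  have hu_props : ∀ a : ℤ, inF F a → k a ≠ 0 ∧ 2*(N:ℤ) < |a| ∧ |a| + 2*(N:ℤ) < R ∧
      u a = (k a)⁻¹ ∧ u (-a) = (k a)⁻¹ := fun a h => hc.inF_props h
  refine ⟨u, ?_, hu0, ?_⟩
  · -- finite support
    refine Set.Finite.subset (Set.finite_Icc (-(2*R)) (2*R)) ?_
    intro m hm
    have := hc.u_supp hm
    rw [abs_le] at this
    simpa using this
  -- the main estimate
  have hn1 : 1 ≤ (n:ℝ) := by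
    have : 1 ≤ n := by omega
    exact_mod_cast this
  have hdn : d < (n:ℝ) := by
    have h1 : d ≤ (⌈d⌉₊ : ℝ) := Nat.le_ceil d
    have h2 : ((⌈d⌉₊ : ℕ) : ℝ) < (n : ℝ) := by
      have : ⌈d⌉₊ < n := by omega
      exact_mod_cast this
    linarith
  set s1 : Finset ℤ := F ∪ F.image (fun f => -f) with hs1
  have hmems1 : ∀ a : ℤ, inF F a → a ∈ s1 := by
    rintro a ⟨f, hf, h | h⟩
    · rw [hs1, h]; exact Finset.mem_union_left _ hf
    · rw [hs1, h]; exact Finset.mem_union_right _ (Finset.mem_image_of_mem _ hf)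
  have hs1card : s1.card ≤ 2 * n := by
    calc s1.card ≤ F.card + (F.image (fun f => -f)).card := Finset.card_union_le _ _
    _ ≤ F.card + F.card := by
        have := Finset.card_image_le (s := F) (f := fun f => -f)
        omega
    _ = 2 * n := by omega
  have hdisj : Disjoint F (F.image fun f => -f) := by
    rw [Finset.disjoint_left]
    intro x hx hx'
    obtain ⟨f, hf, hfx⟩ := Finset.mem_image.1 hx'
    have h1 := hc.fpos hx
    have h2 := hc.fpos hf
    omega
  -- value of Lop
  have hLop : Lop k u = 2 * (n:ℝ) := by
    rw [Lop]
    rw [tsum_eq_sum (s := s1) ?_]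
    · have e1 : ∑ f ∈ F, k f * (u f - u 0) = ∑ f ∈ F, (1:ℝ) :=
        Finset.sum_congr rfl fun f hf => by
          rw [hu0, hu_F f hf, sub_zero, mul_inv_cancel₀ (hmemF f hf).1]
      have e2 : ∑ f ∈ F, k (-f) * (u (-f) - u 0) = ∑ f ∈ F, (1:ℝ) :=
        Finset.sum_congr rfl fun f hf => by
          rw [hu0, hu_negF f hf, sub_zero, hsym, mul_inv_cancel₀ (hmemF f hf).1]
      rw [hs1, Finset.sum_union hdisj, Finset.sum_image (by intro x _ y _ h; have h' : -x = -y := h; omega), e1, e2,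
        Finset.sum_const, hFcard]
      push_cast
      ring
    · intro j hj
      by_cases hkj : k j = 0
      · rw [hkj]; ring
      · rw [hu0, sub_zero, hu_S0 j hkj (fun hF => hj (hmems1 j hF)), mul_zero]
  -- Gamma2 estimate
  set g : ℤ × ℤ → ℝ := fun p => k p.1 * k p.2 * (u (p.1 + p.2) - u p.1 - u p.2 + u 0)^2 with hg
  set α : ℤ → ℝ := fun a => if inF F a then κ⁻¹ else 0 with hα
  set β : ℤ → ℝ := fun b => if R < |b| then k b else 0 with hβ
  set h1 : ℤ × ℤ → ℝ := fun p => if p.2 = -p.1 ∧ inF F p.1 then 4 else 0 with hh1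
  set h2 : ℤ × ℤ → ℝ := fun p => α p.1 * β p.2 with hh2
  set h3 : ℤ × ℤ → ℝ := fun p => β p.1 * α p.2 with hh3
  have hα0 : ∀ a, 0 ≤ α a := by
    intro a
    rw [hα]
    dsimp only
    split
    · positivity
    · exact le_refl 0
  have hβ0 : ∀ b, 0 ≤ β b := by
    intro b
    rw [hβ]
    dsimp only
    split
    · exact hpos b
    · exact le_refl 0
  have hh10 : ∀ p, 0 ≤ h1 p := by
    intro p
    rw [hh1]
    dsimp only
    split
    · norm_num
    · exact le_refl 0
  have hh20 : ∀ p, 0 ≤ h2 p := fun p => mul_nonneg (hα0 _) (hβ0 _)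
  have hh30 : ∀ p, 0 ≤ h3 p := fun p => mul_nonneg (hβ0 _) (hα0 _)
  have hg0 : ∀ p, 0 ≤ g p := fun p =>
    mul_nonneg (mul_nonneg (hpos _) (hpos _)) (sq_nonneg _)
  -- the pointwise bound
  have hκa : ∀ a : ℤ, inF F a → κ ≤ k a := by
    rintro a ⟨f, hf, h | h⟩
    · rw [h]; exact hκle f hf
    · rw [h, hsym]; exact hκle f hf
  have hkey : ∀ p : ℤ × ℤ, g p ≤ h1 p + h2 p + h3 p := by
    rintro ⟨a, b⟩
    by_cases ha : k a = 0
    · have : g (a, b) = 0 := by rw [hg]; dsimp only; rw [ha]; ring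
      rw [this]
      have := hh10 (a,b); have := hh20 (a,b); have := hh30 (a,b)
      linarith
    by_cases hb : k b = 0
    · have : g (a, b) = 0 := by rw [hg]; dsimp only; rw [hb]; ring
      rw [this]
      have := hh10 (a,b); have := hh20 (a,b); have := hh30 (a,b)
      linarith
    by_cases hdiag : b = -a ∧ inF F a
    · obtain ⟨hba, hA⟩ := hdiag
      obtain ⟨hka, -, -, hua, hua'⟩ := hu_props a hA
      have hgv : g (a, b) = 4 := by
        rw [hg]
        dsimp only
        rw [hba, show a + -a = 0 by ring, hu0, hua, hua']
        rw [hsym]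
        field_simp
        ring
      have hh1v : h1 (a, b) = 4 := by
        rw [hh1]
        dsimp only
        rw [if_pos ⟨hba, hA⟩]
      have := hh20 (a,b); have := hh30 (a,b)
      rw [hgv, hh1v]
      linarith
    by_cases hfar1 : inF F a ∧ R < |b|
    · obtain ⟨hA, hbR⟩ := hfar1
      obtain ⟨huab, hub⟩ := hu_far a b ha hb hA hbR
      obtain ⟨-, -, -, hua, -⟩ := hu_props a hA
      have hgv : g (a, b) = (k a)⁻¹ * k b := by
        rw [hg]
        dsimp only
        rw [huab, hub, hu0, hua]
        have hka0 : (0:ℝ) < k a := lt_of_le_of_ne (hpos a) (Ne.symm ha)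
        field_simp
        ring
      have hh2v : h2 (a, b) = κ⁻¹ * k b := by
        rw [hh2, hα, hβ]
        dsimp only
        rw [if_pos hA, if_pos hbR]
      have hineq : (k a)⁻¹ * k b ≤ κ⁻¹ * k b := by
        have hin : (k a)⁻¹ ≤ κ⁻¹ := inv_anti₀ hκpos (hκa a hA)
        exact mul_le_mul_of_nonneg_right hin (hpos b)
      have := hh10 (a,b); have := hh30 (a,b)
      rw [hgv]
      linarith [hh2v ▸ hineq]
    by_cases hfar2 : inF F b ∧ R < |a|
    · obtain ⟨hB, haR⟩ := hfar2
      have hcomm : a + b = b + a := by ring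
      obtain ⟨huab, hua⟩ := hu_far b a hb ha hB haR
      obtain ⟨-, -, -, hub, -⟩ := hu_props b hB
      have hgv : g (a, b) = (k b)⁻¹ * k a := by
        rw [hg]
        dsimp only
        rw [hcomm, huab, hua, hu0, hub]
        have hkb0 : (0:ℝ) < k b := lt_of_le_of_ne (hpos b) (Ne.symm hb)
        field_simp
        ring
      have hh3v : h3 (a, b) = k a * κ⁻¹ := by
        rw [hh3, hα, hβ]
        dsimp only
        rw [if_pos hB, if_pos haR]
      have hineq : (k b)⁻¹ * k a ≤ k a * κ⁻¹ := by
        rw [mul_comm]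
        have hin : (k b)⁻¹ ≤ κ⁻¹ := inv_anti₀ hκpos (hκa b hB)
        exact mul_le_mul_of_nonneg_left hin (hpos a)
      have := hh10 (a,b); have := hh20 (a,b)
      rw [hgv]
      linarith [hh3v ▸ hineq]
    · have hadd := hu_add a b ha hb ?_ hfar1 hfar2
      · have hgv : g (a, b) = 0 := by
          rw [hg]
          dsimp only
          rw [hadd, hu0]
          ring
        rw [hgv]
        have := hh10 (a,b); have := hh20 (a,b); have := hh30 (a,b)
        linarith
      · rintro ⟨hab, hA⟩
        exact hdiag ⟨by omega, hA⟩
  -- summability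
  have hsumprod : Summable (fun p : ℤ × ℤ => k p.1 * k p.2) :=
    hsum.mul_of_nonneg hsum hpos hpos
  have hsumβ : Summable β :=
    Summable.of_nonneg_of_le hβ0 (fun b => by
      rw [hβ]; dsimp only; split
      · exact le_refl (k b)
      · exact hpos b) hsum
  have hsumα : Summable α := by
    apply summable_of_ne_finset_zero (s := s1)
    intro a haa
    rw [hα]
    dsimp only
    rw [if_neg (fun hF => haa (hmems1 a hF))]
  have hsumh2 : Summable h2 := hsumα.mul_of_nonneg hsumβ hα0 hβ0
  have hsumh3 : Summable h3 := hsumβ.mul_of_nonneg hsumα hβ0 hα0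
  have hsumh1 : Summable h1 := by
    apply summable_of_ne_finset_zero (s := s1.image (fun a => (a, -a)))
    rintro ⟨a, b⟩ hab
    rw [hh1]
    dsimp only
    rw [if_neg ?_]
    rintro ⟨hba, hA⟩
    exact hab (Finset.mem_image.2 ⟨a, hmems1 a hA, by rw [hba]⟩)
  have hsumg : Summable g :=
    Summable.of_nonneg_of_le hg0 hkey ((hsumh1.add hsumh2).add hsumh3)
  -- tsum bounds
  have hTβ : ∑' b, β b ≤ κ := by
    have hind : Summable ({x : ℤ | x ∉ s₀}.indicator k) := hsum.indicator _
    have hle : ∀ b, β b ≤ {x : ℤ | x ∉ s₀}.indicator k b := by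
      intro b
      rw [hβ]
      dsimp only
      split
      · rename_i hRb'
        rw [Set.indicator_of_mem (by
          show b ∉ s₀
          intro hmem
          have := hs₀R b hmem
          omega)]
      · exact Set.indicator_apply_nonneg (fun _ => hpos b)
    calc ∑' b, β b ≤ ∑' b, {x : ℤ | x ∉ s₀}.indicator k b := Summable.tsum_le_tsum hle hsumβ hind
    _ = ∑' (x : {x : ℤ | x ∉ s₀}), k x := (tsum_subtype _ _).symm
    _ ≤ κ := le_of_lt hs₀
  have hTα : ∑' a, α a ≤ 2 * (n:ℝ) * κ⁻¹ := by
    rw [tsum_eq_sum (s := s1) (fun a haa => by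
      rw [hα]; dsimp only; rw [if_neg (fun hF => haa (hmems1 a hF))])]
    calc ∑ a ∈ s1, α a ≤ ∑ a ∈ s1, κ⁻¹ := by
          refine Finset.sum_le_sum fun a _ => ?_
          rw [hα]
          dsimp only
          split
          · exact le_refl _
          · positivity
    _ = s1.card * κ⁻¹ := by rw [Finset.sum_const, nsmul_eq_mul]
    _ ≤ (2 * n : ℕ) * κ⁻¹ := by
          have : (s1.card : ℝ) ≤ ((2 * n : ℕ) : ℝ) := by exact_mod_cast hs1card
          exact mul_le_mul_of_nonneg_right this (by positivity)
    _ = 2 * (n:ℝ) * κ⁻¹ := by push_cast; ring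
  have hTβ0 : 0 ≤ ∑' b, β b := tsum_nonneg hβ0
  have hTα0 : 0 ≤ ∑' a, α a := tsum_nonneg hα0
  have hth2 : ∑' p, h2 p ≤ 2 * (n:ℝ) := by
    have hfib : ∀ a : ℤ, Summable (fun b => α a * β b) := fun a => hsumβ.mul_left _
    rw [hh2]
    rw [Summable.tsum_prod' hsumh2 hfib]
    have e1 : ∀ a : ℤ, ∑' b, α a * β b = α a * ∑' b, β b := fun a => tsum_mul_left
    rw [tsum_congr e1, tsum_mul_right]
    calc (∑' a, α a) * (∑' b, β b) ≤ (2 * (n:ℝ) * κ⁻¹) * κ := by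
          apply mul_le_mul hTα hTβ hTβ0 (by positivity)
    _ = 2 * (n:ℝ) := by field_simp
  have hth3 : ∑' p, h3 p ≤ 2 * (n:ℝ) := by
    have hfib : ∀ a : ℤ, Summable (fun b => β a * α b) := fun a => hsumα.mul_left _
    rw [hh3]
    rw [Summable.tsum_prod' hsumh3 hfib]
    have e1 : ∀ a : ℤ, ∑' b, β a * α b = β a * ∑' b, α b := fun a => tsum_mul_left
    rw [tsum_congr e1, tsum_mul_right]
    calc (∑' a, β a) * (∑' b, α b) ≤ κ * (2 * (n:ℝ) * κ⁻¹) := by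
          apply mul_le_mul hTβ hTα hTα0 (le_of_lt hκpos)
    _ = 2 * (n:ℝ) := by field_simp
  have hth1 : ∑' p, h1 p ≤ 8 * (n:ℝ) := by
    rw [tsum_eq_sum (s := s1.image (fun a => (a, -a))) (by
      rintro ⟨a, b⟩ hab
      rw [hh1]
      dsimp only
      rw [if_neg ?_]
      rintro ⟨hba, hA⟩
      exact hab (Finset.mem_image.2 ⟨a, hmems1 a hA, by rw [hba]⟩))]
    calc ∑ p ∈ s1.image (fun a => (a, -a)), h1 p
        ≤ ∑ p ∈ s1.image (fun a => (a, -a)), (4:ℝ) := by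
          refine Finset.sum_le_sum fun p _ => ?_
          rw [hh1]
          dsimp only
          split
          · exact le_refl _
          · norm_num
    _ = ((s1.image (fun a => (a, -a))).card : ℝ) * 4 := by rw [Finset.sum_const, nsmul_eq_mul]
    _ ≤ ((2 * n : ℕ) : ℝ) * 4 := by
          have h5 : (s1.image (fun a => (a, -a))).card ≤ 2 * n :=
            le_trans (Finset.card_image_le) hs1card
          have : ((s1.image (fun a => (a, -a))).card : ℝ) ≤ ((2 * n : ℕ) : ℝ) := by
            exact_mod_cast h5
          linarith
    _ = 8 * (n:ℝ) := by push_cast; ring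
  -- final computation
  have hgbound : ∑' p, g p ≤ 12 * (n:ℝ) := by
    calc ∑' p, g p ≤ ∑' p, (h1 p + h2 p + h3 p) :=
          Summable.tsum_le_tsum hkey hsumg ((hsumh1.add hsumh2).add hsumh3)
    _ = (∑' p, (h1 p + h2 p)) + ∑' p, h3 p := Summable.tsum_add (hsumh1.add hsumh2) hsumh3
    _ = (∑' p, h1 p) + (∑' p, h2 p) + ∑' p, h3 p := by rw [Summable.tsum_add hsumh1 hsumh2]
    _ ≤ 8 * (n:ℝ) + 2 * (n:ℝ) + 2 * (n:ℝ) := by linarith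
    _ = 12 * (n:ℝ) := by ring
  have hGam : Gamma2 k u ≤ 3 * (n:ℝ) := by
    have : Gamma2 k u = (1/4) * ∑' p, g p := rfl
    rw [this]
    linarith
  have hfinal : 3 * (n:ℝ) < (1 / d) * (2 * (n:ℝ)) ^ 2 := by
    rw [one_div, inv_mul_eq_div, lt_div_iff₀ hd]
    nlinarith [mul_lt_mul_of_pos_left hdn (by positivity : (0:ℝ) < 3 * (n:ℝ)), hn1,
      sq_nonneg ((n:ℝ)), hd]
  calc Gamma2 k u ≤ 3 * (n:ℝ) := hGam
  _ < (1 / d) * (2 * (n:ℝ)) ^ 2 := hfinal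
  _ = (1 / d) * (Lop k u) ^ 2 := by rw [hLop]
end
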